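/- arXiv:1805.03839 — 6 statements merged into one kernel-verified Lean document; each statement's English description precedes it below -/
import Mathlib

section
/- The inverse Fisher information for the spectral projector satisfies the identity 2 Σ_{s≠r} (P_s ⊗ P_r + P_r ⊗ P_s) · λ_r λ_s / (λ_r − λ_s)^2 = 2(Σ C_r^2 ⊗ P_r Σ + Σ P_r ⊗ C_r^2 Σ), where the Kronecker product acts on matrices by (A ⊗ B)C = A C B^T. -/
open Matrix Finset

/-- the inverse Fisher information identity
`2 ∑_{s ≠ r} (P_s ⊗ P_r + P_r ⊗ P_s) λ_r λ_s / (λ_r - λ_s)^2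
  = 2 (Σ C_r² ⊗ P_r Σ + Σ P_r ⊗ C_r² Σ)`,
where the Kronecker product acts on matrices by `(A ⊗ B) C = A C Bᵀ`. -/
theorem inverse_fisher_information_identity {p K : ℕ}
    (lam : Fin K → ℝ) (P : Fin K → Matrix (Fin p) (Fin p) ℝ)
    (S : Matrix (Fin p) (Fin p) ℝ)
    (hS : S = ∑ s, lam s • P s)
    (hSpd : S.PosDef)
    (hPsymm : ∀ s, (P s).IsSymm)
    (hPidem : ∀ s, P s * P s = P s)
    (hPorth : ∀ s t, s ≠ t → P s * P t = 0)
    (hPsum : ∑ s, P s = 1)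
    (hlam : Function.Injective lam)
    (hlampos : ∀ s, 0 < lam s)
    (r : Fin K)
    (Cr : Matrix (Fin p) (Fin p) ℝ)
    (hCr : Cr = ∑ s ∈ Finset.univ.erase r, (lam r - lam s)⁻¹ • P s) :
    ∀ C : Matrix (Fin p) (Fin p) ℝ,
      (2 : ℝ) • (∑ s ∈ Finset.univ.erase r,
          (lam r * lam s / (lam r - lam s) ^ 2) • (P s * C * (P r)ᵀ + P r * C * (P s)ᵀ))
        = (2 : ℝ) • ((S * Cr ^ 2) * C * (P r * S)ᵀ + (S * P r) * C * ((Cr ^ 2) * S)ᵀ) := by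
  intro C
  have hSP : ∀ s, S * P s = lam s • P s := by
    intro s
    rw [hS, Finset.sum_mul, Finset.sum_eq_single s]
    · rw [smul_mul_assoc, hPidem]
    · intro t _ hts; rw [smul_mul_assoc, hPorth t s hts, smul_zero]
    · simp
  have hPS : ∀ s, P s * S = lam s • P s := by
    intro s
    rw [hS, Finset.mul_sum, Finset.sum_eq_single s]
    · rw [mul_smul_comm, hPidem]
    · intro t _ hts; rw [mul_smul_comm, hPorth s t hts.symm, smul_zero]
    · simp
  have hCr2 : Cr ^ 2 = ∑ s ∈ Finset.univ.erase r, ((lam r - lam s)⁻¹)^2 • P s := by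
    rw [sq, hCr, Finset.sum_mul]
    refine Finset.sum_congr rfl fun s hs => ?_
    rw [Finset.mul_sum, Finset.sum_eq_single s]
    · rw [smul_mul_assoc, mul_smul_comm, hPidem, smul_smul, sq]
    · intro t _ hts; rw [smul_mul_assoc, mul_smul_comm, hPorth s t hts.symm, smul_zero, smul_zero]
    · intro h; exact absurd hs h
  have hSCr2 : S * Cr ^ 2 = ∑ s ∈ Finset.univ.erase r, (lam s * ((lam r - lam s)⁻¹)^2) • P s := by
    rw [hCr2, Finset.mul_sum]
    refine Finset.sum_congr rfl fun s _ => ?_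
    rw [mul_smul_comm, hSP, smul_smul, mul_comm]
  have hCr2S : Cr ^ 2 * S = ∑ s ∈ Finset.univ.erase r, (lam s * ((lam r - lam s)⁻¹)^2) • P s := by
    rw [hCr2, Finset.sum_mul]
    refine Finset.sum_congr rfl fun s _ => ?_
    rw [smul_mul_assoc, hPS, smul_smul, mul_comm]
  rw [hSCr2, hCr2S, hPS r, hSP r]
  congr 1
  simp only [Matrix.transpose_smul, Matrix.transpose_sum, Finset.sum_mul, Finset.mul_sum,
    smul_mul_assoc, mul_smul_comm, smul_smul, smul_add, Finset.smul_sum]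
  rw [← Finset.sum_add_distrib]
  refine Finset.sum_congr rfl fun s hs => ?_
  have hne : lam r - lam s ≠ 0 :=
    sub_ne_zero.mpr fun h => (Finset.mem_erase.mp hs).1 (hlam h).symm
  congr 1 <;> congr 1 <;> field_simp
  all_goals ring
end

section
/- Perturbation bound for spectral projectors: let Σ be symmetric with spectral decomposition Σ = Σ_s λ_s P_s, let E be symmetric, set Σ̃ = Σ + E, and let P̃_r be the spectral projector of Σ̃ onto the eigenvalues with indices in Δ_r = {j : μ_j(Σ) = λ_r} (eigenvalues in non-increasing order with multiplicity). If g̅_r = min(λ_{r−1} − λ_r, λ_r − λ_{r+1}) denotes the spectral gap, then ‖P̃_r − P_r‖ ≤ 4‖E‖/g̅_r, where ‖·‖ is the operator norm. -/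
open Matrix Finset
open scoped Matrix.Norms.L2Operator

/-! ### Auxiliary machinery -/

/-- Euclidean norm of a plain vector. -/
noncomputable def eN {p : ℕ} (x : Fin p → ℝ) : ℝ := ‖(WithLp.equiv 2 (Fin p → ℝ)).symm x‖

lemma eN_nonneg {p : ℕ} (x : Fin p → ℝ) : 0 ≤ eN x := norm_nonneg _

lemma eN_sq {p : ℕ} (x : Fin p → ℝ) : eN x ^ 2 = x ⬝ᵥ x := by
  rw [eN, ← real_inner_self_eq_norm_sq]
  simp [PiLp.inner_apply, dotProduct, EuclideanSpace.real_norm_sq_eq, ← sq]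

lemma eN_add_le {p : ℕ} (x y : Fin p → ℝ) : eN (x + y) ≤ eN x + eN y := norm_add_le _ _

lemma eN_sub_le {p : ℕ} (x y : Fin p → ℝ) : eN (x - y) ≤ eN x + eN y := norm_sub_le _ _

lemma eN_le_of_dot {p : ℕ} {x y : Fin p → ℝ} (h : y ⬝ᵥ y ≤ x ⬝ᵥ x) : eN y ≤ eN x := by
  have h2 : eN y ^ 2 ≤ eN x ^ 2 := by rw [eN_sq, eN_sq]; exact h
  exact le_of_pow_le_pow_left₀ two_ne_zero (eN_nonneg x) h2

lemma eN_mulVec {p : ℕ} (A : Matrix (Fin p) (Fin p) ℝ) (x : Fin p → ℝ) :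
    eN (A *ᵥ x) ≤ ‖A‖ * eN x := by
  have := Matrix.l2_opNorm_mulVec A ((WithLp.equiv 2 (Fin p → ℝ)).symm x)
  simpa [eN] using this

lemma opNorm_le_of {p : ℕ} (A : Matrix (Fin p) (Fin p) ℝ) (C : ℝ) (hC : 0 ≤ C)
    (h : ∀ x : Fin p → ℝ, eN (A *ᵥ x) ≤ C * eN x) : ‖A‖ ≤ C := by
  rw [Matrix.l2_opNorm_def]
  apply ContinuousLinearMap.opNorm_le_bound _ hC
  intro x
  have := h (WithLp.equiv 2 (Fin p → ℝ) x)
  simpa [eN, Matrix.toEuclideanLin_apply] using this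

lemma abs_dot_le {p : ℕ} (x y : Fin p → ℝ) : |x ⬝ᵥ y| ≤ eN x * eN y := by
  have := abs_real_inner_le_norm ((WithLp.equiv 2 (Fin p → ℝ)).symm x)
    ((WithLp.equiv 2 (Fin p → ℝ)).symm y)
  simpa [eN, PiLp.inner_apply, dotProduct, RCLike.inner_apply, mul_comm] using this

lemma opNorm_transpose {p : ℕ} (M : Matrix (Fin p) (Fin p) ℝ) : ‖Mᵀ‖ = ‖M‖ := by
  rw [← Matrix.l2_opNorm_conjTranspose M]
  congr 1

section OrthonormalFamily
variable {p : ℕ} {u : Fin p → Fin p → ℝ}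

lemma sum_dot' (s : Finset (Fin p)) (c : Fin p → ℝ) (w : Fin p → ℝ) :
    (∑ j ∈ s, c j • u j) ⬝ᵥ w = ∑ j ∈ s, c j * (u j ⬝ᵥ w) := by
  simp only [dotProduct, Finset.sum_apply, Pi.smul_apply, smul_eq_mul, Finset.sum_mul,
    Finset.mul_sum]
  rw [Finset.sum_comm]
  apply Finset.sum_congr rfl; intro j _; apply Finset.sum_congr rfl; intro i _; ring

lemma dot_sum' (t : Finset (Fin p)) (d : Fin p → ℝ) (w : Fin p → ℝ) :
    w ⬝ᵥ (∑ j ∈ t, d j • u j) = ∑ j ∈ t, d j * (w ⬝ᵥ u j) := by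
  simp only [dotProduct, Finset.sum_apply, Pi.smul_apply, smul_eq_mul, Finset.sum_mul,
    Finset.mul_sum]
  rw [Finset.sum_comm]
  apply Finset.sum_congr rfl; intro j _; apply Finset.sum_congr rfl; intro i _; ring

lemma vecMulVec_mulVec' (a b y : Fin p → ℝ) :
    Matrix.vecMulVec a b *ᵥ y = (b ⬝ᵥ y) • a := by
  funext i
  simp only [Matrix.mulVec, Matrix.vecMulVec_apply, dotProduct, Pi.smul_apply, smul_eq_mul,
    Finset.sum_mul]
  apply Finset.sum_congr rfl; intro j _; ring

lemma mulVec_finsum (A : Matrix (Fin p) (Fin p) ℝ) (s : Finset (Fin p)) (f : Fin p → Fin p → ℝ) :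
    A *ᵥ (∑ j ∈ s, f j) = ∑ j ∈ s, A *ᵥ f j := by
  funext i
  simp only [Matrix.mulVec, dotProduct, Finset.sum_apply, Finset.mul_sum]
  exact Finset.sum_comm

lemma finsum_mulVec (M : Fin p → Matrix (Fin p) (Fin p) ℝ) (s : Finset (Fin p)) (y : Fin p → ℝ) :
    (∑ j ∈ s, M j) *ᵥ y = ∑ j ∈ s, M j *ᵥ y := by
  funext i
  simp only [Matrix.mulVec, dotProduct, Finset.sum_apply, Matrix.sum_apply, Finset.sum_mul]
  exact Finset.sum_comm

lemma proj_mulVec (Δ : Finset (Fin p)) (y : Fin p → ℝ) :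
    (∑ j ∈ Δ, Matrix.vecMulVec (u j) (u j)) *ᵥ y = ∑ j ∈ Δ, (u j ⬝ᵥ y) • u j := by
  rw [finsum_mulVec]
  exact Finset.sum_congr rfl fun j _ => vecMulVec_mulVec' _ _ _

variable (hu : ∀ i j, u i ⬝ᵥ u j = if i = j then (1 : ℝ) else 0)
include hu

/-- completeness: expansion of any vector in the orthonormal basis -/
lemma on_expand (x : Fin p → ℝ) : x = ∑ j, (u j ⬝ᵥ x) • u j := by
  set V : Matrix (Fin p) (Fin p) ℝ := Matrix.of u with hV
  have h1 : V * Vᵀ = 1 := by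
    ext i j
    simpa [hV, Matrix.mul_apply, Matrix.one_apply, dotProduct] using hu i j
  have h2 : Vᵀ * V = 1 := mul_eq_one_comm.mp h1
  have h3 : (Vᵀ * V) *ᵥ x = x := by rw [h2, Matrix.one_mulVec]
  rw [← Matrix.mulVec_mulVec] at h3
  funext i
  have := congrFun h3 i
  rw [← this]
  simp only [Matrix.mulVec, hV, dotProduct, Matrix.transpose_apply, Finset.sum_apply,
    Pi.smul_apply, smul_eq_mul, Matrix.of_apply]
  apply Finset.sum_congr rfl; intro j _; ring

/-- dot product of two combinations -/
lemma on_dot (s t : Finset (Fin p)) (c d : Fin p → ℝ) :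
    (∑ j ∈ s, c j • u j) ⬝ᵥ (∑ j ∈ t, d j • u j) = ∑ j ∈ s ∩ t, c j * d j := by
  rw [sum_dot']
  have h : ∀ i ∈ s, c i * (u i ⬝ᵥ ∑ j ∈ t, d j • u j) = if i ∈ t then c i * d i else 0 := by
    intro i _
    rw [dot_sum']
    have h2 : ∀ j ∈ t, d j * (u i ⬝ᵥ u j) = if j = i then d i else 0 := by
      intro j _; rw [hu]; by_cases h : i = j <;> simp [h, eq_comm]
    rw [Finset.sum_congr rfl h2, Finset.sum_ite_eq' t i (fun _ => d i)]
    by_cases h : i ∈ t <;> simp [h]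
  rw [Finset.sum_congr rfl h, ← Finset.sum_filter, Finset.filter_mem_eq_inter]

/-- Parseval identity -/
lemma on_parseval (x : Fin p → ℝ) : x ⬝ᵥ x = ∑ j, (u j ⬝ᵥ x) ^ 2 := by
  conv_lhs => rw [on_expand hu x]
  rw [on_dot hu]
  simp [sq]

lemma on_li : LinearIndependent ℝ u := by
  rw [Fintype.linearIndependent_iff]
  intro c hc k
  have h1 : u k ⬝ᵥ (∑ i, c i • u i) = c k := by
    rw [dot_sum']
    have h2 : ∀ i ∈ Finset.univ, c i * (u k ⬝ᵥ u i) = if i = k then c k else 0 := by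
      intro i _
      rw [hu]
      by_cases h : k = i <;> simp [h, eq_comm]
    rw [Finset.sum_congr rfl h2, Finset.sum_ite_eq' _ k (fun _ => c k)]
    simp
  rw [hc] at h1
  simpa using h1.symm

/-- contraction property of an orthogonal projector -/
lemma proj_contract (Δ : Finset (Fin p)) (x : Fin p → ℝ) :
    eN ((∑ j ∈ Δ, Matrix.vecMulVec (u j) (u j)) *ᵥ x) ≤ eN x := by
  rw [proj_mulVec]
  apply eN_le_of_dot
  rw [on_dot hu]
  simp only [Finset.inter_self]
  calc ∑ j ∈ Δ, (u j ⬝ᵥ x) * (u j ⬝ᵥ x) = ∑ j ∈ Δ, (u j ⬝ᵥ x) ^ 2 := by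
        apply Finset.sum_congr rfl; intro j _; ring
    _ ≤ ∑ j, (u j ⬝ᵥ x) ^ 2 :=
        Finset.sum_le_sum_of_subset_of_nonneg (Finset.subset_univ _) (fun j _ _ => sq_nonneg _)
    _ = x ⬝ᵥ x := (on_parseval hu x).symm

lemma one_sub_proj (Δ : Finset (Fin p)) (y : Fin p → ℝ) :
    (1 - ∑ j ∈ Δ, Matrix.vecMulVec (u j) (u j)) *ᵥ y = ∑ j ∈ Δᶜ, (u j ⬝ᵥ y) • u j := by
  rw [Matrix.sub_mulVec, Matrix.one_mulVec, proj_mulVec, sub_eq_iff_eq_add]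
  conv_lhs => rw [on_expand hu y]
  rw [← Finset.sum_add_sum_compl Δ (fun j => (u j ⬝ᵥ y) • u j)]
  abel

/-- key spectral gap bound -/
lemma gap_bound (A : Matrix (Fin p) (Fin p) ℝ) (hA : A.IsSymm) (ν : Fin p → ℝ)
    (heigA : ∀ j, A *ᵥ u j = ν j • u j) (Δ : Finset (Fin p)) (lam h : ℝ) (hh : 0 ≤ h)
    (hgapA : ∀ j, j ∉ Δ → h ≤ |ν j - lam|) (y : Fin p → ℝ) :
    h * eN ((1 - ∑ j ∈ Δ, Matrix.vecMulVec (u j) (u j)) *ᵥ y)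
      ≤ eN ((A - lam • 1) *ᵥ y) := by
  set q : Fin p → ℝ := (A - lam • 1) *ᵥ y with hq
  set z : Fin p → ℝ := (1 - ∑ j ∈ Δ, Matrix.vecMulVec (u j) (u j)) *ᵥ y with hz
  have key : ∀ j, u j ⬝ᵥ q = (ν j - lam) * (u j ⬝ᵥ y) := by
    intro j
    have h1 : q = A *ᵥ y - lam • y := by
      rw [hq, Matrix.sub_mulVec, Matrix.smul_mulVec, Matrix.one_mulVec]
    have h2 : u j ⬝ᵥ (A *ᵥ y) = ν j * (u j ⬝ᵥ y) := by
      rw [Matrix.dotProduct_mulVec, ← Matrix.mulVec_transpose, hA.eq, heigA j,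
        smul_dotProduct, smul_eq_mul]
    rw [h1, dotProduct_sub, h2, dotProduct_smul, smul_eq_mul]
    ring
  have hqq : q ⬝ᵥ q = ∑ j, ((ν j - lam) * (u j ⬝ᵥ y)) ^ 2 := by
    rw [on_parseval hu q]
    exact Finset.sum_congr rfl fun j _ => by rw [key j]
  have hzz : z ⬝ᵥ z = ∑ j ∈ Δᶜ, (u j ⬝ᵥ y) ^ 2 := by
    rw [hz, one_sub_proj hu, on_dot hu]
    simp [sq]
  have hle : h ^ 2 * (z ⬝ᵥ z) ≤ q ⬝ᵥ q := by
    rw [hqq, hzz, Finset.mul_sum]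
    calc ∑ j ∈ Δᶜ, h ^ 2 * (u j ⬝ᵥ y) ^ 2
        ≤ ∑ j ∈ Δᶜ, ((ν j - lam) * (u j ⬝ᵥ y)) ^ 2 := by
          apply Finset.sum_le_sum
          intro j hj
          rw [mul_pow]
          apply mul_le_mul_of_nonneg_right _ (sq_nonneg _)
          calc h ^ 2 ≤ |ν j - lam| ^ 2 := by
                apply pow_le_pow_left₀ hh (hgapA j (by simpa using hj))
            _ = (ν j - lam) ^ 2 := sq_abs _
      _ ≤ ∑ j, ((ν j - lam) * (u j ⬝ᵥ y)) ^ 2 :=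
          Finset.sum_le_sum_of_subset_of_nonneg (Finset.subset_univ _)
            (fun j _ _ => sq_nonneg _)
  have hfin : (h * eN z) ^ 2 ≤ eN q ^ 2 := by
    rw [mul_pow, eN_sq, eN_sq]
    exact hle
  exact le_of_pow_le_pow_left₀ two_ne_zero (eN_nonneg q) hfin

/-- bound for the quasi-eigen equation on a span of eigenvectors -/
lemma span_bound (A : Matrix (Fin p) (Fin p) ℝ) (ν : Fin p → ℝ)
    (heigA : ∀ j, A *ᵥ u j = ν j • u j) (Δ : Finset (Fin p)) (lam K : ℝ) (hK : 0 ≤ K)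
    (hbd : ∀ j ∈ Δ, |ν j - lam| ≤ K) (c : Fin p → ℝ) :
    eN ((A - lam • 1) *ᵥ (∑ j ∈ Δ, c j • u j)) ≤ K * eN (∑ j ∈ Δ, c j • u j) := by
  set y : Fin p → ℝ := ∑ j ∈ Δ, c j • u j with hy
  have hterm : ∀ j, (A - lam • 1) *ᵥ (c j • u j) = ((ν j - lam) * c j) • u j := by
    intro j
    rw [Matrix.sub_mulVec, Matrix.mulVec_smul, heigA j, Matrix.smul_mulVec,
      Matrix.one_mulVec]
    funext i
    simp only [Pi.sub_apply, Pi.smul_apply, smul_eq_mul]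
    ring
  have hq : (A - lam • 1) *ᵥ y = ∑ j ∈ Δ, ((ν j - lam) * c j) • u j := by
    rw [hy, mulVec_finsum]
    exact Finset.sum_congr rfl fun j _ => hterm j
  have h1 : ((A - lam • 1) *ᵥ y) ⬝ᵥ ((A - lam • 1) *ᵥ y) ≤ K ^ 2 * (y ⬝ᵥ y) := by
    rw [hq, on_dot hu, hy, on_dot hu]
    simp only [Finset.inter_self, Finset.mul_sum]
    apply Finset.sum_le_sum
    intro j hj
    have hr : (ν j - lam) * c j * ((ν j - lam) * c j) = (ν j - lam) ^ 2 * (c j * c j) := by ring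
    rw [hr]
    apply mul_le_mul_of_nonneg_right _ (mul_self_nonneg _)
    calc (ν j - lam) ^ 2 = |ν j - lam| ^ 2 := (sq_abs _).symm
      _ ≤ K ^ 2 := pow_le_pow_left₀ (abs_nonneg _) (hbd j hj) 2
  have h2 : eN ((A - lam • 1) *ᵥ y) ^ 2 ≤ (K * eN y) ^ 2 := by
    rw [eN_sq, mul_pow, eN_sq]
    exact h1
  exact le_of_pow_le_pow_left₀ two_ne_zero (mul_nonneg hK (eN_nonneg _)) h2

/-- eigenvalue combination lemma: quadratic form on a span of eigenvectors -/
lemma quad_form (A : Matrix (Fin p) (Fin p) ℝ) (ν : Fin p → ℝ) (s : Finset (Fin p))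
    (heigA : ∀ j ∈ s, A *ᵥ u j = ν j • u j) (c : Fin p → ℝ) :
    (∑ j ∈ s, c j • u j) ⬝ᵥ (A *ᵥ (∑ j ∈ s, c j • u j)) = ∑ j ∈ s, ν j * c j ^ 2 ∧
    (∑ j ∈ s, c j • u j) ⬝ᵥ (∑ j ∈ s, c j • u j) = ∑ j ∈ s, c j ^ 2 := by
  constructor
  · have hA : A *ᵥ (∑ j ∈ s, c j • u j) = ∑ j ∈ s, (ν j * c j) • u j := by
      rw [mulVec_finsum]
      apply Finset.sum_congr rfl
      intro j hj
      rw [Matrix.mulVec_smul, heigA j hj, smul_smul, mul_comm]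
    rw [hA, on_dot hu]
    simp only [Finset.inter_self]
    apply Finset.sum_congr rfl; intro j _; ring
  · rw [on_dot hu]
    simp only [Finset.inter_self]
    apply Finset.sum_congr rfl; intro j _; ring

end OrthonormalFamily

/-- One-sided Weyl inequality. -/
lemma weyl_le {p : ℕ} (S E : Matrix (Fin p) (Fin p) ℝ) (μ μ' : Fin p → ℝ)
    (v v' : Fin p → Fin p → ℝ)
    (hv : ∀ i j, v i ⬝ᵥ v j = if i = j then (1 : ℝ) else 0)
    (hv' : ∀ i j, v' i ⬝ᵥ v' j = if i = j then (1 : ℝ) else 0)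
    (heig : ∀ j, S *ᵥ v j = μ j • v j)
    (heig' : ∀ j, (S + E) *ᵥ v' j = μ' j • v' j)
    (hmono : Antitone μ) (hmono' : Antitone μ') (j : Fin p) :
    μ j - ‖E‖ ≤ μ' j := by
  classical
  set W₁ : Submodule ℝ (Fin p → ℝ) :=
    Submodule.span ℝ (Set.range (fun i : ↥(Finset.Iic j) => v i)) with hW₁
  set W₂ : Submodule ℝ (Fin p → ℝ) :=
    Submodule.span ℝ (Set.range (fun i : ↥(Finset.Ici j) => v' i)) with hW₂
  have hli₁ : LinearIndependent ℝ (fun i : ↥(Finset.Iic j) => v i) :=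
    (on_li hv).comp _ Subtype.val_injective
  have hli₂ : LinearIndependent ℝ (fun i : ↥(Finset.Ici j) => v' i) :=
    (on_li hv').comp _ Subtype.val_injective
  have hr₁ : Module.finrank ℝ W₁ = (j : ℕ) + 1 := by
    rw [hW₁, finrank_span_eq_card hli₁, Fintype.card_coe, Fin.card_Iic]
  have hr₂ : Module.finrank ℝ W₂ = p - (j : ℕ) := by
    rw [hW₂, finrank_span_eq_card hli₂, Fintype.card_coe, Fin.card_Ici]
  have hinf : 0 < Module.finrank ℝ ↥(W₁ ⊓ W₂) := by
    have hsum := Submodule.finrank_sup_add_finrank_inf_eq W₁ W₂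
    have hle : Module.finrank ℝ ↥(W₁ ⊔ W₂) ≤ p := by
      have := Submodule.finrank_le (W₁ ⊔ W₂)
      simpa [Module.finrank_pi] using this
    have hjp : (j : ℕ) < p := j.isLt
    omega
  obtain ⟨⟨x, hxW⟩, hx0⟩ := Module.finrank_pos_iff_exists_ne_zero.mp hinf
  have hx : x ≠ 0 := fun h => hx0 (by simpa using h)
  obtain ⟨hx₁, hx₂⟩ := Submodule.mem_inf.mp hxW
  obtain ⟨c, hc⟩ := (Submodule.mem_span_range_iff_exists_fun ℝ).mp hx₁
  obtain ⟨d, hd⟩ := (Submodule.mem_span_range_iff_exists_fun ℝ).mp hx₂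
  set cbar : Fin p → ℝ := fun i => if h : i ∈ Finset.Iic j then c ⟨i, h⟩ else 0 with hcbar
  set dbar : Fin p → ℝ := fun i => if h : i ∈ Finset.Ici j then d ⟨i, h⟩ else 0 with hdbar
  have hxc : x = ∑ i ∈ Finset.Iic j, cbar i • v i := by
    rw [← hc, ← Finset.sum_coe_sort (Finset.Iic j) (fun i => cbar i • v i)]
    apply Finset.sum_congr rfl
    intro i _
    simp [hcbar, Finset.mem_Iic.mp i.2, i.2]
  have hxd : x = ∑ i ∈ Finset.Ici j, dbar i • v' i := by
    rw [← hd, ← Finset.sum_coe_sort (Finset.Ici j) (fun i => dbar i • v' i)]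
    apply Finset.sum_congr rfl
    intro i _
    simp [hdbar, Finset.mem_Ici.mp i.2, i.2]
  have hq₁ := quad_form hv S μ (Finset.Iic j) (fun i _ => heig i) cbar
  have hq₂ := quad_form hv' (S + E) μ' (Finset.Ici j) (fun i _ => heig' i) dbar
  rw [← hxc] at hq₁
  rw [← hxd] at hq₂
  have hxx : x ⬝ᵥ x = ∑ i ∈ Finset.Iic j, cbar i ^ 2 := hq₁.2
  have hxx' : x ⬝ᵥ x = ∑ i ∈ Finset.Ici j, dbar i ^ 2 := hq₂.2
  have hxxpos : 0 < x ⬝ᵥ x := by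
    have h1 : 0 < eN x := by
      rw [eN]
      apply norm_pos_iff.mpr
      simpa using hx
    calc (0:ℝ) < eN x ^ 2 := by positivity
      _ = x ⬝ᵥ x := eN_sq x
  have hlow : μ j * (x ⬝ᵥ x) ≤ x ⬝ᵥ (S *ᵥ x) := by
    rw [hq₁.1, hxx, Finset.mul_sum]
    apply Finset.sum_le_sum
    intro i hi
    have : μ j ≤ μ i := hmono (Finset.mem_Iic.mp hi)
    nlinarith [sq_nonneg (cbar i)]
  have hup : x ⬝ᵥ ((S + E) *ᵥ x) ≤ μ' j * (x ⬝ᵥ x) := by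
    rw [hq₂.1, hxx', Finset.mul_sum]
    apply Finset.sum_le_sum
    intro i hi
    have : μ' i ≤ μ' j := hmono' (Finset.mem_Ici.mp hi)
    nlinarith [sq_nonneg (dbar i)]
  have hEbd : |x ⬝ᵥ (E *ᵥ x)| ≤ ‖E‖ * (x ⬝ᵥ x) := by
    calc |x ⬝ᵥ (E *ᵥ x)| ≤ eN x * eN (E *ᵥ x) := abs_dot_le x (E *ᵥ x)
      _ ≤ eN x * (‖E‖ * eN x) := by
          apply mul_le_mul_of_nonneg_left (eN_mulVec E x) (eN_nonneg x)
      _ = ‖E‖ * (eN x ^ 2) := by ring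
      _ = ‖E‖ * (x ⬝ᵥ x) := by rw [eN_sq]
  have hsplit : x ⬝ᵥ ((S + E) *ᵥ x) = x ⬝ᵥ (S *ᵥ x) + x ⬝ᵥ (E *ᵥ x) := by
    rw [Matrix.add_mulVec, dotProduct_add]
  have habs := abs_le.mp hEbd
  have hkey : μ j * (x ⬝ᵥ x) - ‖E‖ * (x ⬝ᵥ x) ≤ μ' j * (x ⬝ᵥ x) := by
    nlinarith [habs.1, habs.2]
  nlinarith [hkey, hxxpos]

/-- Two-sided Weyl inequality. -/
lemma weyl_abs {p : ℕ} (S E : Matrix (Fin p) (Fin p) ℝ) (μ μ' : Fin p → ℝ)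
    (v v' : Fin p → Fin p → ℝ)
    (hv : ∀ i j, v i ⬝ᵥ v j = if i = j then (1 : ℝ) else 0)
    (hv' : ∀ i j, v' i ⬝ᵥ v' j = if i = j then (1 : ℝ) else 0)
    (heig : ∀ j, S *ᵥ v j = μ j • v j)
    (heig' : ∀ j, (S + E) *ᵥ v' j = μ' j • v' j)
    (hmono : Antitone μ) (hmono' : Antitone μ') (j : Fin p) :
    |μ' j - μ j| ≤ ‖E‖ := by
  have h1 : μ j - ‖E‖ ≤ μ' j :=
    weyl_le S E μ μ' v v' hv hv' heig heig' hmono hmono' j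
  have heig'' : ∀ k, ((S + E) + (-E)) *ᵥ v k = μ k • v k := by
    intro k
    have : (S + E) + (-E) = S := by abel
    rw [this]
    exact heig k
  have h2 : μ' j - ‖(-E : Matrix (Fin p) (Fin p) ℝ)‖ ≤ μ j :=
    weyl_le (S + E) (-E) μ' μ v' v hv' hv heig' heig'' hmono' hmono j
  rw [norm_neg] at h2
  rw [abs_le]
  constructor <;> linarith

/-- perturbation bound for spectral projectors, `‖P̃_r - P_r‖ ≤ 4 ‖E‖ / ḡ_r`,
where `P_r`, `P̃_r` are the spectral projectors of `Σ` and `Σ̃ = Σ + E` built from the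
eigenvalue group `Δ_r = {j : μ_j = λ_r}` and `ḡ_r` is the spectral gap of `λ_r`
(so that every other eigenvalue of `Σ` is at distance at least `ḡ_r` from `λ_r`). -/
theorem projector_perturbation_bound {p : ℕ}
    (S E : Matrix (Fin p) (Fin p) ℝ) (hS : S.IsSymm) (hSpsd : S.PosSemidef) (hE : E.IsSymm)
    (μ μ' : Fin p → ℝ) (v v' : Fin p → Fin p → ℝ)
    -- orthonormal eigenbases of Σ and Σ̃ = Σ + E, eigenvalues in non-increasing order
    (hv : ∀ i j, v i ⬝ᵥ v j = if i = j then (1 : ℝ) else 0)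
    (hv' : ∀ i j, v' i ⬝ᵥ v' j = if i = j then (1 : ℝ) else 0)
    (heig : ∀ j, S.mulVec (v j) = μ j • v j)
    (heig' : ∀ j, (S + E).mulVec (v' j) = μ' j • v' j)
    (hmono : Antitone μ) (hmono' : Antitone μ')
    (lamr : ℝ) (hlamr : ∃ j, μ j = lamr)
    (Δr : Finset (Fin p)) (hΔ : ∀ j, j ∈ Δr ↔ μ j = lamr)
    (g : ℝ) (hg : 0 < g) (hgap : ∀ j, μ j ≠ lamr → g ≤ |μ j - lamr|)
    (Pr P'r : Matrix (Fin p) (Fin p) ℝ)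
    (hPr : Pr = ∑ j ∈ Δr, Matrix.vecMulVec (v j) (v j))
    (hP'r : P'r = ∑ j ∈ Δr, Matrix.vecMulVec (v' j) (v' j)) :
    ‖P'r - Pr‖ ≤ 4 * ‖E‖ / g := by
  classical
  set K : ℝ := ‖E‖ with hKdef
  have hK : 0 ≤ K := norm_nonneg E
  by_cases hcase : g ≤ 2 * K
  · -- trivial case: the projectors have norm at most one
    have hPn : ‖Pr‖ ≤ 1 := by
      apply opNorm_le_of _ _ zero_le_one
      intro x
      rw [one_mul, hPr]
      exact proj_contract hv Δr x
    have hP'n : ‖P'r‖ ≤ 1 := by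
      apply opNorm_le_of _ _ zero_le_one
      intro x
      rw [one_mul, hP'r]
      exact proj_contract hv' Δr x
    have h2 : ‖P'r - Pr‖ ≤ 2 := by
      calc ‖P'r - Pr‖ ≤ ‖P'r‖ + ‖Pr‖ := norm_sub_le _ _
        _ ≤ 2 := by linarith
    calc ‖P'r - Pr‖ ≤ 2 := h2
      _ ≤ 4 * K / g := by
          rw [le_div_iff₀ hg]
          linarith
  · push_neg at hcase
    have hKg : 2 * K < g := hcase
    -- Weyl's inequality
    have hW : ∀ i, |μ' i - μ i| ≤ K :=
      weyl_abs S E μ μ' v v' hv hv' heig heig' hmono hmono'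
    -- symmetry of the projectors
    have hPrT : Prᵀ = Pr := by
      rw [hPr, Matrix.transpose_sum]
      apply Finset.sum_congr rfl
      intro j _
      ext a b
      simp [Matrix.transpose_apply, Matrix.vecMulVec_apply, mul_comm]
    have hP'rT : P'rᵀ = P'r := by
      rw [hP'r, Matrix.transpose_sum]
      apply Finset.sum_congr rfl
      intro j _
      ext a b
      simp [Matrix.transpose_apply, Matrix.vecMulVec_apply, mul_comm]
    have hSE : (S + E).IsSymm := hS.add hE
    have h2Kg : 0 ≤ 2 * K / g := by positivity
    -- first bound : ‖(1 - Pr) * P'r‖ ≤ 2K/g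
    have hB1 : ‖(1 - Pr) * P'r‖ ≤ 2 * K / g := by
      apply opNorm_le_of _ _ h2Kg
      intro x
      rw [← Matrix.mulVec_mulVec]
      set y : Fin p → ℝ := P'r *ᵥ x with hy
      have hyx : eN y ≤ eN x := by rw [hy, hP'r]; exact proj_contract hv' Δr x
      have hgb := gap_bound hv S hS μ heig Δr lamr g (le_of_lt hg)
        (fun j hj => hgap j (fun h => hj ((hΔ j).mpr h))) y
      rw [← hPr] at hgb
      -- bound the right side
      have hsplit : (S - lamr • 1) *ᵥ y = ((S + E) - lamr • 1) *ᵥ y - E *ᵥ y := by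
        have : S - lamr • 1 = ((S + E) - lamr • 1) - E := by abel
        rw [this, Matrix.sub_mulVec]
      have hySum : y = ∑ j ∈ Δr, (v' j ⬝ᵥ x) • v' j := by
        rw [hy, hP'r, proj_mulVec]
      have hbd1 : eN (((S + E) - lamr • 1) *ᵥ y) ≤ K * eN y := by
        rw [hySum]
        apply span_bound hv' (S + E) μ' heig' Δr lamr K hK
        intro j hj
        have hmu : μ j = lamr := (hΔ j).mp hj
        calc |μ' j - lamr| = |μ' j - μ j| := by rw [hmu]
          _ ≤ K := hW j
      have hbd2 : eN (E *ᵥ y) ≤ K * eN y := eN_mulVec E y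
      have hRHS : eN ((S - lamr • 1) *ᵥ y) ≤ 2 * K * eN x := by
        calc eN ((S - lamr • 1) *ᵥ y)
            = eN (((S + E) - lamr • 1) *ᵥ y - E *ᵥ y) := by rw [hsplit]
          _ ≤ eN (((S + E) - lamr • 1) *ᵥ y) + eN (E *ᵥ y) := eN_sub_le _ _
          _ ≤ K * eN y + K * eN y := add_le_add hbd1 hbd2
          _ = 2 * K * eN y := by ring
          _ ≤ 2 * K * eN x := by
              apply mul_le_mul_of_nonneg_left hyx (by positivity)
      have hfin : g * eN ((1 - Pr) *ᵥ y) ≤ 2 * K * eN x := le_trans hgb hRHS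
      rw [div_mul_eq_mul_div, le_div_iff₀ hg]
      calc eN ((1 - Pr) *ᵥ y) * g = g * eN ((1 - Pr) *ᵥ y) := by ring
        _ ≤ 2 * K * eN x := hfin
    -- second bound : ‖(1 - P'r) * Pr‖ ≤ 2K/g
    have hB2 : ‖(1 - P'r) * Pr‖ ≤ 2 * K / g := by
      apply opNorm_le_of _ _ h2Kg
      intro x
      rw [← Matrix.mulVec_mulVec]
      set y : Fin p → ℝ := Pr *ᵥ x with hy
      have hyx : eN y ≤ eN x := by rw [hy, hPr]; exact proj_contract hv Δr x
      have hgK : 0 ≤ g - K := by linarith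
      have hgb := gap_bound hv' (S + E) hSE μ' heig' Δr lamr (g - K) hgK
        (fun j hj => by
          have hmu : μ j ≠ lamr := fun h => hj ((hΔ j).mpr h)
          have h1 : g ≤ |μ j - lamr| := hgap j hmu
          have h2 : |μ' j - μ j| ≤ K := hW j
          have h3 : |μ j - lamr| - |μ' j - μ j| ≤ |μ' j - lamr| := by
            have := abs_sub_abs_le_abs_sub (μ j - lamr) (μ j - μ' j)
            have he : μ j - lamr - (μ j - μ' j) = μ' j - lamr := by ring
            rw [he] at this
            have h4 : |μ j - μ' j| = |μ' j - μ j| := abs_sub_comm _ _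
            linarith [this, h4.le, h4.ge]
          linarith) y
      rw [← hP'r] at hgb
      -- bound the right side : (S + E - lamr) y = E y  since (S - lamr) y = 0
      have hySum : y = ∑ j ∈ Δr, (v j ⬝ᵥ x) • v j := by
        rw [hy, hPr, proj_mulVec]
      have hzero : eN ((S - lamr • 1) *ᵥ y) ≤ 0 := by
        rw [hySum]
        have := span_bound hv S μ heig Δr lamr 0 le_rfl
          (fun j hj => by
            have hmu : μ j = lamr := (hΔ j).mp hj
            simp [hmu]) (fun j => v j ⬝ᵥ x)
        simpa using this
      have hsplit : ((S + E) - lamr • 1) *ᵥ y = (S - lamr • 1) *ᵥ y + E *ᵥ y := by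
        have : (S + E) - lamr • 1 = (S - lamr • 1) + E := by abel
        rw [this, Matrix.add_mulVec]
      have hRHS : eN (((S + E) - lamr • 1) *ᵥ y) ≤ K * eN x := by
        calc eN (((S + E) - lamr • 1) *ᵥ y)
            = eN ((S - lamr • 1) *ᵥ y + E *ᵥ y) := by rw [hsplit]
          _ ≤ eN ((S - lamr • 1) *ᵥ y) + eN (E *ᵥ y) := eN_add_le _ _
          _ ≤ 0 + K * eN y := add_le_add hzero (eN_mulVec E y)
          _ = K * eN y := by ring
          _ ≤ K * eN x := mul_le_mul_of_nonneg_left hyx hK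
      have hfin : (g - K) * eN ((1 - P'r) *ᵥ y) ≤ K * eN x := le_trans hgb hRHS
      -- from (g - K) ‖z‖ ≤ K ‖x‖ and g - K ≥ g/2 conclude ‖z‖ ≤ (2K/g) ‖x‖
      have hg2 : g / 2 ≤ g - K := by linarith
      have hz := eN_nonneg ((1 - P'r) *ᵥ y)
      have hx := eN_nonneg x
      rw [div_mul_eq_mul_div, le_div_iff₀ hg]
      nlinarith [hfin, hg2, hz, hx]
    -- assemble
    have hdecomp : P'r - Pr = P'r * (1 - Pr) - (1 - P'r) * Pr := by
      noncomm_ring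
    have htr : ‖P'r * (1 - Pr)‖ = ‖(1 - Pr) * P'r‖ := by
      have : ((1 - Pr) * P'r)ᵀ = P'r * (1 - Pr) := by
        rw [Matrix.transpose_mul, Matrix.transpose_sub, Matrix.transpose_one, hPrT, hP'rT]
      rw [← this, opNorm_transpose]
    calc ‖P'r - Pr‖ = ‖P'r * (1 - Pr) - (1 - P'r) * Pr‖ := by rw [hdecomp]
      _ ≤ ‖P'r * (1 - Pr)‖ + ‖(1 - P'r) * Pr‖ := norm_sub_le _ _
      _ = ‖(1 - Pr) * P'r‖ + ‖(1 - P'r) * Pr‖ := by rw [htr]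
      _ ≤ 2 * K / g + 2 * K / g := add_le_add hB1 hB2
      _ = 4 * K / g := by ring
end

section
/- Decomposition of the projector perturbation: under the conditions of the projector perturbation bound, P̃_r − P_r = L_r(E) + S_r(E) where L_r(E) = C_r E P_r + P_r E C_r with C_r = Σ_{s≠r} P_s/(λ_r − λ_s), and the remainder satisfies ‖S_r(E)‖ ≤ 14 (‖E‖/g̅_r)^2. -/
set_option maxHeartbeats 2000000

open Matrix Finset
open scoped Matrix.Norms.L2Operator

namespace ProjPerturb

variable {p : ℕ}

lemma vmv_mulVec (a b x : Fin p → ℝ) : vecMulVec a b *ᵥ x = (b ⬝ᵥ x) • a := by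
  ext i
  simp [Matrix.mulVec, vecMulVec_apply, dotProduct, Finset.sum_mul, Finset.mul_sum]
  congr 1; ext k; ring

lemma mul_vmv (M : Matrix (Fin p) (Fin p) ℝ) (a b : Fin p → ℝ) :
    M * vecMulVec a b = vecMulVec (M *ᵥ a) b := by
  ext i j
  simp [Matrix.mul_apply, vecMulVec_apply, Matrix.mulVec, dotProduct, Finset.sum_mul]
  congr 1; ext k; ring

lemma vmv_smul_left (c : ℝ) (a b : Fin p → ℝ) :
    vecMulVec (c • a) b = c • vecMulVec a b := by
  ext i j; simp [vecMulVec_apply]; ring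

lemma sum_mulVec {ι : Type*} (s : Finset ι) (M : ι → Matrix (Fin p) (Fin p) ℝ) (x : Fin p → ℝ) :
    (∑ j ∈ s, M j) *ᵥ x = ∑ j ∈ s, (M j *ᵥ x) := by
  ext i
  simp [Matrix.mulVec, dotProduct, Matrix.sum_apply, Finset.sum_mul]
  rw [Finset.sum_comm]

lemma dotProduct_sum' {ι : Type*} (s : Finset ι) (x : Fin p → ℝ) (y : ι → Fin p → ℝ) :
    x ⬝ᵥ (∑ j ∈ s, y j) = ∑ j ∈ s, x ⬝ᵥ y j := by
  simp [dotProduct, Finset.sum_apply, Finset.mul_sum]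
  rw [Finset.sum_comm]

lemma sum_dotProduct' {ι : Type*} (s : Finset ι) (x : Fin p → ℝ) (y : ι → Fin p → ℝ) :
    (∑ j ∈ s, y j) ⬝ᵥ x = ∑ j ∈ s, y j ⬝ᵥ x := by
  simp [dotProduct, Finset.sum_apply, Finset.sum_mul]
  rw [Finset.sum_comm]

lemma complete_basis (v : Fin p → Fin p → ℝ)
    (hv : ∀ i j, v i ⬝ᵥ v j = if i = j then (1 : ℝ) else 0) :
    ∑ j, vecMulVec (v j) (v j) = (1 : Matrix (Fin p) (Fin p) ℝ) := by
  have hVVt : (Matrix.of v) * (Matrix.of v)ᵀ = 1 := by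
    ext i j
    have := hv i j
    simp only [dotProduct] at this
    simp [Matrix.mul_apply, this, Matrix.one_apply]
  have hVtV : (Matrix.of v)ᵀ * (Matrix.of v) = 1 := mul_eq_one_comm.mp hVVt
  ext a b
  have := congrFun (congrFun hVtV a) b
  simp only [Matrix.mul_apply, Matrix.transpose_apply, Matrix.of_apply] at this
  simpa [vecMulVec_apply, Matrix.sum_apply] using this

lemma vmv_mul_vmv (a b c d : Fin p → ℝ) :
    vecMulVec a b * vecMulVec c d = (b ⬝ᵥ c) • vecMulVec a d := by
  ext i j
  simp [Matrix.mul_apply, vecMulVec_apply, dotProduct, Finset.mul_sum, Finset.sum_mul]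
  congr 1; ext k; ring

lemma collapse (v : Fin p → Fin p → ℝ)
    (hv : ∀ i j, v i ⬝ᵥ v j = if i = j then (1 : ℝ) else 0)
    (F G : Finset (Fin p)) (c d : Fin p → ℝ) :
    (∑ j ∈ F, c j • vecMulVec (v j) (v j)) * (∑ k ∈ G, d k • vecMulVec (v k) (v k))
      = ∑ j ∈ F ∩ G, (c j * d j) • vecMulVec (v j) (v j) := by
  rw [Finset.sum_mul]
  have hterm : ∀ j ∈ F, (c j • vecMulVec (v j) (v j)) * (∑ k ∈ G, d k • vecMulVec (v k) (v k))
      = if j ∈ G then (c j * d j) • vecMulVec (v j) (v j) else 0 := by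
    intro j _
    rw [Finset.mul_sum]
    have : ∀ k ∈ G, (c j • vecMulVec (v j) (v j)) * (d k • vecMulVec (v k) (v k))
        = if k = j then (c j * d j) • vecMulVec (v j) (v j) else 0 := by
      intro k _
      rw [smul_mul_assoc, mul_smul_comm, vmv_mul_vmv, hv j k]
      by_cases h : k = j
      · subst h; simp [smul_smul, mul_comm]
      · simp [Ne.symm h, h]
    rw [Finset.sum_congr rfl this, Finset.sum_ite_eq' G j]
  rw [Finset.sum_congr rfl hterm, Finset.sum_ite_mem]

lemma l2norm_le_of_sq {A : Matrix (Fin p) (Fin p) ℝ} {B : ℝ} (hB : 0 ≤ B)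
    (h : ∀ x : Fin p → ℝ, (A *ᵥ x) ⬝ᵥ (A *ᵥ x) ≤ B ^ 2 * (x ⬝ᵥ x)) : ‖A‖ ≤ B := by
  rw [Matrix.cstar_norm_def]
  apply ContinuousLinearMap.opNorm_le_bound _ hB
  intro x
  have h1 : (toEuclideanCLM (n := Fin p) (𝕜 := ℝ) A) x
      = (WithLp.equiv 2 _).symm (A *ᵥ (WithLp.equiv 2 _ x)) := rfl
  rw [h1]
  set y : Fin p → ℝ := WithLp.equiv 2 _ x with hy
  have hxnorm : ‖x‖ ^ 2 = y ⬝ᵥ y := by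
    rw [← real_inner_self_eq_norm_sq]
    simp only [PiLp.inner_apply, dotProduct, RCLike.inner_apply, starRingEnd_apply, star_trivial]
    rfl
  have hAx : ‖(WithLp.equiv 2 (Fin p → ℝ)).symm (A *ᵥ y)‖ ^ 2 = (A *ᵥ y) ⬝ᵥ (A *ᵥ y) := by
    rw [← real_inner_self_eq_norm_sq]
    simp only [PiLp.inner_apply, dotProduct, RCLike.inner_apply, starRingEnd_apply, star_trivial]
    rfl
  have h2 := h y
  have h3 : (0:ℝ) ≤ ‖x‖ := norm_nonneg _
  have h4 : (0:ℝ) ≤ ‖(WithLp.equiv 2 (Fin p → ℝ)).symm (A *ᵥ y)‖ := norm_nonneg _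
  nlinarith [h2, hxnorm, hAx, mul_nonneg hB h3]

lemma parseval (v : Fin p → Fin p → ℝ)
    (hcomp : ∑ j, vecMulVec (v j) (v j) = (1 : Matrix (Fin p) (Fin p) ℝ))
    (x : Fin p → ℝ) : ∑ j, (v j ⬝ᵥ x) ^ 2 = x ⬝ᵥ x := by
  have h1 : x ⬝ᵥ ((∑ j, vecMulVec (v j) (v j)) *ᵥ x) = x ⬝ᵥ x := by rw [hcomp, Matrix.one_mulVec]
  rw [← h1, sum_mulVec, dotProduct_sum']
  apply Finset.sum_congr rfl
  intro j _
  rw [vmv_mulVec, dotProduct_smul, dotProduct_comm x (v j)]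
  simp [smul_eq_mul]
  ring

lemma norm_spectral_le (v : Fin p → Fin p → ℝ)
    (hv : ∀ i j, v i ⬝ᵥ v j = if i = j then (1 : ℝ) else 0)
    (F : Finset (Fin p)) (c : Fin p → ℝ) (B : ℝ) (hB : 0 ≤ B)
    (hc : ∀ j ∈ F, |c j| ≤ B) :
    ‖∑ j ∈ F, c j • vecMulVec (v j) (v j)‖ ≤ B := by
  have hcomp := complete_basis v hv
  apply l2norm_le_of_sq hB
  intro x
  have hDx : (∑ j ∈ F, c j • vecMulVec (v j) (v j)) *ᵥ x
      = ∑ j ∈ F, (c j * (v j ⬝ᵥ x)) • v j := by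
    rw [sum_mulVec]
    apply Finset.sum_congr rfl
    intro j _
    rw [Matrix.smul_mulVec, vmv_mulVec, smul_smul]
  rw [hDx]
  have hdot : (∑ j ∈ F, (c j * (v j ⬝ᵥ x)) • v j) ⬝ᵥ (∑ k ∈ F, (c k * (v k ⬝ᵥ x)) • v k)
      = ∑ j ∈ F, (c j * (v j ⬝ᵥ x)) ^ 2 := by
    rw [sum_dotProduct']
    have : ∀ j ∈ F, ((c j * (v j ⬝ᵥ x)) • v j) ⬝ᵥ (∑ k ∈ F, (c k * (v k ⬝ᵥ x)) • v k)
        = (c j * (v j ⬝ᵥ x)) ^ 2 := by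
      intro j hj
      rw [smul_dotProduct, dotProduct_sum']
      have h2 : ∀ k ∈ F, v j ⬝ᵥ ((c k * (v k ⬝ᵥ x)) • v k)
          = if k = j then c j * (v j ⬝ᵥ x) else 0 := by
        intro k _
        rw [dotProduct_smul, hv j k]
        by_cases h : k = j
        · subst h; simp
        · simp [h, Ne.symm h]
      rw [Finset.sum_congr rfl h2, Finset.sum_ite_eq' F j, if_pos hj]
      simp; ring
    rw [Finset.sum_congr rfl this]
  rw [hdot, ← parseval v hcomp x, Finset.mul_sum]
  calc ∑ j ∈ F, (c j * (v j ⬝ᵥ x)) ^ 2 ≤ ∑ j ∈ F, B ^ 2 * (v j ⬝ᵥ x) ^ 2 := by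
        apply Finset.sum_le_sum
        intro j hj
        have := hc j hj
        have h2 : (c j) ^ 2 ≤ B ^ 2 :=
          sq_le_sq' (by linarith [abs_le.mp this |>.1]) (abs_le.mp this |>.2)
        nlinarith [sq_nonneg (v j ⬝ᵥ x)]
    _ ≤ ∑ j : Fin p, B ^ 2 * (v j ⬝ᵥ x) ^ 2 := by
        apply Finset.sum_le_sum_of_subset_of_nonneg (Finset.subset_univ F)
        intro j _ _
        positivity

lemma spectral (v : Fin p → Fin p → ℝ) (μ : Fin p → ℝ) (S : Matrix (Fin p) (Fin p) ℝ)
    (hcomp : ∑ j, vecMulVec (v j) (v j) = (1 : Matrix (Fin p) (Fin p) ℝ))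
    (heig : ∀ j, S.mulVec (v j) = μ j • v j) :
    S = ∑ k, μ k • vecMulVec (v k) (v k) := by
  have h1 : S = S * ∑ j, vecMulVec (v j) (v j) := by rw [hcomp, Matrix.mul_one]
  rw [h1, Finset.mul_sum]
  apply Finset.sum_congr rfl
  intro k _
  rw [mul_vmv, heig k, vmv_smul_left]

lemma quad_form (v : Fin p → Fin p → ℝ) (μ : Fin p → ℝ) (x : Fin p → ℝ) :
    x ⬝ᵥ ((∑ k, μ k • vecMulVec (v k) (v k)) *ᵥ x) = ∑ k, μ k * (v k ⬝ᵥ x) ^ 2 := by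
  rw [sum_mulVec, dotProduct_sum']
  apply Finset.sum_congr rfl
  intro k _
  rw [Matrix.smul_mulVec, vmv_mulVec, smul_smul, dotProduct_smul, dotProduct_comm x (v k)]
  simp [smul_eq_mul]
  ring

lemma l2norm_transpose (A : Matrix (Fin p) (Fin p) ℝ) : ‖Aᵀ‖ = ‖A‖ := by
  have h : Aᴴ = Aᵀ := by
    ext i j; simp [Matrix.conjTranspose_apply]
  rw [← h, Matrix.l2_opNorm_conjTranspose]

lemma sumv_transpose (v : Fin p → Fin p → ℝ) (F : Finset (Fin p)) (c : Fin p → ℝ) :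
    (∑ j ∈ F, c j • vecMulVec (v j) (v j))ᵀ = ∑ j ∈ F, c j • vecMulVec (v j) (v j) := by
  ext i j
  simp [Matrix.transpose_apply, Matrix.sum_apply, vecMulVec_apply]
  congr 1; ext k; ring

lemma nmul2 (A B : Matrix (Fin p) (Fin p) ℝ) : ‖A * B‖ ≤ ‖A‖ * ‖B‖ := Matrix.l2_opNorm_mul A B

lemma nmul3 (A B C : Matrix (Fin p) (Fin p) ℝ) : ‖A * (B * C)‖ ≤ ‖A‖ * (‖B‖ * ‖C‖) :=
  (nmul2 _ _).trans (mul_le_mul_of_nonneg_left (nmul2 _ _) (norm_nonneg _))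

lemma nmul4 (A B C D : Matrix (Fin p) (Fin p) ℝ) :
    ‖A * (B * (C * D))‖ ≤ ‖A‖ * (‖B‖ * (‖C‖ * ‖D‖)) :=
  (nmul2 _ _).trans (mul_le_mul_of_nonneg_left (nmul3 _ _ _) (norm_nonneg _))

lemma weyl_one (S E : Matrix (Fin p) (Fin p) ℝ)
    (μ μ' : Fin p → ℝ) (v v' : Fin p → Fin p → ℝ)
    (hv : ∀ i j, v i ⬝ᵥ v j = if i = j then (1 : ℝ) else 0)
    (hv' : ∀ i j, v' i ⬝ᵥ v' j = if i = j then (1 : ℝ) else 0)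
    (heig : ∀ j, S.mulVec (v j) = μ j • v j)
    (heig' : ∀ j, (S + E).mulVec (v' j) = μ' j • v' j)
    (hmono : Antitone μ) (hmono' : Antitone μ') (j : Fin p) :
    μ j - ‖E‖ ≤ μ' j := by
  classical
  have hcomp := complete_basis v hv
  have hcomp' := complete_basis v' hv'
  -- orthonormal families in EuclideanSpace
  set w : Fin p → EuclideanSpace ℝ (Fin p) := fun k => (WithLp.equiv 2 _).symm (v k) with hw
  set w' : Fin p → EuclideanSpace ℝ (Fin p) := fun k => (WithLp.equiv 2 _).symm (v' k) with hw'
  have how : Orthonormal ℝ w := by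
    rw [orthonormal_iff_ite]
    intro i k
    have := hv i k
    simpa [PiLp.inner_apply, RCLike.inner_apply, dotProduct, hw, mul_comm] using this
  have how' : Orthonormal ℝ w' := by
    rw [orthonormal_iff_ite]
    intro i k
    have := hv' i k
    simpa [PiLp.inner_apply, RCLike.inner_apply, dotProduct, hw', mul_comm] using this
  -- subspaces
  set U : Submodule ℝ (EuclideanSpace ℝ (Fin p)) :=
    Submodule.span ℝ (Set.range (fun k : {k : Fin p // k ≤ j} => w k)) with hU
  set W : Submodule ℝ (EuclideanSpace ℝ (Fin p)) :=
    Submodule.span ℝ (Set.range (fun k : {k : Fin p // j ≤ k} => w' k)) with hW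
  have hrankU : Module.finrank ℝ U = Fintype.card {k : Fin p // k ≤ j} := by
    apply finrank_span_eq_card
    exact (how.linearIndependent).comp _ Subtype.val_injective
  have hrankW : Module.finrank ℝ W = Fintype.card {k : Fin p // j ≤ k} := by
    apply finrank_span_eq_card
    exact (how'.linearIndependent).comp _ Subtype.val_injective
  have hcards : Fintype.card {k : Fin p // k ≤ j} + Fintype.card {k : Fin p // j ≤ k} = p + 1 := by
    rw [Fintype.card_subtype, Fintype.card_subtype]
    have h1 : (Finset.filter (fun k => k ≤ j) Finset.univ) ∪ (Finset.filter (fun k => j ≤ k) Finset.univ) = (Finset.univ : Finset (Fin p)) := by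
      ext k; simp [le_total]
    have h2 : (Finset.filter (fun k => k ≤ j) Finset.univ) ∩ (Finset.filter (fun k => j ≤ k) Finset.univ) = {j} := by
      ext k
      simp only [Finset.mem_inter, Finset.mem_filter, Finset.mem_univ, true_and, Finset.mem_singleton]
      constructor
      · rintro ⟨h1, h2⟩; exact le_antisymm h1 h2
      · rintro rfl; exact ⟨le_refl _, le_refl _⟩
    have := Finset.card_union_add_card_inter (Finset.filter (fun k => k ≤ j) Finset.univ)
      (Finset.filter (fun k => j ≤ k) Finset.univ)
    rw [h1, h2] at this
    simp at this
    omega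
  -- intersection is nontrivial
  have hinf : 0 < Module.finrank ℝ (U ⊓ W : Submodule ℝ (EuclideanSpace ℝ (Fin p))) := by
    have hsup := Submodule.finrank_sup_add_finrank_inf_eq U W
    have hle : Module.finrank ℝ (U ⊔ W : Submodule ℝ (EuclideanSpace ℝ (Fin p))) ≤ p := by
      have := Submodule.finrank_le (U ⊔ W)
      simpa using this
    omega
  have hex := (Module.finrank_pos_iff_exists_ne_zero (R := ℝ)).mp hinf
  obtain ⟨⟨x, hxUW⟩, hxne⟩ := hex
  have hxU : x ∈ U := hxUW.1
  have hxW : x ∈ W := hxUW.2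
  have hx0 : x ≠ 0 := by
    intro h; apply hxne; exact Subtype.ext h
  set y : Fin p → ℝ := WithLp.equiv 2 _ x with hy
  have hxn : ‖x‖ ^ 2 = y ⬝ᵥ y := by
    rw [← real_inner_self_eq_norm_sq]
    simp only [PiLp.inner_apply, RCLike.inner_apply, starRingEnd_apply, star_trivial]
    rfl
  have hypos : 0 < y ⬝ᵥ y := by
    rw [← hxn]
    have : 0 < ‖x‖ := norm_pos_iff.mpr hx0
    positivity
  have hcoefv : ∀ m, j < m → v m ⬝ᵥ y = 0 := by
    intro m hm
    have : ∀ z ∈ U, v m ⬝ᵥ (WithLp.equiv 2 (Fin p → ℝ) z) = 0 := by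
      intro z hz
      induction hz using Submodule.span_induction with
      | mem z hzmem =>
        obtain ⟨⟨k, hk⟩, rfl⟩ := hzmem
        have : v m ⬝ᵥ v k = 0 := by
          rw [hv m k]
          simp [Fin.ne_of_gt (lt_of_le_of_lt hk hm)]
        simpa [hw] using this
      | zero => simp
      | add a b _ _ ha hb => rw [show WithLp.equiv 2 (Fin p → ℝ) (a + b) = WithLp.equiv 2 _ a + WithLp.equiv 2 _ b from rfl, dotProduct_add, ha, hb]; ring
      | smul c a _ ha => rw [show WithLp.equiv 2 (Fin p → ℝ) (c • a) = c • WithLp.equiv 2 _ a from rfl, dotProduct_smul, ha]; simp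
    exact this x hxU
  have hcoefv' : ∀ m, m < j → v' m ⬝ᵥ y = 0 := by
    intro m hm
    have : ∀ z ∈ W, v' m ⬝ᵥ (WithLp.equiv 2 (Fin p → ℝ) z) = 0 := by
      intro z hz
      induction hz using Submodule.span_induction with
      | mem z hzmem =>
        obtain ⟨⟨k, hk⟩, rfl⟩ := hzmem
        have : v' m ⬝ᵥ v' k = 0 := by
          rw [hv' m k]
          simp [Fin.ne_of_lt (lt_of_lt_of_le hm hk)]
        simpa [hw'] using this
      | zero => simp
      | add a b _ _ ha hb => rw [show WithLp.equiv 2 (Fin p → ℝ) (a + b) = WithLp.equiv 2 _ a + WithLp.equiv 2 _ b from rfl, dotProduct_add, ha, hb]; ring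
      | smul c a _ ha => rw [show WithLp.equiv 2 (Fin p → ℝ) (c • a) = c • WithLp.equiv 2 _ a from rfl, dotProduct_smul, ha]; simp
    exact this x hxW
  -- quadratic forms
  have hSform : y ⬝ᵥ (S *ᵥ y) = ∑ k, μ k * (v k ⬝ᵥ y) ^ 2 := by
    rw [spectral v μ S hcomp heig, quad_form]
  have hSEform : y ⬝ᵥ ((S + E) *ᵥ y) = ∑ k, μ' k * (v' k ⬝ᵥ y) ^ 2 := by
    rw [spectral v' μ' (S + E) hcomp' heig', quad_form]
  have hSlow : μ j * (y ⬝ᵥ y) ≤ y ⬝ᵥ (S *ᵥ y) := by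
    rw [hSform, ← parseval v hcomp y, Finset.mul_sum]
    apply Finset.sum_le_sum
    intro k _
    rcases le_or_gt k j with h | h
    · have := hmono h
      nlinarith [sq_nonneg (v k ⬝ᵥ y)]
    · rw [hcoefv k h]; simp
  have hSEhigh : y ⬝ᵥ ((S + E) *ᵥ y) ≤ μ' j * (y ⬝ᵥ y) := by
    rw [hSEform, ← parseval v' hcomp' y, Finset.mul_sum]
    apply Finset.sum_le_sum
    intro k _
    rcases le_or_gt j k with h | h
    · have := hmono' h
      nlinarith [sq_nonneg (v' k ⬝ᵥ y)]
    · rw [hcoefv' k h]; simp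
  have hEbound : -(‖E‖ * (y ⬝ᵥ y)) ≤ y ⬝ᵥ (E *ᵥ y) := by
    set z : EuclideanSpace ℝ (Fin p) := (WithLp.equiv 2 _).symm (E *ᵥ y) with hz
    have hinner : (inner ℝ x z : ℝ) = y ⬝ᵥ (E *ᵥ y) := by
      simp only [PiLp.inner_apply, RCLike.inner_apply, starRingEnd_apply, star_trivial]
      rw [dotProduct_comm]; rfl
    have h1 : |(inner ℝ x z : ℝ)| ≤ ‖x‖ * ‖z‖ := abs_real_inner_le_norm x z
    have h2 : ‖z‖ ≤ ‖E‖ * ‖x‖ := by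
      have := Matrix.l2_opNorm_mulVec E x
      exact this
    have habs := (abs_le.mp h1).1
    have hnx : (0:ℝ) ≤ ‖x‖ := norm_nonneg x
    have h4 : ‖x‖ * ‖z‖ ≤ ‖E‖ * (y ⬝ᵥ y) := by
      have h5 := mul_le_mul_of_nonneg_left h2 hnx
      calc ‖x‖ * ‖z‖ ≤ ‖x‖ * (‖E‖ * ‖x‖) := h5
        _ = ‖E‖ * ‖x‖ ^ 2 := by ring
        _ = ‖E‖ * (y ⬝ᵥ y) := by rw [hxn]
    rw [← hinner]
    linarith
  have hsplit : y ⬝ᵥ ((S + E) *ᵥ y) = y ⬝ᵥ (S *ᵥ y) + y ⬝ᵥ (E *ᵥ y) := by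
    rw [Matrix.add_mulVec, dotProduct_add]
  nlinarith [hSlow, hSEhigh, hEbound, hsplit, hypos]

end ProjPerturb
open ProjPerturb in
/-- decomposition of the projector perturbation,
`P̃_r - P_r = L_r(E) + S_r(E)` with `L_r(E) = C_r E P_r + P_r E C_r`,
`C_r = ∑_{s ≠ r} P_s / (λ_r - λ_s)`, and `‖S_r(E)‖ ≤ 14 (‖E‖/ḡ_r)²`. -/
theorem projector_perturbation_decomposition {p : ℕ}
    (S E : Matrix (Fin p) (Fin p) ℝ) (hS : S.IsSymm) (hSpsd : S.PosSemidef) (hE : E.IsSymm)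
    (μ μ' : Fin p → ℝ) (v v' : Fin p → Fin p → ℝ)
    (hv : ∀ i j, v i ⬝ᵥ v j = if i = j then (1 : ℝ) else 0)
    (hv' : ∀ i j, v' i ⬝ᵥ v' j = if i = j then (1 : ℝ) else 0)
    (heig : ∀ j, S.mulVec (v j) = μ j • v j)
    (heig' : ∀ j, (S + E).mulVec (v' j) = μ' j • v' j)
    (hmono : Antitone μ) (hmono' : Antitone μ')
    (lamr : ℝ) (hlamr : ∃ j, μ j = lamr)
    (Δr : Finset (Fin p)) (hΔ : ∀ j, j ∈ Δr ↔ μ j = lamr)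
    (g : ℝ) (hg : 0 < g) (hgap : ∀ j, μ j ≠ lamr → g ≤ |μ j - lamr|)
    (Pr P'r Cr : Matrix (Fin p) (Fin p) ℝ)
    (hPr : Pr = ∑ j ∈ Δr, Matrix.vecMulVec (v j) (v j))
    (hP'r : P'r = ∑ j ∈ Δr, Matrix.vecMulVec (v' j) (v' j))
    (hCr : Cr = ∑ j ∈ Δrᶜ, (lamr - μ j)⁻¹ • Matrix.vecMulVec (v j) (v j)) :
    ‖P'r - Pr - (Cr * E * Pr + Pr * E * Cr)‖ ≤ 14 * (‖E‖ / g) ^ 2 := by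
  classical
  have hcomp := complete_basis v hv
  have hcomp' := complete_basis v' hv'
  set ε := ‖E‖ with hεdef
  have hε0 : 0 ≤ ε := norm_nonneg E
  -- Weyl's inequality
  have hwey : ∀ j, |μ' j - μ j| ≤ ε := by
    intro j
    have h1 := weyl_one S E μ μ' v v' hv hv' heig heig' hmono hmono' j
    have heig2 : ∀ k, (S + E + -E).mulVec (v k) = μ k • v k := by
      intro k
      have h : S + E + -E = S := by abel
      rw [h]; exact heig k
    have h2 := weyl_one (S + E) (-E) μ' μ v' v hv' hv heig' heig2 hmono' hmono j
    rw [norm_neg] at h2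
    rw [abs_le]
    constructor <;> [linarith; linarith]
  -- membership facts
  have hmemΔ : ∀ j ∈ Δr, μ j = lamr := fun j hj => (hΔ j).mp hj
  have hmemΔc : ∀ j ∈ Δrᶜ, g ≤ |μ j - lamr| := by
    intro j hj
    exact hgap j (by simpa [hΔ j] using Finset.mem_compl.mp hj)
  have hneΔc : ∀ j ∈ Δrᶜ, μ j ≠ lamr := by
    intro j hj h
    have h2 := hmemΔc j hj
    rw [h] at h2
    simp at h2
    linarith
  -- canonical forms
  have hPr1 : Pr = ∑ j ∈ Δr, (fun _ : Fin p => (1:ℝ)) j • vecMulVec (v j) (v j) := by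
    rw [hPr]; simp
  have hQ1 : P'r = ∑ j ∈ Δr, (fun _ : Fin p => (1:ℝ)) j • vecMulVec (v' j) (v' j) := by
    rw [hP'r]; simp
  obtain ⟨Pp, hPp⟩ : ∃ M, M = ∑ j ∈ Δrᶜ, (fun _ : Fin p => (1:ℝ)) j • vecMulVec (v j) (v j) :=
    ⟨_, rfl⟩
  obtain ⟨Qp, hQp⟩ : ∃ M, M = ∑ j ∈ Δrᶜ, (fun _ : Fin p => (1:ℝ)) j • vecMulVec (v' j) (v' j) :=
    ⟨_, rfl⟩
  obtain ⟨R0, hR0⟩ :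
      ∃ M, M = ∑ j ∈ Δrᶜ, (fun k => (μ k - lamr)⁻¹) j • vecMulVec (v j) (v j) := ⟨_, rfl⟩
  obtain ⟨Cd, hCd⟩ :
      ∃ M, M = ∑ j ∈ Δrᶜ, (fun k => (μ' k - lamr)⁻¹) j • vecMulVec (v' j) (v' j) := ⟨_, rfl⟩
  obtain ⟨N, hN⟩ :
      ∃ M, M = ∑ j ∈ Δr, (fun k => μ' k - lamr) j • vecMulVec (v' j) (v' j) := ⟨_, rfl⟩
  -- basic norms
  have nPr : ‖Pr‖ ≤ 1 := by
    rw [hPr1]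
    exact norm_spectral_le v hv Δr _ 1 one_pos.le (fun j _ => by norm_num)
  have nQ : ‖P'r‖ ≤ 1 := by
    rw [hQ1]
    exact norm_spectral_le v' hv' Δr _ 1 one_pos.le (fun j _ => by norm_num)
  have hginv0 : (0:ℝ) ≤ g⁻¹ := by positivity
  have nCr : ‖Cr‖ ≤ g⁻¹ := by
    rw [hCr]
    apply norm_spectral_le v hv Δrᶜ _ g⁻¹ hginv0
    intro j hj
    rw [abs_inv, abs_sub_comm]
    exact inv_anti₀ hg (hmemΔc j hj)
  have nR0 : ‖R0‖ ≤ g⁻¹ := by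
    rw [hR0]
    apply norm_spectral_le v hv Δrᶜ _ g⁻¹ hginv0
    intro j hj
    rw [abs_inv]
    exact inv_anti₀ hg (hmemΔc j hj)
  have nCrE : ‖Cr * E * Pr‖ ≤ g⁻¹ * ε := by
    calc ‖Cr * E * Pr‖ = ‖Cr * (E * Pr)‖ := by rw [Matrix.mul_assoc]
      _ ≤ ‖Cr‖ * (‖E‖ * ‖Pr‖) := nmul3 _ _ _
      _ ≤ g⁻¹ * (ε * 1) := by gcongr
      _ = g⁻¹ * ε := by ring
  have nPECr : ‖Pr * E * Cr‖ ≤ g⁻¹ * ε := by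
    calc ‖Pr * E * Cr‖ = ‖Pr * (E * Cr)‖ := by rw [Matrix.mul_assoc]
      _ ≤ ‖Pr‖ * (‖E‖ * ‖Cr‖) := nmul3 _ _ _
      _ ≤ 1 * (ε * g⁻¹) := by gcongr
      _ = g⁻¹ * ε := by ring
  rcases le_or_gt ((3/4) * g) ε with hcase | hcase
  · -- crude case: ε ≥ (3/4) g
    have hTb : ‖P'r - Pr - (Cr * E * Pr + Pr * E * Cr)‖ ≤ 2 + 2 * (g⁻¹ * ε) := by
      calc ‖P'r - Pr - (Cr * E * Pr + Pr * E * Cr)‖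
          ≤ ‖P'r - Pr‖ + ‖Cr * E * Pr + Pr * E * Cr‖ := norm_sub_le _ _
        _ ≤ (‖P'r‖ + ‖Pr‖) + (‖Cr * E * Pr‖ + ‖Pr * E * Cr‖) :=
            add_le_add (norm_sub_le _ _) (norm_add_le _ _)
        _ ≤ (1 + 1) + (g⁻¹ * ε + g⁻¹ * ε) := by gcongr
        _ = 2 + 2 * (g⁻¹ * ε) := by ring
    have ht : 3/4 ≤ ε / g := (le_div_iff₀ hg).mpr (by linarith)
    have hgi : g⁻¹ * ε = ε / g := by rw [div_eq_mul_inv]; ring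
    rw [hgi] at hTb
    have : 2 + 2 * (ε / g) ≤ 14 * (ε / g) ^ 2 := by nlinarith [ht]
    linarith
  · -- main case : ε < (3/4) g
    have hgε : 0 < g - ε := by linarith
    have hΔwey : ∀ j ∈ Δr, |μ' j - lamr| ≤ ε := by
      intro j hj
      rw [← hmemΔ j hj]
      exact hwey j
    have hΔcwey : ∀ j ∈ Δrᶜ, g - ε ≤ |μ' j - lamr| := by
      intro j hj
      have h1 := hmemΔc j hj
      have h2 := hwey j
      have h3 := abs_sub_le (μ j) (μ' j) lamr
      have h4 := abs_sub_comm (μ j) (μ' j)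
      linarith
    have hneΔc' : ∀ j ∈ Δrᶜ, μ' j ≠ lamr := by
      intro j hj h
      have h2 := hΔcwey j hj
      rw [h] at h2
      simp at h2
      linarith
    -- norms of Cd and N
    have hgε0 : (0:ℝ) ≤ (g - ε)⁻¹ := by positivity
    have nCd : ‖Cd‖ ≤ (g - ε)⁻¹ := by
      rw [hCd]
      apply norm_spectral_le v' hv' Δrᶜ _ ((g-ε)⁻¹) hgε0
      intro j hj
      rw [abs_inv]
      exact inv_anti₀ hgε (hΔcwey j hj)
    have nN : ‖N‖ ≤ ε := by
      rw [hN]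
      exact norm_spectral_le v' hv' Δr _ ε hε0 (fun j hj => hΔwey j hj)
    -- spectral resolvent forms
    have hS1 : S - lamr • 1 = ∑ k, (fun j => μ j - lamr) k • vecMulVec (v k) (v k) := by
      have e1 : lamr • (1 : Matrix (Fin p) (Fin p) ℝ) = ∑ k, lamr • vecMulVec (v k) (v k) := by
        rw [← Finset.smul_sum, hcomp]
      rw [spectral v μ S hcomp heig, e1, ← Finset.sum_sub_distrib]
      exact Finset.sum_congr rfl fun k _ => by rw [← sub_smul]
    have hSE1 : S + E - lamr • 1 = ∑ k, (fun j => μ' j - lamr) k • vecMulVec (v' k) (v' k) := by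
      have e1 : lamr • (1 : Matrix (Fin p) (Fin p) ℝ) = ∑ k, lamr • vecMulVec (v' k) (v' k) := by
        rw [← Finset.smul_sum, hcomp']
      rw [spectral v' μ' (S + E) hcomp' heig', e1, ← Finset.sum_sub_distrib]
      exact Finset.sum_congr rfl fun k _ => by rw [← sub_smul]
    -- complement splits
    have hPp1 : Pp = 1 - Pr := by
      have h := Finset.sum_add_sum_compl Δr (fun j => vecMulVec (v j) (v j))
      rw [hcomp] at h
      rw [hPp, hPr]
      simp only [one_smul]
      rw [eq_sub_iff_add_eq, add_comm]
      exact h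
    have hQp1 : Qp = 1 - P'r := by
      have h := Finset.sum_add_sum_compl Δr (fun j => vecMulVec (v' j) (v' j))
      rw [hcomp'] at h
      rw [hQp, hP'r]
      simp only [one_smul]
      rw [eq_sub_iff_add_eq, add_comm]
      exact h
    -- product identities in the v basis
    have cPrPr : Pr * Pr = Pr := by
      have h := collapse v hv Δr Δr (fun _ => 1) (fun _ => 1)
      rw [hPr1, h, Finset.inter_self]
      exact Finset.sum_congr rfl fun j _ => by norm_num
    have cPpPr : Pp * Pr = 0 := by
      have h := collapse v hv Δrᶜ Δr (fun _ => 1) (fun _ => 1)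
      rw [hPp, hPr1, h, Finset.inter_comm]
      simp
    have cPrPp : Pr * Pp = 0 := by
      have h := collapse v hv Δr Δrᶜ (fun _ => 1) (fun _ => 1)
      rw [hPp, hPr1, h]
      simp
    have cPpR0 : Pp * R0 = R0 := by
      have h := collapse v hv Δrᶜ Δrᶜ (fun _ => 1) (fun k => (μ k - lamr)⁻¹)
      rw [hPp, hR0, h, Finset.inter_self]
      exact Finset.sum_congr rfl fun j _ => by norm_num
    have cR0Pp : R0 * Pp = R0 := by
      have h := collapse v hv Δrᶜ Δrᶜ (fun k => (μ k - lamr)⁻¹) (fun _ => 1)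
      rw [hPp, hR0, h, Finset.inter_self]
      exact Finset.sum_congr rfl fun j _ => by norm_num
    have cPrR0 : Pr * R0 = 0 := by
      have h := collapse v hv Δr Δrᶜ (fun _ => 1) (fun k => (μ k - lamr)⁻¹)
      rw [hPr1, hR0, h]
      simp
    have cR0Pr : R0 * Pr = 0 := by
      have h := collapse v hv Δrᶜ Δr (fun k => (μ k - lamr)⁻¹) (fun _ => 1)
      rw [hPr1, hR0, h, Finset.inter_comm]
      simp
    have cR0Sm : R0 * (S - lamr • 1) = Pp := by
      have h := collapse v hv Δrᶜ Finset.univ (fun k => (μ k - lamr)⁻¹) (fun k => μ k - lamr)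
      rw [hR0, hS1, h, Finset.inter_univ, hPp]
      refine Finset.sum_congr rfl fun j hj => ?_
      rw [inv_mul_cancel₀ (sub_ne_zero.mpr (hneΔc j hj))]
    have cSmPr : (S - lamr • 1) * Pr = 0 := by
      have h := collapse v hv Finset.univ Δr (fun k => μ k - lamr) (fun _ => 1)
      rw [hPr1, hS1, h, Finset.univ_inter]
      apply Finset.sum_eq_zero
      intro j hj
      rw [hmemΔ j hj]
      simp
    -- product identities in the v' basis
    have cQQ : P'r * P'r = P'r := by
      have h := collapse v' hv' Δr Δr (fun _ => 1) (fun _ => 1)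
      rw [hQ1, h, Finset.inter_self]
      exact Finset.sum_congr rfl fun j _ => by norm_num
    have cQpQp : Qp * Qp = Qp := by
      have h := collapse v' hv' Δrᶜ Δrᶜ (fun _ => 1) (fun _ => 1)
      rw [hQp, h, Finset.inter_self]
      exact Finset.sum_congr rfl fun j _ => by norm_num
    have cSEmQ : (S + E - lamr • 1) * P'r = N := by
      have h := collapse v' hv' Finset.univ Δr (fun k => μ' k - lamr) (fun _ => 1)
      rw [hQ1, hSE1, h, Finset.univ_inter, hN]
      exact Finset.sum_congr rfl fun j _ => by norm_num
    have cQN : P'r * N = N := by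
      have h := collapse v' hv' Δr Δr (fun _ => 1) (fun k => μ' k - lamr)
      rw [hQ1, hN, h, Finset.inter_self]
      exact Finset.sum_congr rfl fun j _ => by norm_num
    have cCdSEm : Cd * (S + E - lamr • 1) = Qp := by
      have h := collapse v' hv' Δrᶜ Finset.univ (fun k => (μ' k - lamr)⁻¹) (fun k => μ' k - lamr)
      rw [hCd, hSE1, h, Finset.inter_univ, hQp]
      refine Finset.sum_congr rfl fun j hj => ?_
      rw [inv_mul_cancel₀ (sub_ne_zero.mpr (hneΔc' j hj))]
    -- Cr = -R0
    have hCrR0 : Cr = -R0 := by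
      rw [hCr, hR0, ← Finset.sum_neg_distrib]
      refine Finset.sum_congr rfl fun j hj => ?_
      rw [← neg_smul]
      congr 1
      rw [show lamr - μ j = -(μ j - lamr) by ring, inv_neg]
    -- the two key off-diagonal operators
    obtain ⟨X, hX⟩ : ∃ M, M = Pp * P'r := ⟨_, rfl⟩
    obtain ⟨Y, hY⟩ : ∃ M, M = Qp * Pr := ⟨_, rfl⟩
    have cSEmCd : (S + E - lamr • 1) * Cd = Qp := by
      have h := collapse v' hv' Finset.univ Δrᶜ (fun k => μ' k - lamr) (fun k => (μ' k - lamr)⁻¹)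
      rw [hCd, hSE1, h, Finset.univ_inter, hQp]
      refine Finset.sum_congr rfl fun j hj => ?_
      rw [mul_inv_cancel₀ (sub_ne_zero.mpr (hneΔc' j hj))]
    have cSEmPr : (S + E - lamr • 1) * Pr = E * Pr := by
      have e : S + E - lamr • (1 : Matrix (Fin p) (Fin p) ℝ) = (S - lamr • 1) + E := by abel
      rw [e, Matrix.add_mul, cSmPr, zero_add]
    have hIY : Y = Cd * (E * Pr) := by
      rw [hY, ← cCdSEm, Matrix.mul_assoc, cSEmPr]
    have nY : ‖Y‖ ≤ ε / (g - ε) := by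
      rw [hIY]
      calc ‖Cd * (E * Pr)‖ ≤ ‖Cd‖ * (‖E‖ * ‖Pr‖) := nmul3 _ _ _
        _ ≤ (g - ε)⁻¹ * (ε * 1) := by gcongr
        _ = ε / (g - ε) := by field_simp
    -- the fixed point identity for X
    have cSmQ : (S - lamr • 1) * P'r = N - E * P'r := by
      have e : S - lamr • (1 : Matrix (Fin p) (Fin p) ℝ) = (S + E - lamr • 1) - E := by abel
      rw [e, Matrix.sub_mul, cSEmQ]
    have hX1 : X = R0 * N - R0 * (E * P'r) := by
      rw [hX, ← cR0Sm, Matrix.mul_assoc, cSmQ, Matrix.mul_sub]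
    have hX2 : R0 * X * N = R0 * N := by
      rw [hX, ← Matrix.mul_assoc, cR0Pp, Matrix.mul_assoc, cQN]
    have hX3 : X = R0 * X * N - R0 * (E * P'r) := by rw [hX2, hX1]
    have nX : ‖X‖ ≤ ε / (g - ε) := by
      have a1 : ‖R0 * X‖ ≤ g⁻¹ * ‖X‖ :=
        (nmul2 _ _).trans (mul_le_mul_of_nonneg_right nR0 (norm_nonneg _))
      have a2 : ‖R0 * X * N‖ ≤ g⁻¹ * ‖X‖ * ε :=
        (nmul2 _ _).trans (mul_le_mul a1 nN (norm_nonneg _) (by positivity))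
      have a3 : ‖R0 * (E * P'r)‖ ≤ g⁻¹ * ε := by
        calc ‖R0 * (E * P'r)‖ ≤ ‖R0‖ * (‖E‖ * ‖P'r‖) := nmul3 _ _ _
          _ ≤ g⁻¹ * (ε * 1) := by gcongr
          _ = g⁻¹ * ε := by ring
      have hXineq : ‖X‖ ≤ g⁻¹ * ‖X‖ * ε + g⁻¹ * ε := by
        calc ‖X‖ = ‖R0 * X * N - R0 * (E * P'r)‖ := by rw [← hX3]
          _ ≤ ‖R0 * X * N‖ + ‖R0 * (E * P'r)‖ := norm_sub_le _ _
          _ ≤ g⁻¹ * ‖X‖ * ε + g⁻¹ * ε := add_le_add a2 a3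
      have hc1 : g⁻¹ * ε < 1 := by
        rw [← div_eq_inv_mul]
        exact (div_lt_one hg).mpr (by linarith)
      have h5 : ‖X‖ * (1 - g⁻¹ * ε) ≤ g⁻¹ * ε := by nlinarith [hXineq]
      have h6 : ‖X‖ ≤ (g⁻¹ * ε) / (1 - g⁻¹ * ε) := by
        rw [le_div_iff₀ (by linarith)]
        linarith [h5]
      have h7 : (g⁻¹ * ε) / (1 - g⁻¹ * ε) = ε / (g - ε) := by
        rw [div_eq_div_iff (by linarith : (0:ℝ) < 1 - g⁻¹ * ε).ne' hgε.ne']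
        field_simp
      rw [h7] at h6
      exact h6
    -- transposes
    have tPr : Prᵀ = Pr := by rw [hPr1]; exact sumv_transpose v Δr _
    have tQ : P'rᵀ = P'r := by rw [hQ1]; exact sumv_transpose v' Δr _
    have tPp : Ppᵀ = Pp := by rw [hPp]; exact sumv_transpose v Δrᶜ _
    have tQp : Qpᵀ = Qp := by rw [hQp]; exact sumv_transpose v' Δrᶜ _
    have tCr : Crᵀ = Cr := by rw [hCr]; exact sumv_transpose v Δrᶜ _
    have hXt : Xᵀ = P'r * Pp := by rw [hX, Matrix.transpose_mul, tQ, tPp]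
    have hYt : Yᵀ = Pr * Qp := by rw [hY, Matrix.transpose_mul, tPr, tQp]
    -- abbreviate the perturbation remainder
    obtain ⟨T, hT⟩ : ∃ M, M = P'r - Pr - (Cr * E * Pr + Pr * E * Cr) := ⟨_, rfl⟩
    rw [← hT]
    have hTt : Tᵀ = T := by
      rw [hT, Matrix.transpose_sub, Matrix.transpose_sub, Matrix.transpose_add,
        Matrix.transpose_mul, Matrix.transpose_mul, Matrix.transpose_mul, Matrix.transpose_mul,
        tQ, tPr, tCr, hE.eq]
      noncomm_ring
    have hTalt : T = P'r - Pr + (R0 * (E * Pr) + Pr * (E * R0)) := by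
      rw [hT, hCrR0]
      noncomm_ring
    -- relation P'r * Pr = Pr - Y
    have hQPr : P'r * Pr = Pr - Y := by
      rw [hY, hQp1, Matrix.sub_mul, Matrix.one_mul]
      abel
    -- Pp * Cd identity
    have hPpCd : Pp * Cd = R0 * Qp - R0 * E * Cd := by
      have e1 : R0 * ((S + E - lamr • 1) * Cd) = R0 * Qp := by rw [cSEmCd]
      have e2 : R0 * ((S + E - lamr • 1) * Cd) = Pp * Cd + R0 * E * Cd := by
        have e3 : S + E - lamr • (1 : Matrix (Fin p) (Fin p) ℝ) = (S - lamr • 1) + E := by abel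
        rw [e3, Matrix.add_mul, Matrix.mul_add, ← Matrix.mul_assoc, cR0Sm, ← Matrix.mul_assoc]
      have e4 : Pp * Cd + R0 * E * Cd = R0 * Qp := e2.symm.trans e1
      rw [eq_sub_iff_add_eq]
      exact e4
    have cR0Q : R0 * P'r = R0 * X := by
      rw [hX, ← Matrix.mul_assoc, cR0Pp]
    -- blocks
    have hPpT : Pp * T = X + R0 * E * Pr := by
      rw [hTalt]
      simp only [Matrix.mul_add, Matrix.mul_sub, ← Matrix.mul_assoc]
      rw [cPpPr, cPpR0]
      simp [hX]
    have hB3 : Pp * T * Pr = R0 * X * (E * Pr) + R0 * (E * (Cd * (E * Pr))) := by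
      calc Pp * T * Pr = (X + R0 * E * Pr) * Pr := by rw [hPpT]
        _ = X * Pr + R0 * E * Pr := by
            rw [Matrix.add_mul, Matrix.mul_assoc (R0 * E) Pr Pr, cPrPr]
        _ = Pp * (Pr - Y) + R0 * E * Pr := by rw [hX, Matrix.mul_assoc, hQPr]
        _ = -(Pp * Cd * (E * Pr)) + R0 * E * Pr := by
            rw [Matrix.mul_sub, cPpPr, hIY, ← Matrix.mul_assoc Pp Cd, zero_sub]
        _ = -((R0 * Qp - R0 * E * Cd) * (E * Pr)) + R0 * E * Pr := by rw [hPpCd]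
        _ = R0 * X * (E * Pr) + R0 * (E * (Cd * (E * Pr))) := by
            rw [hQp1, Matrix.mul_sub R0, Matrix.mul_one, cR0Q]
            noncomm_ring
    have hB1 : Pp * T * Pp = X * Xᵀ := by
      rw [hXt]
      calc Pp * T * Pp = (X + R0 * E * Pr) * Pp := by rw [hPpT]
        _ = X * Pp + R0 * E * (Pr * Pp) := by
            rw [Matrix.add_mul, Matrix.mul_assoc (R0 * E) Pr Pp]
        _ = X * Pp := by rw [cPrPp, Matrix.mul_zero, add_zero]
        _ = X * (P'r * Pp) := by
            have cXQ : X * P'r = X := by rw [hX, Matrix.mul_assoc, cQQ]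
            rw [← Matrix.mul_assoc X P'r Pp, cXQ]
    have hPrT : Pr * T = Pr * P'r - Pr + Pr * E * R0 := by
      rw [hTalt]
      simp only [Matrix.mul_add, Matrix.mul_sub, ← Matrix.mul_assoc]
      rw [cPrPr, cPrR0]
      simp
    have hB2 : Pr * T * Pr = -(Yᵀ * Y) := by
      have e : Yᵀ * Y = Pr - Pr * P'r * Pr := by
        rw [hYt, hY, ← Matrix.mul_assoc, Matrix.mul_assoc Pr Qp Qp, cQpQp, hQp1]
        calc (Pr * (1 - P'r)) * Pr = Pr * Pr - Pr * P'r * Pr := by noncomm_ring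
          _ = Pr - Pr * P'r * Pr := by rw [cPrPr]
      have e2 : Pr * T * Pr = Pr * P'r * Pr - Pr := by
        calc Pr * T * Pr = (Pr * P'r - Pr + Pr * E * R0) * Pr := by rw [hPrT]
          _ = Pr * P'r * Pr - Pr * Pr + Pr * E * (R0 * Pr) := by noncomm_ring
          _ = Pr * P'r * Pr - Pr := by rw [cPrPr, cR0Pr, Matrix.mul_zero, add_zero]
      rw [e2, e]
      abel
    have hB4 : (Pp * T * Pr)ᵀ = Pr * T * Pp := by
      rw [Matrix.transpose_mul, Matrix.transpose_mul, hTt, tPr, tPp, ← Matrix.mul_assoc]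
    -- assembly
    have hsum1 : Pr + Pp = 1 := by rw [hPp1]; abel
    have hassemble : T = Pr * T * Pr + Pr * T * Pp + Pp * T * Pr + Pp * T * Pp := by
      calc T = (Pr + Pp) * T * (Pr + Pp) := by rw [hsum1, Matrix.one_mul, Matrix.mul_one]
        _ = Pr * T * Pr + Pr * T * Pp + Pp * T * Pr + Pp * T * Pp := by noncomm_ring
    -- norms of blocks
    have nEP : ‖E * Pr‖ ≤ ε := by
      calc ‖E * Pr‖ ≤ ‖E‖ * ‖Pr‖ := nmul2 _ _
        _ ≤ ε * 1 := by gcongr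
        _ = ε := by ring
    have nB1 : ‖Pp * T * Pp‖ ≤ (ε / (g - ε)) * (ε / (g - ε)) := by
      rw [hB1]
      calc ‖X * Xᵀ‖ ≤ ‖X‖ * ‖Xᵀ‖ := nmul2 _ _
        _ = ‖X‖ * ‖X‖ := by rw [l2norm_transpose]
        _ ≤ (ε / (g - ε)) * (ε / (g - ε)) :=
            mul_le_mul nX nX (norm_nonneg _) (by positivity)
    have nB2 : ‖Pr * T * Pr‖ ≤ (ε / (g - ε)) * (ε / (g - ε)) := by
      rw [hB2, norm_neg]
      calc ‖Yᵀ * Y‖ ≤ ‖Yᵀ‖ * ‖Y‖ := nmul2 _ _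
        _ = ‖Y‖ * ‖Y‖ := by rw [l2norm_transpose]
        _ ≤ (ε / (g - ε)) * (ε / (g - ε)) :=
            mul_le_mul nY nY (norm_nonneg _) (by positivity)
    have nB3 : ‖Pp * T * Pr‖ ≤ g⁻¹ * (ε / (g - ε)) * ε + g⁻¹ * (ε * ((g - ε)⁻¹ * ε)) := by
      rw [hB3]
      have a1 : ‖R0 * X‖ ≤ g⁻¹ * (ε / (g - ε)) :=
        (nmul2 _ _).trans (mul_le_mul nR0 nX (norm_nonneg _) hginv0)
      have term1 : ‖R0 * X * (E * Pr)‖ ≤ g⁻¹ * (ε / (g - ε)) * ε :=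
        (nmul2 _ _).trans (mul_le_mul a1 nEP (norm_nonneg _) (by positivity))
      have a2 : ‖Cd * (E * Pr)‖ ≤ (g - ε)⁻¹ * ε :=
        (nmul2 _ _).trans (mul_le_mul nCd nEP (norm_nonneg _) hgε0)
      have a3 : ‖E * (Cd * (E * Pr))‖ ≤ ε * ((g - ε)⁻¹ * ε) :=
        (nmul2 _ _).trans (mul_le_mul le_rfl a2 (norm_nonneg _) hε0)
      have term2 : ‖R0 * (E * (Cd * (E * Pr)))‖ ≤ g⁻¹ * (ε * ((g - ε)⁻¹ * ε)) :=
        (nmul2 _ _).trans (mul_le_mul nR0 a3 (norm_nonneg _) hginv0)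
      exact (norm_add_le _ _).trans (add_le_add term1 term2)
    have nB4 : ‖Pr * T * Pp‖ ≤ g⁻¹ * (ε / (g - ε)) * ε + g⁻¹ * (ε * ((g - ε)⁻¹ * ε)) := by
      rw [← hB4, l2norm_transpose]
      exact nB3
    have ntot : ‖T‖ ≤ 2 * ((ε / (g - ε)) * (ε / (g - ε)))
        + 2 * (g⁻¹ * (ε / (g - ε)) * ε + g⁻¹ * (ε * ((g - ε)⁻¹ * ε))) := by
      calc ‖T‖ = ‖Pr * T * Pr + Pr * T * Pp + Pp * T * Pr + Pp * T * Pp‖ := by rw [← hassemble]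
        _ ≤ ‖Pr * T * Pr‖ + ‖Pr * T * Pp‖ + ‖Pp * T * Pr‖ + ‖Pp * T * Pp‖ := by
            refine (norm_add_le _ _).trans ?_
            gcongr
            refine (norm_add_le _ _).trans ?_
            gcongr
            exact norm_add_le _ _
        _ ≤ _ := by linarith [nB1, nB2, nB3, nB4]
    -- scalar endgame
    have hAeq : g⁻¹ * (ε * ((g - ε)⁻¹ * ε)) = g⁻¹ * (ε / (g - ε)) * ε := by
      field_simp
    rw [hAeq] at ntot
    have hA0 : 0 ≤ ε / (g - ε) := by positivity
    have ht0 : 0 ≤ ε / g := by positivity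
    have hmix : g⁻¹ * (ε / (g - ε)) * ε = (ε / g) * (ε / (g - ε)) := by
      field_simp
    rw [hmix] at ntot
    rcases le_or_gt ε ((9/20) * g) with hsub | hsub
    · -- truly small perturbation
      have hA : ε / (g - ε) ≤ (20 * ε) / (11 * g) := by
        rw [div_le_div_iff₀ hgε (by positivity)]
        nlinarith [mul_nonneg hε0 (by linarith : (0:ℝ) ≤ 9 * g - 20 * ε)]
      have hA' : ε / (g - ε) ≤ (20/11) * (ε / g) := by
        calc ε / (g - ε) ≤ (20 * ε) / (11 * g) := hA
          _ = (20/11) * (ε / g) := by ring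
      have final : 2 * ((ε / (g - ε)) * (ε / (g - ε)))
          + 2 * ((ε / g) * (ε / (g - ε)) + (ε / g) * (ε / (g - ε))) ≤ 14 * (ε / g) ^ 2 := by
        nlinarith [mul_le_mul hA' hA' hA0 (by positivity), mul_le_mul_of_nonneg_left hA' ht0,
          sq_nonneg (ε / g)]
      linarith [ntot, final]
    · -- medium perturbation
      have hdiff : P'r - Pr = P'r * Pp - Y := by
        rw [hY, hPp1, hQp1]
        noncomm_ring
      have nQP : ‖P'r * Pp‖ = ‖X‖ := by rw [← hXt, l2norm_transpose]
      have ndiff : ‖P'r - Pr‖ ≤ ε / (g - ε) + ε / (g - ε) := by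
        rw [hdiff]
        refine (norm_sub_le _ _).trans ?_
        rw [nQP]
        exact add_le_add nX nY
      have ntot2 : ‖T‖ ≤ 2 * (ε / (g - ε)) + 2 * (g⁻¹ * ε) := by
        calc ‖T‖ ≤ ‖P'r - Pr‖ + ‖Cr * E * Pr + Pr * E * Cr‖ := by
              rw [hT]; exact norm_sub_le _ _
          _ ≤ (ε / (g - ε) + ε / (g - ε)) + (g⁻¹ * ε + g⁻¹ * ε) :=
              add_le_add ndiff ((norm_add_le _ _).trans (add_le_add nCrE nPECr))
          _ = 2 * (ε / (g - ε)) + 2 * (g⁻¹ * ε) := by ring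
      have hkey : 7 * ε^2 - 8 * g * ε + 2 * g^2 ≤ 0 := by
        nlinarith [mul_nonneg (by linarith : (0:ℝ) ≤ ε - (9/20) * g)
            (by linarith : (0:ℝ) ≤ (3/4) * g - ε),
          mul_nonneg hg.le (by linarith : (0:ℝ) ≤ (3/4) * g - ε), sq_nonneg g]
      have final2 : 2 * (ε / (g - ε)) + 2 * (g⁻¹ * ε) ≤ 14 * (ε / g) ^ 2 := by
        rw [← sub_nonneg]
        have expand : 14 * (ε / g) ^ 2 - (2 * (ε / (g - ε)) + 2 * (g⁻¹ * ε))
            = (2 * ε) * (-(7 * ε^2 - 8 * g * ε + 2 * g^2)) / (g^2 * (g - ε)) := by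
          field_simp
          ring
        rw [expand]
        apply div_nonneg _ (by positivity)
        apply mul_nonneg (by linarith)
        linarith
      linarith [ntot2, final2]
end

section
/- Second-order perturbation expansion: with the notation of the projector perturbation decomposition, S_r(E) = Z_r(E) + R_r(E), where Z_r(E) = P_r E C_r E C_r + C_r E C_r E P_r + C_r E P_r E C_r − P_r E P_r E C_r^2 − P_r E C_r^2 E P_r − C_r^2 E P_r E P_r, the matrix R_r(E) is symmetric, and ‖R_r(E)‖ ≤ 72 (‖E‖/g̅_r)^3. -/
open Matrix Finset
open scoped Matrix.Norms.L2Operator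

section SopeHelpers

variable {p : ℕ}

lemma sope_euc_norm (x : Fin p → ℝ) :
    ‖(WithLp.equiv 2 (Fin p → ℝ)).symm x‖ = Real.sqrt (x ⬝ᵥ x) := by
  rw [EuclideanSpace.norm_eq]
  congr 1
  simp [dotProduct, Real.norm_eq_abs, sq_abs, pow_two]

lemma sope_dot_self_nonneg (x : Fin p → ℝ) : 0 ≤ x ⬝ᵥ x :=
  Finset.sum_nonneg fun _ _ => mul_self_nonneg _

lemma sope_opNorm_le_of_dot (A : Matrix (Fin p) (Fin p) ℝ) {m : ℝ} (hm : 0 ≤ m)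
    (h : ∀ x, (A *ᵥ x) ⬝ᵥ (A *ᵥ x) ≤ m ^ 2 * (x ⬝ᵥ x)) : ‖A‖ ≤ m := by
  rw [Matrix.l2_opNorm_def]
  apply ContinuousLinearMap.opNorm_le_bound _ hm
  intro x
  rw [LinearEquiv.trans_apply]
  have h1 : (LinearMap.toContinuousLinearMap (Matrix.toEuclideanLin A)) x
      = (WithLp.equiv 2 (Fin p → ℝ)).symm (A *ᵥ ((WithLp.equiv 2 (Fin p → ℝ)) x)) := rfl
  have h2 : x = (WithLp.equiv 2 (Fin p → ℝ)).symm ((WithLp.equiv 2 (Fin p → ℝ)) x) := rfl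
  rw [h1, sope_euc_norm]
  conv_rhs => rw [h2, sope_euc_norm]
  set y := (WithLp.equiv 2 (Fin p → ℝ)) x
  calc Real.sqrt ((A *ᵥ y) ⬝ᵥ (A *ᵥ y)) ≤ Real.sqrt (m ^ 2 * (y ⬝ᵥ y)) :=
        Real.sqrt_le_sqrt (h y)
    _ = m * Real.sqrt (y ⬝ᵥ y) := by
        rw [Real.sqrt_mul (sq_nonneg m), Real.sqrt_sq hm]

lemma sope_norm_mulVec_dot (A : Matrix (Fin p) (Fin p) ℝ) (x : Fin p → ℝ) :
    (A *ᵥ x) ⬝ᵥ (A *ᵥ x) ≤ ‖A‖ ^ 2 * (x ⬝ᵥ x) := by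
  have h := Matrix.l2_opNorm_mulVec A ((WithLp.equiv 2 (Fin p → ℝ)).symm x)
  have e1 : ‖((EuclideanSpace.equiv (Fin p) ℝ).symm <|
      A *ᵥ ((WithLp.equiv 2 (Fin p → ℝ)).symm x))‖ = Real.sqrt ((A *ᵥ x) ⬝ᵥ (A *ᵥ x)) :=
    sope_euc_norm _
  have e2 : ‖((WithLp.equiv 2 (Fin p → ℝ)).symm x)‖ = Real.sqrt (x ⬝ᵥ x) := sope_euc_norm x
  rw [e1, e2] at h
  have h3 : Real.sqrt ((A *ᵥ x) ⬝ᵥ (A *ᵥ x)) ^ 2 ≤ (‖A‖ * Real.sqrt (x ⬝ᵥ x)) ^ 2 := by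
    apply pow_le_pow_left₀ (Real.sqrt_nonneg _) h
  rw [Real.sq_sqrt (sope_dot_self_nonneg _)] at h3
  calc (A *ᵥ x) ⬝ᵥ (A *ᵥ x) ≤ (‖A‖ * Real.sqrt (x ⬝ᵥ x)) ^ 2 := h3
    _ = ‖A‖ ^ 2 * (x ⬝ᵥ x) := by
        rw [mul_pow, Real.sq_sqrt (sope_dot_self_nonneg _)]

lemma sope_abs_dot_le (x y : Fin p → ℝ) :
    |x ⬝ᵥ y| ≤ Real.sqrt (x ⬝ᵥ x) * Real.sqrt (y ⬝ᵥ y) := by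
  have h := abs_real_inner_le_norm ((WithLp.equiv 2 (Fin p → ℝ)).symm x)
    ((WithLp.equiv 2 (Fin p → ℝ)).symm y)
  rw [sope_euc_norm, sope_euc_norm] at h
  have hi : (inner ℝ ((WithLp.equiv 2 (Fin p → ℝ)).symm x)
      ((WithLp.equiv 2 (Fin p → ℝ)).symm y) : ℝ) = x ⬝ᵥ y := by
    rw [PiLp.inner_apply]
    simp [dotProduct, mul_comm]
  rwa [hi] at h

lemma sope_dot_mulVec_le (A : Matrix (Fin p) (Fin p) ℝ) (x : Fin p → ℝ) :
    x ⬝ᵥ (A *ᵥ x) ≤ ‖A‖ * (x ⬝ᵥ x) := by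
  calc x ⬝ᵥ (A *ᵥ x) ≤ |x ⬝ᵥ (A *ᵥ x)| := le_abs_self _
    _ ≤ Real.sqrt (x ⬝ᵥ x) * Real.sqrt ((A *ᵥ x) ⬝ᵥ (A *ᵥ x)) := sope_abs_dot_le _ _
    _ ≤ Real.sqrt (x ⬝ᵥ x) * Real.sqrt (‖A‖ ^ 2 * (x ⬝ᵥ x)) := by
        apply mul_le_mul_of_nonneg_left (Real.sqrt_le_sqrt (sope_norm_mulVec_dot A x))
          (Real.sqrt_nonneg _)
    _ = ‖A‖ * (Real.sqrt (x ⬝ᵥ x) * Real.sqrt (x ⬝ᵥ x)) := by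
        rw [Real.sqrt_mul (sq_nonneg _), Real.sqrt_sq (norm_nonneg _)]; ring
    _ = ‖A‖ * (x ⬝ᵥ x) := by rw [Real.mul_self_sqrt (sope_dot_self_nonneg x)]

lemma sope_nb2 {A B : Matrix (Fin p) (Fin p) ℝ} {a b : ℝ} (ha : ‖A‖ ≤ a) (hb : ‖B‖ ≤ b) :
    ‖A * B‖ ≤ a * b :=
  le_trans (norm_mul_le _ _)
    (mul_le_mul ha hb (norm_nonneg _) (le_trans (norm_nonneg A) ha))

section Frame
variable (U : Matrix (Fin p) (Fin p) ℝ)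

lemma sope_frame_sum (c : Fin p → ℝ) :
    Uᵀ * Matrix.diagonal c * U = ∑ j, c j • Matrix.vecMulVec (U j) (U j) := by
  ext i k
  simp only [Matrix.mul_apply, Matrix.diagonal_apply, Matrix.transpose_apply,
    Finset.sum_apply, Matrix.sum_apply, Matrix.smul_apply, Matrix.vecMulVec_apply,
    smul_eq_mul]
  apply Finset.sum_congr rfl
  intro j _
  rw [Finset.sum_eq_single j]
  · simp; ring
  · intro b _ hb; simp [hb]
  · simp

lemma sope_frame_mul (hU : U * Uᵀ = 1) (c d : Fin p → ℝ) :
    (Uᵀ * Matrix.diagonal c * U) * (Uᵀ * Matrix.diagonal d * U)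
      = Uᵀ * Matrix.diagonal (fun j => c j * d j) * U := by
  calc (Uᵀ * Matrix.diagonal c * U) * (Uᵀ * Matrix.diagonal d * U)
      = Uᵀ * Matrix.diagonal c * (U * Uᵀ) * Matrix.diagonal d * U := by
        simp only [Matrix.mul_assoc]
    _ = Uᵀ * (Matrix.diagonal c * Matrix.diagonal d) * U := by
        rw [hU]; simp only [Matrix.mul_one, Matrix.mul_assoc]
    _ = Uᵀ * Matrix.diagonal (fun j => c j * d j) * U := by
        rw [Matrix.diagonal_mul_diagonal]

lemma sope_frame_one (hU : U * Uᵀ = 1) :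
    Uᵀ * Matrix.diagonal (fun _ => (1:ℝ)) * U = 1 := by
  have : Matrix.diagonal (fun _ => (1:ℝ)) = (1 : Matrix (Fin p) (Fin p) ℝ) :=
    Matrix.diagonal_one
  rw [this, Matrix.mul_one, mul_eq_one_comm.mp hU]

lemma sope_frame_zero :
    Uᵀ * Matrix.diagonal (fun _ => (0:ℝ)) * U = 0 := by
  have : Matrix.diagonal (fun _ => (0:ℝ)) = (0 : Matrix (Fin p) (Fin p) ℝ) :=
    Matrix.diagonal_zero
  rw [this, Matrix.mul_zero, Matrix.zero_mul]

lemma sope_frame_sub (c d : Fin p → ℝ) :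
    Uᵀ * Matrix.diagonal (fun j => c j - d j) * U
      = Uᵀ * Matrix.diagonal c * U - Uᵀ * Matrix.diagonal d * U := by
  have : Matrix.diagonal (fun j => c j - d j)
      = Matrix.diagonal c - Matrix.diagonal d := by
    ext i k
    by_cases h : i = k <;> simp [Matrix.diagonal_apply, h]
  rw [this, Matrix.mul_sub, Matrix.sub_mul]

lemma sope_frame_ext (c d : Fin p → ℝ) (h : ∀ j, c j = d j) :
    Uᵀ * Matrix.diagonal c * U = Uᵀ * Matrix.diagonal d * U := by
  rw [funext h]

lemma sope_frame_shift (hU : U * Uᵀ = 1) (c : Fin p → ℝ) (t : ℝ) :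
    Uᵀ * Matrix.diagonal (fun j => c j - t) * U
      = Uᵀ * Matrix.diagonal c * U - t • (1 : Matrix (Fin p) (Fin p) ℝ) := by
  have hd : Matrix.diagonal (fun j => c j - t)
      = Matrix.diagonal c - t • (1 : Matrix (Fin p) (Fin p) ℝ) := by
    ext i k
    by_cases h : i = k <;> simp [Matrix.diagonal_apply, h, Matrix.one_apply]
  rw [hd, Matrix.mul_sub, Matrix.sub_mul]
  congr 1
  rw [Matrix.mul_smul, Matrix.smul_mul, Matrix.mul_one, mul_eq_one_comm.mp hU]

lemma sope_frame_dot (c : Fin p → ℝ) (x : Fin p → ℝ) :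
    x ⬝ᵥ ((Uᵀ * Matrix.diagonal c * U) *ᵥ x) = ∑ j, c j * ((U *ᵥ x) j)^2 := by
  rw [← Matrix.mulVec_mulVec, ← Matrix.mulVec_mulVec]
  rw [Matrix.dotProduct_mulVec, Matrix.vecMul_transpose]
  simp [Matrix.mulVec_diagonal, dotProduct]
  apply Finset.sum_congr rfl
  intro j _
  ring

lemma sope_frame_parseval (hU : U * Uᵀ = 1) (x : Fin p → ℝ) :
    x ⬝ᵥ x = ∑ j, ((U *ᵥ x) j)^2 := by
  have h := sope_frame_dot U (fun _ => (1:ℝ)) x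
  simp only [Matrix.diagonal_one, Matrix.mul_one, one_mul] at h
  rw [mul_eq_one_comm.mp hU] at h
  simpa using h

lemma sope_frame_transpose (c : Fin p → ℝ) :
    (Uᵀ * Matrix.diagonal c * U)ᵀ = Uᵀ * Matrix.diagonal c * U := by
  rw [Matrix.transpose_mul, Matrix.transpose_mul, Matrix.transpose_transpose,
    Matrix.diagonal_transpose, Matrix.mul_assoc]

lemma sope_frame_norm_le (hU : U * Uᵀ = 1) (c : Fin p → ℝ)
    {m : ℝ} (hm : 0 ≤ m) (hc : ∀ j, |c j| ≤ m) :
    ‖Uᵀ * Matrix.diagonal c * U‖ ≤ m := by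
  apply sope_opNorm_le_of_dot _ hm
  intro x
  set z := U *ᵥ x with hz
  set w := Matrix.diagonal c *ᵥ z with hw
  have hFx : (Uᵀ * Matrix.diagonal c * U) *ᵥ x = Uᵀ *ᵥ w := by
    rw [← Matrix.mulVec_mulVec, ← Matrix.mulVec_mulVec]
  rw [hFx]
  have key : (Uᵀ *ᵥ w) ⬝ᵥ (Uᵀ *ᵥ w) = w ⬝ᵥ w := by
    rw [Matrix.dotProduct_mulVec, Matrix.vecMul_transpose, Matrix.mulVec_mulVec, hU,
      Matrix.one_mulVec]
  rw [key]
  have hww : w ⬝ᵥ w = ∑ j, (c j * z j)^2 := by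
    simp [hw, dotProduct, Matrix.mulVec_diagonal]
    apply Finset.sum_congr rfl
    intro j _
    ring
  rw [hww, sope_frame_parseval U hU x]
  rw [Finset.mul_sum]
  apply Finset.sum_le_sum
  intro j _
  have : (c j * z j)^2 = (c j)^2 * (z j)^2 := by ring
  rw [this]
  apply mul_le_mul_of_nonneg_right _ (sq_nonneg _)
  calc (c j)^2 = |c j|^2 := (sq_abs _).symm
    _ ≤ m^2 := by apply pow_le_pow_left₀ (abs_nonneg _) (hc j)

lemma sope_frame_eig (hU : U * Uᵀ = 1)
    (M : Matrix (Fin p) (Fin p) ℝ) (μ : Fin p → ℝ)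
    (h : ∀ j, M *ᵥ U j = μ j • U j) : M = Uᵀ * Matrix.diagonal μ * U := by
  have h1 : M * Uᵀ = Uᵀ * Matrix.diagonal μ := by
    ext a j
    have h2 := congrFun (h j) a
    simp only [Matrix.mulVec, dotProduct, Pi.smul_apply, smul_eq_mul] at h2
    simp only [Matrix.mul_apply, Matrix.transpose_apply, Matrix.diagonal_apply,
      mul_ite, mul_zero, Finset.sum_ite_eq', Finset.mem_univ, if_true]
    rw [h2, mul_comm]
  calc M = M * (Uᵀ * U) := by rw [mul_eq_one_comm.mp hU, Matrix.mul_one]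
    _ = (M * Uᵀ) * U := by rw [Matrix.mul_assoc]
    _ = Uᵀ * Matrix.diagonal μ * U := by rw [h1]

end Frame

lemma sope_weyl (M E : Matrix (Fin p) (Fin p) ℝ) (μ μ' : Fin p → ℝ)
    (U W : Matrix (Fin p) (Fin p) ℝ) (hU : U * Uᵀ = 1) (hW : W * Wᵀ = 1)
    (hM : ∀ j, M *ᵥ U j = μ j • U j) (hM' : ∀ j, (M + E) *ᵥ W j = μ' j • W j)
    (hmono : Antitone μ) (hmono' : Antitone μ') (k : Fin p) :
    μ' k ≤ μ k + ‖E‖ := by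
  classical
  set Y : Matrix (Fin p) (Fin p) ℝ :=
    Matrix.of (fun i => if (i : Fin p) < k then U i else if k < i then W i else 0) with hY
  have hrow : Y k = 0 := by
    show (fun i : Fin p => if i < k then U i else if k < i then W i else 0) k = 0
    simp
  have hdet : Y.det = 0 := by
    apply Matrix.det_eq_zero_of_row_eq_zero k
    intro j; rw [hrow]; rfl
  obtain ⟨x, hx0, hxz⟩ := (Matrix.exists_mulVec_eq_zero_iff).mpr hdet
  have hxx : 0 < x ⬝ᵥ x := by
    obtain ⟨i, hi⟩ := Function.ne_iff.mp hx0
    apply Finset.sum_pos' (fun i _ => mul_self_nonneg (x i))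
    exact ⟨i, Finset.mem_univ i, by simp at hi ⊢; positivity⟩
  have hUcoord : ∀ i, i < k → (U *ᵥ x) i = 0 := by
    intro i hik
    have := congrFun hxz i
    simpa [hY, Matrix.mulVec, hik, Matrix.of_apply] using this
  have hWcoord : ∀ i, k < i → (W *ᵥ x) i = 0 := by
    intro i hik
    have := congrFun hxz i
    simp [hY, Matrix.mulVec, hik, Matrix.of_apply, not_lt_of_gt hik] at this
    simpa [Matrix.mulVec, hik, not_lt.mpr (le_of_lt hik)] using this
  have hMrep : M = Uᵀ * Matrix.diagonal μ * U := sope_frame_eig U hU M μ hM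
  have hM'rep : M + E = Wᵀ * Matrix.diagonal μ' * W := sope_frame_eig W hW _ μ' hM'
  have e1 : x ⬝ᵥ (M *ᵥ x) = ∑ j, μ j * ((U *ᵥ x) j)^2 := by
    conv_lhs => rw [hMrep]
    exact sope_frame_dot U μ x
  have e2 : x ⬝ᵥ ((M + E) *ᵥ x) = ∑ j, μ' j * ((W *ᵥ x) j)^2 := by
    conv_lhs => rw [hM'rep]
    exact sope_frame_dot W μ' x
  have hble : x ⬝ᵥ (M *ᵥ x) ≤ μ k * (x ⬝ᵥ x) := by
    rw [e1, sope_frame_parseval U hU x, Finset.mul_sum]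
    apply Finset.sum_le_sum
    intro j _
    by_cases hj : j < k
    · rw [hUcoord j hj]
      simp
    · push_neg at hj
      exact mul_le_mul_of_nonneg_right (hmono hj) (sq_nonneg _)
  have hble' : μ' k * (x ⬝ᵥ x) ≤ x ⬝ᵥ ((M + E) *ᵥ x) := by
    rw [e2, sope_frame_parseval W hW x, Finset.mul_sum]
    apply Finset.sum_le_sum
    intro j _
    by_cases hj : k < j
    · rw [hWcoord j hj]
      simp
    · push_neg at hj
      exact mul_le_mul_of_nonneg_right (hmono' hj) (sq_nonneg _)
  have hEb : x ⬝ᵥ (E *ᵥ x) ≤ ‖E‖ * (x ⬝ᵥ x) := sope_dot_mulVec_le E x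
  have hsplit : x ⬝ᵥ ((M + E) *ᵥ x) = x ⬝ᵥ (M *ᵥ x) + x ⬝ᵥ (E *ᵥ x) := by
    rw [Matrix.add_mulVec, dotProduct_add]
  have hfin : μ' k * (x ⬝ᵥ x) ≤ (μ k + ‖E‖) * (x ⬝ᵥ x) := by
    rw [add_mul]
    calc μ' k * (x ⬝ᵥ x) ≤ x ⬝ᵥ ((M + E) *ᵥ x) := hble'
      _ = x ⬝ᵥ (M *ᵥ x) + x ⬝ᵥ (E *ᵥ x) := hsplit
      _ ≤ μ k * (x ⬝ᵥ x) + ‖E‖ * (x ⬝ᵥ x) := add_le_add hble hEb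
  exact le_of_mul_le_mul_right (by linarith [hfin]) hxx

lemma sope_cubic1 (x : ℝ) (hx : 2/5 ≤ x) : 2 + 2*x + 6*x^2 ≤ 72*x^3 := by
  nlinarith [sq_nonneg (x - 2/5), sq_nonneg x,
    mul_nonneg (sq_nonneg (x - 2/5)) (by linarith : (0:ℝ) ≤ x)]

end SopeHelpers
/-- second-order perturbation expansion `S_r(E) = Z_r(E) + R_r(E)` where
`S_r(E) = P̃_r - P_r - L_r(E)`,
`Z_r(E) = P_r E C_r E C_r + C_r E C_r E P_r + C_r E P_r E C_r
          - P_r E P_r E C_r² - P_r E C_r² E P_r - C_r² E P_r E P_r`,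
and the third-order remainder `R_r(E)` is symmetric with `‖R_r(E)‖ ≤ 72 (‖E‖/ḡ_r)³`. -/
theorem second_order_perturbation_expansion {p : ℕ}
    (S E : Matrix (Fin p) (Fin p) ℝ) (hS : S.IsSymm) (hSpsd : S.PosSemidef) (hE : E.IsSymm)
    (μ μ' : Fin p → ℝ) (v v' : Fin p → Fin p → ℝ)
    (hv : ∀ i j, v i ⬝ᵥ v j = if i = j then (1 : ℝ) else 0)
    (hv' : ∀ i j, v' i ⬝ᵥ v' j = if i = j then (1 : ℝ) else 0)
    (heig : ∀ j, S.mulVec (v j) = μ j • v j)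
    (heig' : ∀ j, (S + E).mulVec (v' j) = μ' j • v' j)
    (hmono : Antitone μ) (hmono' : Antitone μ')
    (lamr : ℝ) (hlamr : ∃ j, μ j = lamr)
    (Δr : Finset (Fin p)) (hΔ : ∀ j, j ∈ Δr ↔ μ j = lamr)
    (g : ℝ) (hg : 0 < g) (hgap : ∀ j, μ j ≠ lamr → g ≤ |μ j - lamr|)
    (Pr P'r Cr Sr Zr Rr : Matrix (Fin p) (Fin p) ℝ)
    (hPr : Pr = ∑ j ∈ Δr, Matrix.vecMulVec (v j) (v j))
    (hP'r : P'r = ∑ j ∈ Δr, Matrix.vecMulVec (v' j) (v' j))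
    (hCr : Cr = ∑ j ∈ Δrᶜ, (lamr - μ j)⁻¹ • Matrix.vecMulVec (v j) (v j))
    (hSr : Sr = P'r - Pr - (Cr * E * Pr + Pr * E * Cr))
    (hZr : Zr = Pr * E * Cr * E * Cr + Cr * E * Cr * E * Pr + Cr * E * Pr * E * Cr
            - Pr * E * Pr * E * Cr ^ 2 - Pr * E * Cr ^ 2 * E * Pr - Cr ^ 2 * E * Pr * E * Pr)
    (hRr : Rr = Sr - Zr) :
    Sr = Zr + Rr ∧ Rr.IsSymm ∧ ‖Rr‖ ≤ 72 * (‖E‖ / g) ^ 3 := by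
  classical
  have hg0 : g ≠ 0 := ne_of_gt hg
  set U : Matrix (Fin p) (Fin p) ℝ := Matrix.of v with hUdef
  set W : Matrix (Fin p) (Fin p) ℝ := Matrix.of v' with hWdef
  have hUU : U * Uᵀ = 1 := by
    ext i j
    simpa [hUdef, Matrix.mul_apply, dotProduct, Matrix.one_apply] using hv i j
  have hWW : W * Wᵀ = 1 := by
    ext i j
    simpa [hWdef, Matrix.mul_apply, dotProduct, Matrix.one_apply] using hv' i j
  set χ : Fin p → ℝ := fun j => if j ∈ Δr then 1 else 0 with hχ
  set γ : Fin p → ℝ := fun j => if j ∈ Δr then 0 else (lamr - μ j)⁻¹ with hγ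
  set γ' : Fin p → ℝ := fun j => if j ∈ Δr then 0 else (lamr - μ' j)⁻¹ with hγ'
  set β : Fin p → ℝ := fun j => if j ∈ Δr then μ' j - lamr else 0 with hβ
  set α : Fin p → ℝ := fun j => μ j - lamr with hα
  set α' : Fin p → ℝ := fun j => μ' j - lamr with hα'
  have hUrow : ∀ j, U j = v j := fun j => rfl
  have hWrow : ∀ j, W j = v' j := fun j => rfl
  -- identifications
  have hPrF : Pr = Uᵀ * Matrix.diagonal χ * U := by
    rw [hPr, sope_frame_sum U χ]
    calc ∑ j ∈ Δr, Matrix.vecMulVec (v j) (v j)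
        = ∑ j ∈ Finset.univ ∩ Δr, Matrix.vecMulVec (v j) (v j) := by rw [Finset.univ_inter]
      _ = ∑ j, (if j ∈ Δr then Matrix.vecMulVec (v j) (v j) else 0) :=
          (Finset.sum_ite_mem _ _ _).symm
      _ = ∑ j, χ j • Matrix.vecMulVec (U j) (U j) := by
          apply Finset.sum_congr rfl
          intro j _
          by_cases h : j ∈ Δr <;> simp [hχ, h, hUrow]
  have hP'rF : P'r = Wᵀ * Matrix.diagonal χ * W := by
    rw [hP'r, sope_frame_sum W χ]
    calc ∑ j ∈ Δr, Matrix.vecMulVec (v' j) (v' j)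
        = ∑ j ∈ Finset.univ ∩ Δr, Matrix.vecMulVec (v' j) (v' j) := by rw [Finset.univ_inter]
      _ = ∑ j, (if j ∈ Δr then Matrix.vecMulVec (v' j) (v' j) else 0) :=
          (Finset.sum_ite_mem _ _ _).symm
      _ = ∑ j, χ j • Matrix.vecMulVec (W j) (W j) := by
          apply Finset.sum_congr rfl
          intro j _
          by_cases h : j ∈ Δr <;> simp [hχ, h, hWrow]
  have hCrF : Cr = Uᵀ * Matrix.diagonal γ * U := by
    rw [hCr, sope_frame_sum U γ]
    calc ∑ j ∈ Δrᶜ, (lamr - μ j)⁻¹ • Matrix.vecMulVec (v j) (v j)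
        = ∑ j ∈ Finset.univ ∩ Δrᶜ, (lamr - μ j)⁻¹ • Matrix.vecMulVec (v j) (v j) := by
          rw [Finset.univ_inter]
      _ = ∑ j, (if j ∈ Δrᶜ then (lamr - μ j)⁻¹ • Matrix.vecMulVec (v j) (v j) else 0) :=
          (Finset.sum_ite_mem _ _ _).symm
      _ = ∑ j, γ j • Matrix.vecMulVec (U j) (U j) := by
          apply Finset.sum_congr rfl
          intro j _
          by_cases h : j ∈ Δr <;> simp [hγ, h, Finset.mem_compl, hUrow]
  -- representations
  have hSrep : S = Uᵀ * Matrix.diagonal μ * U :=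
    sope_frame_eig U hUU S μ (by intro j; rw [hUrow]; exact heig j)
  have hSErep : S + E = Wᵀ * Matrix.diagonal μ' * W :=
    sope_frame_eig W hWW _ μ' (by intro j; rw [hWrow]; exact heig' j)
  set A : Matrix (Fin p) (Fin p) ℝ := Uᵀ * Matrix.diagonal α * U with hA
  set A' : Matrix (Fin p) (Fin p) ℝ := Wᵀ * Matrix.diagonal α' * W with hA'
  set C' : Matrix (Fin p) (Fin p) ℝ := Wᵀ * Matrix.diagonal γ' * W with hC'def
  set B : Matrix (Fin p) (Fin p) ℝ := Wᵀ * Matrix.diagonal β * W with hBdef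
  have hArep : A = S - lamr • (1 : Matrix (Fin p) (Fin p) ℝ) := by
    rw [hA, hSrep, ← sope_frame_shift U hUU μ lamr, hα]
  have hA'rep : A' = (S + E) - lamr • (1 : Matrix (Fin p) (Fin p) ℝ) := by
    rw [hA', hSErep, ← sope_frame_shift W hWW μ' lamr, hα']
  have hA'AE : A' = A + E := by rw [hArep, hA'rep]; abel
  -- transposes
  have hEt : Eᵀ = E := hE
  have hPt : Prᵀ = Pr := by rw [hPrF]; exact sope_frame_transpose U χ
  have hP't : P'rᵀ = P'r := by rw [hP'rF]; exact sope_frame_transpose W χ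
  have hCt : Crᵀ = Cr := by rw [hCrF]; exact sope_frame_transpose U γ
  have hC't : C'ᵀ = C' := by rw [hC'def]; exact sope_frame_transpose W γ'
  have hBt : Bᵀ = B := by rw [hBdef]; exact sope_frame_transpose W β
  -- base identities (unperturbed frame)
  have hPP : Pr * Pr = Pr := by
    rw [hPrF, sope_frame_mul U hUU]
    exact sope_frame_ext U _ _ (fun j => by by_cases h : j ∈ Δr <;> simp [hχ, h])
  have hPC : Pr * Cr = 0 := by
    rw [hPrF, hCrF, sope_frame_mul U hUU, ← sope_frame_zero U]
    exact sope_frame_ext U _ _ (fun j => by by_cases h : j ∈ Δr <;> simp [hχ, hγ, h])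
  have hCP : Cr * Pr = 0 := by
    rw [hPrF, hCrF, sope_frame_mul U hUU, ← sope_frame_zero U]
    exact sope_frame_ext U _ _ (fun j => by by_cases h : j ∈ Δr <;> simp [hχ, hγ, h])
  have hAP : A * Pr = 0 := by
    rw [hA, hPrF, sope_frame_mul U hUU, ← sope_frame_zero U]
    apply sope_frame_ext U _ _
    intro j
    by_cases h : j ∈ Δr
    · simp [hα, hχ, h, sub_eq_zero.mpr ((hΔ j).mp h)]
    · simp [hχ, h]
  have hPA : Pr * A = 0 := by
    rw [hA, hPrF, sope_frame_mul U hUU, ← sope_frame_zero U]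
    apply sope_frame_ext U _ _
    intro j
    by_cases h : j ∈ Δr
    · simp [hα, hχ, h, sub_eq_zero.mpr ((hΔ j).mp h)]
    · simp [hχ, h]
  have hCA : Cr * A = Pr - 1 := by
    rw [hCrF, hA, hPrF, sope_frame_mul U hUU, ← sope_frame_one U hUU, ← sope_frame_sub U]
    apply sope_frame_ext U _ _
    intro j
    by_cases h : j ∈ Δr
    · simp [hγ, hχ, h]
    · have hne : μ j ≠ lamr := fun hc => h ((hΔ j).mpr hc)
      have hne0 : lamr - μ j ≠ 0 := sub_ne_zero.mpr (Ne.symm hne)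
      simp only [hγ, hχ, hα, if_neg h]
      rw [show μ j - lamr = -(lamr - μ j) by ring, mul_neg, inv_mul_cancel₀ hne0]
      ring
  have hAC : A * Cr = Pr - 1 := by
    rw [hCrF, hA, hPrF, sope_frame_mul U hUU, ← sope_frame_one U hUU, ← sope_frame_sub U]
    apply sope_frame_ext U _ _
    intro j
    by_cases h : j ∈ Δr
    · simp [hγ, hχ, h]
    · have hne : μ j ≠ lamr := fun hc => h ((hΔ j).mpr hc)
      have hne0 : lamr - μ j ≠ 0 := sub_ne_zero.mpr (Ne.symm hne)
      simp only [hγ, hχ, hα, if_neg h]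
      rw [show μ j - lamr = -(lamr - μ j) by ring, neg_mul, mul_inv_cancel₀ hne0]
      ring
  -- base identities (perturbed frame)
  have hP'P' : P'r * P'r = P'r := by
    rw [hP'rF, sope_frame_mul W hWW]
    exact sope_frame_ext W _ _ (fun j => by by_cases h : j ∈ Δr <;> simp [hχ, h])
  have hBA' : A' * P'r = B := by
    rw [hA', hP'rF, hBdef, sope_frame_mul W hWW]
    apply sope_frame_ext W _ _
    intro j
    by_cases h : j ∈ Δr <;> simp [hα', hχ, hβ, h]
  have hP'A' : P'r * A' = B := by
    rw [hA', hP'rF, hBdef, sope_frame_mul W hWW]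
    apply sope_frame_ext W _ _
    intro j
    by_cases h : j ∈ Δr <;> simp [hα', hχ, hβ, h]
  have hBP' : B * P'r = B := by
    rw [hP'rF, hBdef, sope_frame_mul W hWW]
    apply sope_frame_ext W _ _
    intro j
    by_cases h : j ∈ Δr <;> simp [hχ, hβ, h]
  have hP'B : P'r * B = B := by
    rw [hP'rF, hBdef, sope_frame_mul W hWW]
    apply sope_frame_ext W _ _
    intro j
    by_cases h : j ∈ Δr <;> simp [hχ, hβ, h]
  -- symmetry of the remainder
  have hRsymm : Rr.IsSymm := by
    show Rrᵀ = Rr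
    rw [hRr, hSr, hZr]
    simp only [Matrix.transpose_sub, Matrix.transpose_add, Matrix.transpose_mul,
      Matrix.transpose_pow, hPt, hP't, hCt, hEt]
    noncomm_ring
  refine ⟨by rw [hRr]; abel, hRsymm, ?_⟩
  -- norm facts
  have hEn : ‖E‖ ≤ ‖E‖ := le_refl _
  have hE0 : (0:ℝ) ≤ ‖E‖ := norm_nonneg E
  have hPn : ‖Pr‖ ≤ 1 := by
    rw [hPrF]
    apply sope_frame_norm_le U hUU _ zero_le_one
    intro j; by_cases h : j ∈ Δr <;> simp [hχ, h]
  have hP'n : ‖P'r‖ ≤ 1 := by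
    rw [hP'rF]
    apply sope_frame_norm_le W hWW _ zero_le_one
    intro j; by_cases h : j ∈ Δr <;> simp [hχ, h]
  have hCn : ‖Cr‖ ≤ g⁻¹ := by
    rw [hCrF]
    apply sope_frame_norm_le U hUU _ (inv_nonneg.mpr hg.le)
    intro j
    by_cases h : j ∈ Δr
    · simp only [hγ, if_pos h, abs_zero]
      positivity
    · simp only [hγ, if_neg h]
      rw [abs_inv, abs_sub_comm]
      exact inv_anti₀ hg (hgap j (fun hc => h ((hΔ j).mpr hc)))
  have hC2 : ‖Cr^2‖ ≤ g⁻¹ * g⁻¹ := by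
    rw [pow_two]; exact sope_nb2 hCn hCn
  rcases lt_or_ge (2 * g) (5 * ‖E‖) with hbig | hsmall
  · -- crude regime: ‖E‖ > (2/5) g
    have b1 : ‖Pr * E * Cr * E * Cr‖ ≤ 1 * ‖E‖ * g⁻¹ * ‖E‖ * g⁻¹ :=
      sope_nb2 (sope_nb2 (sope_nb2 (sope_nb2 hPn hEn) hCn) hEn) hCn
    have b2 : ‖Cr * E * Cr * E * Pr‖ ≤ g⁻¹ * ‖E‖ * g⁻¹ * ‖E‖ * 1 :=
      sope_nb2 (sope_nb2 (sope_nb2 (sope_nb2 hCn hEn) hCn) hEn) hPn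
    have b3 : ‖Cr * E * Pr * E * Cr‖ ≤ g⁻¹ * ‖E‖ * 1 * ‖E‖ * g⁻¹ :=
      sope_nb2 (sope_nb2 (sope_nb2 (sope_nb2 hCn hEn) hPn) hEn) hCn
    have b4 : ‖Pr * E * Pr * E * Cr ^ 2‖ ≤ 1 * ‖E‖ * 1 * ‖E‖ * (g⁻¹ * g⁻¹) :=
      sope_nb2 (sope_nb2 (sope_nb2 (sope_nb2 hPn hEn) hPn) hEn) hC2
    have b5 : ‖Pr * E * Cr ^ 2 * E * Pr‖ ≤ 1 * ‖E‖ * (g⁻¹ * g⁻¹) * ‖E‖ * 1 :=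
      sope_nb2 (sope_nb2 (sope_nb2 (sope_nb2 hPn hEn) hC2) hEn) hPn
    have b6 : ‖Cr ^ 2 * E * Pr * E * Pr‖ ≤ (g⁻¹ * g⁻¹) * ‖E‖ * 1 * ‖E‖ * 1 :=
      sope_nb2 (sope_nb2 (sope_nb2 (sope_nb2 hC2 hEn) hPn) hEn) hPn
    have hZb : ‖Zr‖ ≤ 6 * (‖E‖ * g⁻¹)^2 := by
      rw [hZr]
      calc ‖Pr * E * Cr * E * Cr + Cr * E * Cr * E * Pr + Cr * E * Pr * E * Cr
            - Pr * E * Pr * E * Cr ^ 2 - Pr * E * Cr ^ 2 * E * Pr - Cr ^ 2 * E * Pr * E * Pr‖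
          ≤ 1 * ‖E‖ * g⁻¹ * ‖E‖ * g⁻¹ + g⁻¹ * ‖E‖ * g⁻¹ * ‖E‖ * 1 + g⁻¹ * ‖E‖ * 1 * ‖E‖ * g⁻¹
            + 1 * ‖E‖ * 1 * ‖E‖ * (g⁻¹ * g⁻¹) + 1 * ‖E‖ * (g⁻¹ * g⁻¹) * ‖E‖ * 1
            + (g⁻¹ * g⁻¹) * ‖E‖ * 1 * ‖E‖ * 1 := by
            refine le_trans (norm_sub_le _ _) (add_le_add ?_ b6)
            refine le_trans (norm_sub_le _ _) (add_le_add ?_ b5)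
            refine le_trans (norm_sub_le _ _) (add_le_add ?_ b4)
            refine le_trans (norm_add_le _ _) (add_le_add ?_ b3)
            exact le_trans (norm_add_le _ _) (add_le_add b1 b2)
        _ = 6 * (‖E‖ * g⁻¹)^2 := by ring
    have c1 : ‖Cr * E * Pr‖ ≤ g⁻¹ * ‖E‖ * 1 := sope_nb2 (sope_nb2 hCn hEn) hPn
    have c2 : ‖Pr * E * Cr‖ ≤ 1 * ‖E‖ * g⁻¹ := sope_nb2 (sope_nb2 hPn hEn) hCn
    have hSb : ‖Sr‖ ≤ 2 + 2 * (‖E‖ * g⁻¹) := by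
      rw [hSr]
      calc ‖P'r - Pr - (Cr * E * Pr + Pr * E * Cr)‖
          ≤ (1 + 1) + (g⁻¹ * ‖E‖ * 1 + 1 * ‖E‖ * g⁻¹) := by
            refine le_trans (norm_sub_le _ _) (add_le_add ?_ ?_)
            · exact le_trans (norm_sub_le _ _) (add_le_add hP'n hPn)
            · exact le_trans (norm_add_le _ _) (add_le_add c1 c2)
        _ = 2 + 2 * (‖E‖ * g⁻¹) := by ring
    have hx : 2/5 ≤ ‖E‖ * g⁻¹ := by
      rw [← div_eq_mul_inv, le_div_iff₀ hg]; linarith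
    calc ‖Rr‖ ≤ ‖Sr‖ + ‖Zr‖ := by rw [hRr]; exact norm_sub_le _ _
      _ ≤ (2 + 2 * (‖E‖ * g⁻¹)) + 6 * (‖E‖ * g⁻¹)^2 := add_le_add hSb hZb
      _ = 2 + 2 * (‖E‖ * g⁻¹) + 6 * (‖E‖ * g⁻¹)^2 := by ring
      _ ≤ 72 * (‖E‖ * g⁻¹)^3 := sope_cubic1 _ hx
      _ = 72 * (‖E‖ / g)^3 := by rw [div_eq_mul_inv]
  · -- small regime: 5‖E‖ ≤ 2g
    -- Weyl inequalities
    have hw1 : ∀ k, μ' k ≤ μ k + ‖E‖ := fun k =>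
      sope_weyl S E μ μ' U W hUU hWW (fun j => by rw [hUrow]; exact heig j)
        (fun j => by rw [hWrow]; exact heig' j) hmono hmono' k
    have hw2 : ∀ k, μ k ≤ μ' k + ‖E‖ := by
      intro k
      have h := sope_weyl (S + E) (-E) μ' μ W U hWW hUU
        (fun j => by rw [hWrow]; exact heig' j)
        (fun j => by
          rw [hUrow]
          have hse : S + E + -E = S := by abel
          rw [hse]; exact heig j) hmono' hmono k
      rwa [norm_neg] at h
    have hw : ∀ k, |μ' k - μ k| ≤ ‖E‖ := fun k =>
      abs_sub_le_iff.mpr ⟨by linarith [hw1 k], by linarith [hw2 k]⟩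
    have h35 : ∀ j, j ∉ Δr → 3 * g / 5 ≤ |μ' j - lamr| := by
      intro j hj
      have h1 : g ≤ |μ j - lamr| := hgap j (fun hc => hj ((hΔ j).mpr hc))
      have h2 : |μ' j - μ j| ≤ ‖E‖ := hw j
      have h3 : |μ j - lamr| - |μ' j - lamr| ≤ |(μ j - lamr) - (μ' j - lamr)| :=
        abs_sub_abs_le_abs_sub _ _
      have h4 : |(μ j - lamr) - (μ' j - lamr)| = |μ' j - μ j| := by
        rw [abs_sub_comm]; congr 1; ring
      rw [h4] at h3
      linarith
    have hne0' : ∀ j, j ∉ Δr → lamr - μ' j ≠ 0 := by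
      intro j hj hc
      have := h35 j hj
      have hz : |μ' j - lamr| = 0 := by
        rw [show μ' j - lamr = -(lamr - μ' j) by ring, hc]; simp
      rw [hz] at this
      linarith
    -- perturbed-frame base identities
    have hC'P' : C' * P'r = 0 := by
      rw [hC'def, hP'rF, sope_frame_mul W hWW, ← sope_frame_zero W]
      exact sope_frame_ext W _ _ (fun j => by by_cases h : j ∈ Δr <;> simp [hγ', hχ, h])
    have hC'A' : C' * A' = P'r - 1 := by
      rw [hC'def, hA', hP'rF, sope_frame_mul W hWW, ← sope_frame_one W hWW, ← sope_frame_sub W]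
      apply sope_frame_ext W _ _
      intro j
      by_cases h : j ∈ Δr
      · simp [hγ', hχ, h]
      · have hne0 : lamr - μ' j ≠ 0 := hne0' j h
        simp only [hγ', hχ, hα', if_neg h]
        rw [show μ' j - lamr = -(lamr - μ' j) by ring, mul_neg, inv_mul_cancel₀ hne0]
        ring
    -- derived identities
    have cLA : C' * A = P'r - 1 - C' * E := by
      calc C' * A = C' * A' - C' * E := by rw [hA'AE]; noncomm_ring
        _ = P'r - 1 - C' * E := by rw [hC'A']
    have id1 : P'r * Pr = Pr + C' * E * Pr := by
      have z : C' * A * Pr = 0 := by rw [Matrix.mul_assoc, hAP, Matrix.mul_zero]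
      have w : C' * A * Pr = P'r * Pr - Pr - C' * E * Pr := by
        rw [cLA]; noncomm_ring
      have h := w.symm.trans z
      rw [sub_sub, sub_eq_zero] at h
      exact h
    have hAP' : A * P'r = B - E * P'r := by
      calc A * P'r = A' * P'r - E * P'r := by rw [hA'AE]; noncomm_ring
        _ = B - E * P'r := by rw [hBA']
    have id2 : Pr * P'r = P'r + Cr * B - Cr * E * P'r := by
      calc Pr * P'r = (Cr * A) * P'r + P'r := by rw [hCA]; noncomm_ring
        _ = Cr * (A * P'r) + P'r := by rw [Matrix.mul_assoc]
        _ = Cr * (B - E * P'r) + P'r := by rw [hAP']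
        _ = P'r + Cr * B - Cr * E * P'r := by noncomm_ring
    have id2t : P'r * Pr = P'r + B * Cr - P'r * E * Cr := by
      have h := congrArg Matrix.transpose id2
      simp only [Matrix.transpose_mul, Matrix.transpose_add, Matrix.transpose_sub,
        hPt, hP't, hCt, hBt, hEt] at h
      rw [h]; noncomm_ring
    set Qm : Matrix (Fin p) (Fin p) ℝ := P'r - Pr with hQm
    set Dm : Matrix (Fin p) (Fin p) ℝ := C' - Cr with hDm
    have star : Qm = C' * E * Pr + P'r * E * Cr - B * Cr := by
      have h := id1.symm.trans id2t
      rw [hQm]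
      calc P'r - Pr = (P'r + B * Cr - P'r * E * Cr) - Pr - (B * Cr - P'r * E * Cr) := by abel
        _ = (Pr + C' * E * Pr) - Pr - (B * Cr - P'r * E * Cr) := by rw [h]
        _ = C' * E * Pr + P'r * E * Cr - B * Cr := by abel
    have hP'q : P'r = Pr + Qm := by rw [hQm]; abel
    have hC'd : C' = Cr + Dm := by rw [hDm]; abel
    have id4 : P'r * Cr = P'r * E * Cr * Cr - B * Cr * Cr := by
      calc P'r * Cr = Qm * Cr + Pr * Cr := by rw [hQm]; noncomm_ring
        _ = (C' * E * Pr + P'r * E * Cr - B * Cr) * Cr + 0 := by rw [star, hPC]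
        _ = C' * E * (Pr * Cr) + P'r * E * Cr * Cr - B * Cr * Cr := by noncomm_ring
        _ = P'r * E * Cr * Cr - B * Cr * Cr := by rw [hPC, Matrix.mul_zero]; noncomm_ring
    have id5 : C' * Pr = -(C' * C' * E * Pr) := by
      have h5 : Pr = P'r * Pr - C' * E * Pr := by rw [id1]; abel
      calc C' * Pr = C' * (P'r * Pr - C' * E * Pr) := by conv_lhs => rw [h5]
        _ = (C' * P'r) * Pr - C' * (C' * E * Pr) := by noncomm_ring
        _ = -(C' * C' * E * Pr) := by rw [hC'P']; noncomm_ring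
    have t1 : C' * (A * Cr) = C' * Pr - C' := by rw [hAC]; noncomm_ring
    have t2 : (C' * A) * Cr = P'r * Cr - Cr - C' * E * Cr := by rw [cLA]; noncomm_ring
    have t3 : C' * Pr - C' = P'r * Cr - Cr - C' * E * Cr := by
      rw [← t1, ← Matrix.mul_assoc, t2]
    have h6 : C' - Cr = C' * Pr + C' * E * Cr - P'r * Cr := by
      calc C' - Cr = C' * Pr - (C' * Pr - C') - Cr := by abel
        _ = C' * Pr - (P'r * Cr - Cr - C' * E * Cr) - Cr := by rw [t3]
        _ = C' * Pr + C' * E * Cr - P'r * Cr := by abel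
    have id6 : Dm = C' * E * Cr - C' * C' * E * Pr - P'r * Cr := by
      rw [hDm, h6, id5]; abel
    have eA : P'r * A * P'r = Qm * (B - E * P'r) := by
      calc P'r * A * P'r = Qm * (A * P'r) + (Pr * A) * P'r := by rw [hP'q]; noncomm_ring
        _ = Qm * (B - E * P'r) + 0 * P'r := by rw [hAP', hPA]
        _ = Qm * (B - E * P'r) := by noncomm_ring
    have id7 : B = Pr * E * Pr + Pr * E * Qm + Qm * B := by
      calc B = P'r * (A' * P'r) := by rw [hBA', hP'B]
        _ = P'r * ((A + E) * P'r) := by rw [hA'AE]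
        _ = P'r * A * P'r + P'r * E * P'r := by noncomm_ring
        _ = Qm * (B - E * P'r) + P'r * E * P'r := by rw [eA]
        _ = Pr * E * Pr + Pr * E * Qm + Qm * B := by rw [hP'q]; noncomm_ring
    have id8 : B * Cr = B * Qm * Cr := by
      calc B * Cr = (B * P'r) * Cr := by rw [hBP']
        _ = B * (Qm * Cr) + B * (Pr * Cr) := by rw [hP'q]; noncomm_ring
        _ = B * Qm * Cr := by rw [hPC]; noncomm_ring
    -- expansion blocks
    have b1 : Dm * E * Pr = Cr * E * Cr * E * Pr - Cr * Cr * E * Pr * E * Pr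
        - Pr * E * (Cr * Cr) * E * Pr + Dm * E * Cr * E * Pr
        - (Dm * C' + Cr * Dm) * E * Pr * E * Pr - Qm * E * (Cr * Cr) * E * Pr
        + B * Qm * (Cr * Cr) * E * Pr := by
      conv_lhs => rw [id6]
      rw [id4, id8, hC'd, hP'q]
      noncomm_ring
    have b2 : Qm * E * Cr = Cr * E * Pr * E * Cr + Pr * E * Cr * E * Cr
        + Dm * E * Pr * E * Cr + Qm * E * (Cr * E * Cr) - B * Qm * (Cr * E * Cr) := by
      conv_lhs => rw [star]
      rw [id8, hC'd, hP'q]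
      noncomm_ring
    have b3 : B * Cr = Pr * E * Pr * E * (Cr * Cr) + Pr * E * Qm * E * (Cr * Cr)
        + Qm * B * E * (Cr * Cr) - B * B * Qm * (Cr * Cr) := by
      have e7 : B * (E * (Cr * Cr)) = (Pr * E * Pr + Pr * E * Qm + Qm * B) * (E * (Cr * Cr)) := by
        rw [← id7]
      calc B * Cr = (B * P'r) * Cr := by rw [hBP']
        _ = B * (P'r * Cr) := by rw [Matrix.mul_assoc]
        _ = B * (P'r * E * Cr * Cr - B * Cr * Cr) := by rw [id4]
        _ = (B * P'r) * (E * (Cr * Cr)) - B * ((B * Cr) * Cr) := by noncomm_ring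
        _ = B * (E * (Cr * Cr)) - B * ((B * Qm * Cr) * Cr) := by rw [hBP', id8]
        _ = (Pr * E * Pr + Pr * E * Qm + Qm * B) * (E * (Cr * Cr))
            - B * ((B * Qm * Cr) * Cr) := by rw [e7]
        _ = Pr * E * Pr * E * (Cr * Cr) + Pr * E * Qm * E * (Cr * Cr)
            + Qm * B * E * (Cr * Cr) - B * B * Qm * (Cr * Cr) := by noncomm_ring
    have hSplit : Sr = Dm * E * Pr + Qm * E * Cr - B * Cr := by
      rw [hSr]
      conv_lhs => rw [star]
      rw [hC'd, hP'q]
      noncomm_ring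
    have hRkey : Rr = -(Qm * E * Cr * Cr * E * Pr) + B * Qm * Cr * Cr * E * Pr
        - (Dm * C' + Cr * Dm) * E * Pr * E * Pr + Dm * E * Cr * E * Pr + Dm * E * Pr * E * Cr
        + Qm * E * Cr * E * Cr - B * Qm * Cr * E * Cr - Pr * E * Qm * E * Cr * Cr
        - Qm * B * E * Cr * Cr + B * B * Qm * Cr * Cr := by
      rw [hRr, hSplit, hZr]
      conv_lhs => rw [b1]
      conv_lhs => rw [b2]
      conv_lhs => rw [b3]
      noncomm_ring
    -- norm bounds
    have hC'n : ‖C'‖ ≤ 5/3 * g⁻¹ := by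
      rw [hC'def]
      apply sope_frame_norm_le W hWW _ (by positivity)
      intro j
      by_cases h : j ∈ Δr
      · simp only [hγ', if_pos h, abs_zero]
        positivity
      · simp only [hγ', if_neg h]
        rw [abs_inv, abs_sub_comm]
        calc |μ' j - lamr|⁻¹ ≤ (3 * g / 5)⁻¹ := inv_anti₀ (by positivity) (h35 j h)
          _ = 5/3 * g⁻¹ := by
              rw [show (3:ℝ) * g / 5 = (5/3 * g⁻¹)⁻¹ by
                rw [mul_inv, inv_inv]; ring, inv_inv]
    have hBn : ‖B‖ ≤ ‖E‖ := by
      rw [hBdef]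
      apply sope_frame_norm_le W hWW _ hE0
      intro j
      by_cases h : j ∈ Δr
      · simp only [hβ, if_pos h]
        have hμ : μ j = lamr := (hΔ j).mp h
        rw [← hμ]
        exact hw j
      · simp [hβ, h, hE0]
    have hQn : ‖Qm‖ ≤ 11/3 * (‖E‖ * g⁻¹) := by
      calc ‖Qm‖ = ‖C' * E * Pr + P'r * E * Cr - B * Cr‖ := by rw [star]
        _ ≤ ((5/3 * g⁻¹) * ‖E‖ * 1 + 1 * ‖E‖ * g⁻¹) + ‖E‖ * g⁻¹ :=
            le_trans (norm_sub_le _ _) (add_le_add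
              (le_trans (norm_add_le _ _) (add_le_add
                (sope_nb2 (sope_nb2 hC'n hEn) hPn)
                (sope_nb2 (sope_nb2 hP'n hEn) hCn)))
              (sope_nb2 hBn hCn))
        _ = 11/3 * (‖E‖ * g⁻¹) := by ring
    have hP'C : P'r * Cr = Qm * Cr := by
      calc P'r * Cr = Pr * Cr + Qm * Cr := by rw [hP'q]; noncomm_ring
        _ = Qm * Cr := by rw [hPC, zero_add]
    have hDn : ‖Dm‖ ≤ 73/9 * (‖E‖ * (g⁻¹ * g⁻¹)) := by
      calc ‖Dm‖ = ‖C' * E * Cr - C' * C' * E * Pr - Qm * Cr‖ := by rw [id6, hP'C]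
        _ ≤ ((5/3 * g⁻¹) * ‖E‖ * g⁻¹ + (5/3 * g⁻¹) * (5/3 * g⁻¹) * ‖E‖ * 1)
            + (11/3 * (‖E‖ * g⁻¹)) * g⁻¹ :=
            le_trans (norm_sub_le _ _) (add_le_add
              (le_trans (norm_sub_le _ _) (add_le_add
                (sope_nb2 (sope_nb2 hC'n hEn) hCn)
                (sope_nb2 (sope_nb2 (sope_nb2 hC'n hC'n) hEn) hPn)))
              (sope_nb2 hQn hCn))
        _ = 73/9 * (‖E‖ * (g⁻¹ * g⁻¹)) := by ring
    set K : ℝ := ‖E‖^3 * (g⁻¹)^3 with hK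
    have hT1 : ‖-(Qm * E * Cr * Cr * E * Pr)‖ ≤ 11/3 * K := by
      rw [norm_neg]
      calc ‖Qm * E * Cr * Cr * E * Pr‖
          ≤ (11/3 * (‖E‖ * g⁻¹)) * ‖E‖ * g⁻¹ * g⁻¹ * ‖E‖ * 1 :=
            sope_nb2 (sope_nb2 (sope_nb2 (sope_nb2 (sope_nb2 hQn hEn) hCn) hCn) hEn) hPn
        _ = 11/3 * K := by rw [hK]; ring
    have hT2 : ‖B * Qm * Cr * Cr * E * Pr‖ ≤ 11/3 * K := by
      calc ‖B * Qm * Cr * Cr * E * Pr‖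
          ≤ ‖E‖ * (11/3 * (‖E‖ * g⁻¹)) * g⁻¹ * g⁻¹ * ‖E‖ * 1 :=
            sope_nb2 (sope_nb2 (sope_nb2 (sope_nb2 (sope_nb2 hBn hQn) hCn) hCn) hEn) hPn
        _ = 11/3 * K := by rw [hK]; ring
    have hT3 : ‖(Dm * C' + Cr * Dm) * E * Pr * E * Pr‖ ≤ 584/27 * K := by
      have hin : ‖Dm * C' + Cr * Dm‖
          ≤ (73/9 * (‖E‖ * (g⁻¹ * g⁻¹))) * (5/3 * g⁻¹)
            + g⁻¹ * (73/9 * (‖E‖ * (g⁻¹ * g⁻¹))) :=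
        le_trans (norm_add_le _ _) (add_le_add (sope_nb2 hDn hC'n) (sope_nb2 hCn hDn))
      calc ‖(Dm * C' + Cr * Dm) * E * Pr * E * Pr‖
          ≤ ((73/9 * (‖E‖ * (g⁻¹ * g⁻¹))) * (5/3 * g⁻¹)
              + g⁻¹ * (73/9 * (‖E‖ * (g⁻¹ * g⁻¹)))) * ‖E‖ * 1 * ‖E‖ * 1 :=
            sope_nb2 (sope_nb2 (sope_nb2 (sope_nb2 hin hEn) hPn) hEn) hPn
        _ = 584/27 * K := by rw [hK]; ring
    have hT4 : ‖Dm * E * Cr * E * Pr‖ ≤ 73/9 * K := by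
      calc ‖Dm * E * Cr * E * Pr‖
          ≤ (73/9 * (‖E‖ * (g⁻¹ * g⁻¹))) * ‖E‖ * g⁻¹ * ‖E‖ * 1 :=
            sope_nb2 (sope_nb2 (sope_nb2 (sope_nb2 hDn hEn) hCn) hEn) hPn
        _ = 73/9 * K := by rw [hK]; ring
    have hT5 : ‖Dm * E * Pr * E * Cr‖ ≤ 73/9 * K := by
      calc ‖Dm * E * Pr * E * Cr‖
          ≤ (73/9 * (‖E‖ * (g⁻¹ * g⁻¹))) * ‖E‖ * 1 * ‖E‖ * g⁻¹ :=
            sope_nb2 (sope_nb2 (sope_nb2 (sope_nb2 hDn hEn) hPn) hEn) hCn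
        _ = 73/9 * K := by rw [hK]; ring
    have hT6 : ‖Qm * E * Cr * E * Cr‖ ≤ 11/3 * K := by
      calc ‖Qm * E * Cr * E * Cr‖
          ≤ (11/3 * (‖E‖ * g⁻¹)) * ‖E‖ * g⁻¹ * ‖E‖ * g⁻¹ :=
            sope_nb2 (sope_nb2 (sope_nb2 (sope_nb2 hQn hEn) hCn) hEn) hCn
        _ = 11/3 * K := by rw [hK]; ring
    have hT7 : ‖B * Qm * Cr * E * Cr‖ ≤ 11/3 * K := by
      calc ‖B * Qm * Cr * E * Cr‖
          ≤ ‖E‖ * (11/3 * (‖E‖ * g⁻¹)) * g⁻¹ * ‖E‖ * g⁻¹ :=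
            sope_nb2 (sope_nb2 (sope_nb2 (sope_nb2 hBn hQn) hCn) hEn) hCn
        _ = 11/3 * K := by rw [hK]; ring
    have hT8 : ‖Pr * E * Qm * E * Cr * Cr‖ ≤ 11/3 * K := by
      calc ‖Pr * E * Qm * E * Cr * Cr‖
          ≤ 1 * ‖E‖ * (11/3 * (‖E‖ * g⁻¹)) * ‖E‖ * g⁻¹ * g⁻¹ :=
            sope_nb2 (sope_nb2 (sope_nb2 (sope_nb2 (sope_nb2 hPn hEn) hQn) hEn) hCn) hCn
        _ = 11/3 * K := by rw [hK]; ring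
    have hT9 : ‖Qm * B * E * Cr * Cr‖ ≤ 11/3 * K := by
      calc ‖Qm * B * E * Cr * Cr‖
          ≤ (11/3 * (‖E‖ * g⁻¹)) * ‖E‖ * ‖E‖ * g⁻¹ * g⁻¹ :=
            sope_nb2 (sope_nb2 (sope_nb2 (sope_nb2 hQn hBn) hEn) hCn) hCn
        _ = 11/3 * K := by rw [hK]; ring
    have hT10 : ‖B * B * Qm * Cr * Cr‖ ≤ 11/3 * K := by
      calc ‖B * B * Qm * Cr * Cr‖
          ≤ ‖E‖ * ‖E‖ * (11/3 * (‖E‖ * g⁻¹)) * g⁻¹ * g⁻¹ :=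
            sope_nb2 (sope_nb2 (sope_nb2 (sope_nb2 hBn hBn) hQn) hCn) hCn
        _ = 11/3 * K := by rw [hK]; ring
    have hsum : ‖Rr‖ ≤ 11/3 * K + 11/3 * K + 584/27 * K + 73/9 * K + 73/9 * K
        + 11/3 * K + 11/3 * K + 11/3 * K + 11/3 * K + 11/3 * K := by
      rw [hRkey]
      refine le_trans (norm_add_le _ _) (add_le_add ?_ hT10)
      refine le_trans (norm_sub_le _ _) (add_le_add ?_ hT9)
      refine le_trans (norm_sub_le _ _) (add_le_add ?_ hT8)
      refine le_trans (norm_sub_le _ _) (add_le_add ?_ hT7)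
      refine le_trans (norm_add_le _ _) (add_le_add ?_ hT6)
      refine le_trans (norm_add_le _ _) (add_le_add ?_ hT5)
      refine le_trans (norm_add_le _ _) (add_le_add ?_ hT4)
      refine le_trans (norm_sub_le _ _) (add_le_add ?_ hT3)
      exact le_trans (norm_add_le _ _) (add_le_add hT1 hT2)
    have hK0 : 0 ≤ K := by rw [hK]; positivity
    calc ‖Rr‖ ≤ 11/3 * K + 11/3 * K + 584/27 * K + 73/9 * K + 73/9 * K
        + 11/3 * K + 11/3 * K + 11/3 * K + 11/3 * K + 11/3 * K := hsum
      _ ≤ 72 * K := by linarith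
      _ = 72 * (‖E‖ / g)^3 := by rw [hK, div_eq_mul_inv, mul_pow]
end

section
/- Contour integral bound for the third-order remainder (case ‖E‖ ≤ g̅_r/3): if ‖E‖ ≤ g̅_r/3 then ‖(1/(2πi)) ∮_{γ_r} Σ_{k≥3} (−1)^k (R_Σ(η)E)^k R_Σ(η) dη‖ ≤ 24 (‖E‖/g̅_r)^3, where γ_r is the circle of radius g̅_r/2 centred at λ_r with counterclockwise orientation and R_Σ(η) = Σ_j P_j/(μ_j − η) is the resolvent of Σ. -/
open Matrix Finset
open scoped Matrix.Norms.L2Operator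

section Helpers

variable {𝕜 : Type*} [RCLike 𝕜] {m n : Type*} [Fintype m] [Fintype n] [DecidableEq n]

lemma l2norm_le_bound (A : Matrix m n 𝕜) {c : ℝ} (hc : 0 ≤ c)
    (h : ∀ x : EuclideanSpace 𝕜 n, ‖(EuclideanSpace.equiv m 𝕜).symm (A *ᵥ x)‖ ≤ c * ‖x‖) :
    ‖A‖ ≤ c := by
  rw [Matrix.l2_opNorm_def]
  exact ContinuousLinearMap.opNorm_le_bound _ hc h

lemma esp_norm_sq (y : EuclideanSpace 𝕜 n) : ‖y‖ ^ 2 = ∑ i, ‖y i‖ ^ 2 := by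
  rw [EuclideanSpace.norm_eq, Real.sq_sqrt]
  positivity

lemma diag_norm_le (d : n → 𝕜) {c : ℝ} (hc : 0 ≤ c)
    (hd : ∀ i, ‖d i‖ ≤ c) : ‖Matrix.diagonal d‖ ≤ c := by
  apply l2norm_le_bound _ hc
  intro x
  have h1 : ‖(EuclideanSpace.equiv n 𝕜).symm (Matrix.diagonal d *ᵥ x)‖ ^ 2
      ≤ (c * ‖x‖) ^ 2 := by
    rw [esp_norm_sq]
    calc ∑ i, ‖((EuclideanSpace.equiv n 𝕜).symm (Matrix.diagonal d *ᵥ x)) i‖ ^ 2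
        ≤ ∑ i, c ^ 2 * ‖x i‖ ^ 2 := by
          refine Finset.sum_le_sum fun i _ => ?_
          have hco : ((EuclideanSpace.equiv n 𝕜).symm (Matrix.diagonal d *ᵥ x)) i
              = d i * x i := by
            simp [Matrix.mulVec_diagonal]
          rw [hco, norm_mul, mul_pow]
          exact mul_le_mul_of_nonneg_right
            (pow_le_pow_left₀ (norm_nonneg _) (hd i) 2) (by positivity)
      _ = c ^ 2 * ∑ i, ‖x i‖ ^ 2 := by rw [Finset.mul_sum]
      _ = (c * ‖x‖) ^ 2 := by rw [mul_pow, esp_norm_sq x]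
  have h2 : 0 ≤ c * ‖x‖ := mul_nonneg hc (norm_nonneg _)
  nlinarith [norm_nonneg ((EuclideanSpace.equiv n 𝕜).symm (Matrix.diagonal d *ᵥ x))]

lemma one_l2norm_le [DecidableEq m] : ‖(1 : Matrix m m 𝕜)‖ ≤ 1 := by
  apply l2norm_le_bound _ zero_le_one
  intro x
  rw [Matrix.one_mulVec, one_mul]
  exact le_of_eq rfl

end Helpers

section RealHelpers

variable {p : ℕ}

lemma map_mul_ofReal (M N : Matrix (Fin p) (Fin p) ℝ) :
    (M * N).map Complex.ofReal = M.map Complex.ofReal * N.map Complex.ofReal := by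
  ext i j
  simp [Matrix.mul_apply, Matrix.map_apply]

lemma map_ofReal_norm_le (A : Matrix (Fin p) (Fin p) ℝ) :
    ‖A.map Complex.ofReal‖ ≤ ‖A‖ := by
  apply l2norm_le_bound _ (norm_nonneg A)
  intro x
  set a : EuclideanSpace ℝ (Fin p) := (EuclideanSpace.equiv (Fin p) ℝ).symm fun i => (x i).re
    with ha
  set b : EuclideanSpace ℝ (Fin p) := (EuclideanSpace.equiv (Fin p) ℝ).symm fun i => (x i).im
    with hb
  have hre : ∀ i, ((A.map Complex.ofReal *ᵥ x) i).re = (A *ᵥ a) i := by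
    intro i
    simp [Matrix.mulVec, dotProduct, Complex.re_sum, ha]
  have him : ∀ i, ((A.map Complex.ofReal *ᵥ x) i).im = (A *ᵥ b) i := by
    intro i
    simp [Matrix.mulVec, dotProduct, Complex.im_sum, hb]
  have hsq : ‖(EuclideanSpace.equiv (Fin p) ℂ).symm (A.map Complex.ofReal *ᵥ x)‖ ^ 2
      = ‖(EuclideanSpace.equiv (Fin p) ℝ).symm (A *ᵥ a)‖ ^ 2
        + ‖(EuclideanSpace.equiv (Fin p) ℝ).symm (A *ᵥ b)‖ ^ 2 := by
    rw [esp_norm_sq, esp_norm_sq, esp_norm_sq, ← Finset.sum_add_distrib]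
    refine Finset.sum_congr rfl fun i _ => ?_
    have h1 : ‖((A.map Complex.ofReal *ᵥ x) i : ℂ)‖ ^ 2
        = ((A.map Complex.ofReal *ᵥ x) i).re ^ 2 + ((A.map Complex.ofReal *ᵥ x) i).im ^ 2 := by
      rw [Complex.sq_norm, Complex.normSq_apply]
      ring
    show ‖((A.map Complex.ofReal *ᵥ x) i : ℂ)‖ ^ 2 = ‖(A *ᵥ a) i‖ ^ 2 + ‖(A *ᵥ b) i‖ ^ 2
    rw [h1, hre i, him i, Real.norm_eq_abs, Real.norm_eq_abs, sq_abs, sq_abs]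
  have hxsq : ‖x‖ ^ 2 = ‖a‖ ^ 2 + ‖b‖ ^ 2 := by
    rw [esp_norm_sq, esp_norm_sq, esp_norm_sq, ← Finset.sum_add_distrib]
    refine Finset.sum_congr rfl fun i _ => ?_
    show ‖(x i : ℂ)‖ ^ 2 = ‖(x i).re‖ ^ 2 + ‖(x i).im‖ ^ 2
    rw [Complex.sq_norm, Complex.normSq_apply,
      Real.norm_eq_abs, Real.norm_eq_abs, sq_abs, sq_abs]
    ring
  have hA1 := A.l2_opNorm_mulVec a
  have hA2 := A.l2_opNorm_mulVec b
  have hfin : ‖(EuclideanSpace.equiv (Fin p) ℂ).symm (A.map Complex.ofReal *ᵥ x)‖ ^ 2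
      ≤ (‖A‖ * ‖x‖) ^ 2 := by
    rw [hsq]
    have e1 : ‖(EuclideanSpace.equiv (Fin p) ℝ).symm (A *ᵥ a)‖ ^ 2 ≤ (‖A‖ * ‖a‖) ^ 2 := by
      have := norm_nonneg ((EuclideanSpace.equiv (Fin p) ℝ).symm (A *ᵥ a))
      nlinarith
    have e2 : ‖(EuclideanSpace.equiv (Fin p) ℝ).symm (A *ᵥ b)‖ ^ 2 ≤ (‖A‖ * ‖b‖) ^ 2 := by
      have := norm_nonneg ((EuclideanSpace.equiv (Fin p) ℝ).symm (A *ᵥ b))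
      nlinarith
    calc _ ≤ (‖A‖ * ‖a‖) ^ 2 + (‖A‖ * ‖b‖) ^ 2 := add_le_add e1 e2
      _ = ‖A‖ ^ 2 * (‖a‖ ^ 2 + ‖b‖ ^ 2) := by ring
      _ = (‖A‖ * ‖x‖) ^ 2 := by rw [mul_pow, hxsq]
  have h2 : 0 ≤ ‖A‖ * ‖x‖ := mul_nonneg (norm_nonneg _) (norm_nonneg _)
  nlinarith [norm_nonneg ((EuclideanSpace.equiv (Fin p) ℂ).symm (A.map Complex.ofReal *ᵥ x))]

lemma resolvent_norm_le {p : ℕ} (S : Matrix (Fin p) (Fin p) ℝ)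
    (μ : Fin p → ℝ) (v : Fin p → Fin p → ℝ)
    (hv : ∀ i j, v i ⬝ᵥ v j = if i = j then (1 : ℝ) else 0)
    (heig : ∀ j, S.mulVec (v j) = μ j • v j)
    (lamr : ℝ) (g : ℝ) (hg : 0 < g) (hgap : ∀ j, μ j ≠ lamr → g ≤ |μ j - lamr|)
    (η : ℂ) (hη : η ∈ Metric.sphere (lamr : ℂ) (g / 2)) :
    ‖(S.map Complex.ofReal - η • (1 : Matrix (Fin p) (Fin p) ℂ))⁻¹‖ ≤ 2 / g := by
  set Wr : Matrix (Fin p) (Fin p) ℝ := Matrix.of v with hWrdef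
  have hWr : Wr * Wrᵀ = 1 := by
    ext i j
    have := hv i j
    simp only [dotProduct] at this
    simp [Matrix.mul_apply, Matrix.one_apply, hWrdef, this]
  have hWr2 : Wrᵀ * Wr = 1 := mul_eq_one_comm.mp hWr
  have hSW : S * Wrᵀ = Wrᵀ * Matrix.diagonal μ := by
    ext i j
    have h := congrFun (heig j) i
    simp only [Matrix.mulVec, dotProduct, Pi.smul_apply, smul_eq_mul] at h
    simp only [Matrix.mul_apply, Matrix.transpose_apply, Matrix.diagonal_apply, Matrix.of_apply,
      hWrdef, mul_ite, mul_zero]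
    rw [Finset.sum_ite_eq' Finset.univ j (fun k => v k i * μ k)]
    simp [h, mul_comm]
  have hSfac : S = Wrᵀ * Matrix.diagonal μ * Wr := by
    calc S = S * (Wrᵀ * Wr) := by rw [hWr2, Matrix.mul_one]
      _ = S * Wrᵀ * Wr := by rw [Matrix.mul_assoc]
      _ = _ := by rw [hSW]
  set W : Matrix (Fin p) (Fin p) ℂ := Wr.map Complex.ofReal with hWdef
  have hWT : Wᵀ = Wrᵀ.map Complex.ofReal := rfl
  have hW1 : W * Wᵀ = 1 := by
    rw [hWT, hWdef, ← map_mul_ofReal, hWr]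
    ext i j
    simp [Matrix.map_apply, Matrix.one_apply, apply_ite Complex.ofReal]
  have hW2 : Wᵀ * W = 1 := mul_eq_one_comm.mp hW1
  have hWH : Wᴴ = Wᵀ := by
    ext i j
    simp [Matrix.conjTranspose_apply, Matrix.transpose_apply, hWdef, Matrix.map_apply,
      Complex.conj_ofReal]
  have hWn : ‖W‖ ≤ 1 := by
    have h := Matrix.l2_opNorm_conjTranspose_mul_self W
    rw [hWH, hW2] at h
    have h1 : ‖W‖ * ‖W‖ ≤ 1 := h ▸ one_l2norm_le
    nlinarith [norm_nonneg W]
  have hWTn : ‖Wᵀ‖ ≤ 1 := by rw [← hWH, Matrix.l2_opNorm_conjTranspose]; exact hWn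
  have hηd : ‖η - (lamr : ℂ)‖ = g / 2 := by
    have := Metric.mem_sphere.mp hη
    rwa [Complex.dist_eq] at this
  have hlow : ∀ j, g / 2 ≤ ‖(μ j : ℂ) - η‖ := by
    intro j
    by_cases hj : μ j = lamr
    · have he : (μ j : ℂ) - η = -(η - lamr) := by rw [hj]; ring
      rw [he, norm_neg, hηd]
    · have h1 : g ≤ ‖(μ j : ℂ) - (lamr : ℂ)‖ := by
        rw [← Complex.ofReal_sub, Complex.norm_real, Real.norm_eq_abs]
        exact hgap j hj
      have h2 := norm_sub_norm_le ((μ j : ℂ) - lamr) (η - lamr)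
      rw [sub_sub_sub_cancel_right, hηd] at h2
      linarith
  have hnz : ∀ j, (μ j : ℂ) - η ≠ 0 := by
    intro j hzero
    have := hlow j
    rw [hzero, norm_zero] at this
    linarith
  have hmapS : S.map Complex.ofReal
      = Wᵀ * Matrix.diagonal (fun j => (μ j : ℂ)) * W := by
    conv_lhs => rw [hSfac]
    rw [map_mul_ofReal, map_mul_ofReal]
    congr 1
    congr 1
    ext i j
    by_cases hij : i = j <;> simp [Matrix.map_apply, Matrix.diagonal_apply, hij]
  have hdiag : Matrix.diagonal (fun j => (μ j : ℂ) - η)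
      = Matrix.diagonal (fun j => (μ j : ℂ)) - η • (1 : Matrix (Fin p) (Fin p) ℂ) := by
    ext i j
    by_cases hij : i = j <;> simp [Matrix.diagonal_apply, hij, Matrix.one_apply]
  have hfac : S.map Complex.ofReal - η • (1 : Matrix (Fin p) (Fin p) ℂ)
      = Wᵀ * Matrix.diagonal (fun j => (μ j : ℂ) - η) * W := by
    rw [hdiag, hmapS, Matrix.mul_sub, Matrix.sub_mul]
    congr 1
    rw [Matrix.mul_smul, Matrix.mul_one, Matrix.smul_mul, hW2]
  have hinvform : (S.map Complex.ofReal - η • (1 : Matrix (Fin p) (Fin p) ℂ))⁻¹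
      = Wᵀ * Matrix.diagonal (fun j => ((μ j : ℂ) - η)⁻¹) * W := by
    apply Matrix.inv_eq_right_inv
    rw [hfac]
    simp only [Matrix.mul_assoc]
    rw [← Matrix.mul_assoc W Wᵀ, hW1, Matrix.one_mul,
      ← Matrix.mul_assoc (Matrix.diagonal _) (Matrix.diagonal _),
      Matrix.diagonal_mul_diagonal]
    have hone : (fun j => ((μ j : ℂ) - η) * ((μ j : ℂ) - η)⁻¹) = fun _ => (1 : ℂ) :=
      funext fun j => mul_inv_cancel₀ (hnz j)
    rw [hone, Matrix.diagonal_one, Matrix.one_mul, hW2]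
  rw [hinvform]
  have hDn : ‖Matrix.diagonal (fun j => ((μ j : ℂ) - η)⁻¹)‖ ≤ 2 / g := by
    apply diag_norm_le _ (by positivity)
    intro j
    rw [norm_inv]
    have hgt : (0 : ℝ) < g / 2 := by linarith
    calc ‖(μ j : ℂ) - η‖⁻¹ ≤ (g / 2)⁻¹ := by
          apply inv_anti₀ hgt (hlow j)
      _ = 2 / g := by rw [inv_div]
  calc ‖Wᵀ * Matrix.diagonal (fun j => ((μ j : ℂ) - η)⁻¹) * W‖
      ≤ ‖Wᵀ * Matrix.diagonal (fun j => ((μ j : ℂ) - η)⁻¹)‖ * ‖W‖ :=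
        Matrix.l2_opNorm_mul _ _
    _ ≤ ‖Wᵀ‖ * ‖Matrix.diagonal (fun j => ((μ j : ℂ) - η)⁻¹)‖ * ‖W‖ :=
        mul_le_mul_of_nonneg_right (Matrix.l2_opNorm_mul _ _) (norm_nonneg _)
    _ ≤ 1 * (2 / g) * 1 := by
        have h1 : ‖Wᵀ‖ * ‖Matrix.diagonal (fun j => ((μ j : ℂ) - η)⁻¹)‖ ≤ 1 * (2 / g) :=
          mul_le_mul hWTn hDn (norm_nonneg _) zero_le_one
        exact mul_le_mul h1 hWn (norm_nonneg _) (by positivity)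
    _ = 2 / g := by ring

end RealHelpers

/-- contour integral bound for the third-order remainder. If `‖E‖ ≤ ḡ_r/3` then
`‖(1/(2πi)) ∮_{γ_r} ∑_{k ≥ 3} (-1)^k (R_Σ(η) E)^k R_Σ(η) dη‖ ≤ 24 (‖E‖/ḡ_r)³`,
where `γ_r` is the counterclockwise circle of radius `ḡ_r/2` centred at `λ_r` and
`R_Σ(η) = (Σ - ηI)⁻¹` is the resolvent of `Σ`. -/
theorem contour_integral_remainder_bound {p : ℕ}
    (S E : Matrix (Fin p) (Fin p) ℝ) (hS : S.IsSymm) (hE : E.IsSymm)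
    (μ : Fin p → ℝ) (v : Fin p → Fin p → ℝ)
    (hv : ∀ i j, v i ⬝ᵥ v j = if i = j then (1 : ℝ) else 0)
    (heig : ∀ j, S.mulVec (v j) = μ j • v j)
    (lamr : ℝ) (hlamr : ∃ j, μ j = lamr)
    (g : ℝ) (hg : 0 < g) (hgap : ∀ j, μ j ≠ lamr → g ≤ |μ j - lamr|)
    (hEsmall : ‖E‖ ≤ g / 3)
    (RS : ℂ → Matrix (Fin p) (Fin p) ℂ)
    (hRS : ∀ η : ℂ, RS η = (S.map (Complex.ofReal) - η • (1 : Matrix (Fin p) (Fin p) ℂ))⁻¹) :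
    ‖(2 * Real.pi * Complex.I)⁻¹ •
        (∮ η in C((lamr : ℂ), g / 2),
          ∑' k : ℕ, (-1 : ℂ) ^ (k + 3) •
            ((RS η * E.map (Complex.ofReal)) ^ (k + 3) * RS η))‖
      ≤ 24 * (‖E‖ / g) ^ 3 := by
  set Ec : Matrix (Fin p) (Fin p) ℂ := E.map Complex.ofReal with hEcdef
  have hEc : ‖Ec‖ ≤ ‖E‖ := map_ofReal_norm_le E
  set r : ℝ := 2 * ‖E‖ / g with hrdef
  have hr0 : (0 : ℝ) ≤ r := by positivity
  have hr23 : r ≤ 2 / 3 := by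
    rw [hrdef, div_le_div_iff₀ hg (by norm_num)]
    nlinarith [norm_nonneg E]
  have hr1 : r < 1 := lt_of_le_of_lt hr23 (by norm_num)
  have key : ∀ η ∈ Metric.sphere (lamr : ℂ) (g / 2),
      ‖∑' k : ℕ, (-1 : ℂ) ^ (k + 3) • ((RS η * Ec) ^ (k + 3) * RS η)‖
        ≤ 3 * (2 / g) * r ^ 3 := by
    intro η hη
    have hR : ‖RS η‖ ≤ 2 / g := by
      rw [hRS]
      exact resolvent_norm_le S μ v hv heig lamr g hg hgap η hη
    have hM : ‖RS η * Ec‖ ≤ r := by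
      calc ‖RS η * Ec‖ ≤ ‖RS η‖ * ‖Ec‖ := Matrix.l2_opNorm_mul _ _
        _ ≤ (2 / g) * ‖E‖ := mul_le_mul hR hEc (norm_nonneg _) (by positivity)
        _ = r := by rw [hrdef]; ring
    have hterm : ∀ k : ℕ, ‖(-1 : ℂ) ^ (k + 3) • ((RS η * Ec) ^ (k + 3) * RS η)‖
        ≤ r ^ (k + 3) * (2 / g) := by
      intro k
      rw [norm_smul]
      have h1 : ‖(-1 : ℂ) ^ (k + 3)‖ = 1 := by simp
      rw [h1, one_mul]
      calc ‖(RS η * Ec) ^ (k + 3) * RS η‖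
          ≤ ‖(RS η * Ec) ^ (k + 3)‖ * ‖RS η‖ := Matrix.l2_opNorm_mul _ _
        _ ≤ ‖RS η * Ec‖ ^ (k + 3) * (2 / g) :=
            mul_le_mul (norm_pow_le' _ (by omega)) hR (norm_nonneg _)
              (by positivity)
        _ ≤ r ^ (k + 3) * (2 / g) := by
            gcongr
    have hgeo : Summable (fun k : ℕ => r ^ (k + 3) * (2 / g)) := by
      have h := (summable_geometric_of_lt_one hr0 hr1).mul_left (r ^ 3 * (2 / g))
      refine h.congr fun k => ?_
      rw [pow_add]; ring
    have hnorms : Summable (fun k : ℕ =>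
        ‖(-1 : ℂ) ^ (k + 3) • ((RS η * Ec) ^ (k + 3) * RS η)‖) :=
      Summable.of_nonneg_of_le (fun k => norm_nonneg _) hterm hgeo
    calc ‖∑' k : ℕ, (-1 : ℂ) ^ (k + 3) • ((RS η * Ec) ^ (k + 3) * RS η)‖
        ≤ ∑' k : ℕ, ‖(-1 : ℂ) ^ (k + 3) • ((RS η * Ec) ^ (k + 3) * RS η)‖ :=
          norm_tsum_le_tsum_norm hnorms
      _ ≤ ∑' k : ℕ, r ^ (k + 3) * (2 / g) := Summable.tsum_le_tsum hterm hnorms hgeo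
      _ = (r ^ 3 * (2 / g)) * (1 - r)⁻¹ := by
          rw [show (fun k : ℕ => r ^ (k + 3) * (2 / g))
              = fun k : ℕ => (r ^ 3 * (2 / g)) * r ^ k from
            funext fun k => by rw [pow_add]; ring]
          rw [tsum_mul_left, tsum_geometric_of_lt_one hr0 hr1]
      _ ≤ (r ^ 3 * (2 / g)) * 3 := by
          have h3 : (1 - r)⁻¹ ≤ 3 := by
            have h4 : (1 - r)⁻¹ ≤ ((1 : ℝ) / 3)⁻¹ := by
              apply inv_anti₀ (by norm_num) (by linarith)
            simpa using h4
          exact mul_le_mul_of_nonneg_left h3 (by positivity)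
      _ = 3 * (2 / g) * r ^ 3 := by ring
  have hint : ‖∮ η in C((lamr : ℂ), g / 2),
      ∑' k : ℕ, (-1 : ℂ) ^ (k + 3) • ((RS η * Ec) ^ (k + 3) * RS η)‖
        ≤ 2 * Real.pi * (g / 2) * (3 * (2 / g) * r ^ 3) :=
    circleIntegral.norm_integral_le_of_norm_le_const (by positivity) key
  rw [norm_smul]
  have hc : ‖((2 : ℂ) * Real.pi * Complex.I)⁻¹‖ = (2 * Real.pi)⁻¹ := by
    rw [norm_inv]
    congr 1
    simp [norm_mul, Complex.norm_I, Complex.norm_real, Real.norm_eq_abs,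
      abs_of_nonneg Real.pi_pos.le]
  rw [hc]
  calc (2 * Real.pi)⁻¹ * ‖∮ η in C((lamr : ℂ), g / 2),
        ∑' k : ℕ, (-1 : ℂ) ^ (k + 3) • ((RS η * Ec) ^ (k + 3) * RS η)‖
      ≤ (2 * Real.pi)⁻¹ * (2 * Real.pi * (g / 2) * (3 * (2 / g) * r ^ 3)) :=
        mul_le_mul_of_nonneg_left hint (by positivity)
    _ = 24 * (‖E‖ / g) ^ 3 := by
        rw [hrdef]
        field_simp
        ring
end

section
/- Gaussian expectation of the normalized linear term: let X_1, ..., X_n be i.i.d. N(0, Σ) with Σ symmetric positive definite, E = (1/n)Σ_j X_j X_j^T − Σ, and let P_r be a spectral projector of Σ with rank m_r. Then n·E[‖P_r^⊥ Σ^{−1/2} E Σ^{−1/2} P_r‖_F^2] = m_r (p − m_r), where P_r^⊥ = I − P_r. -/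
open Matrix MeasureTheory ProbabilityTheory

/-- Frobenius norm of a real matrix. -/
noncomputable def frobNorm {m n : ℕ} (A : Matrix (Fin m) (Fin n) ℝ) : ℝ :=
  Real.sqrt (∑ i, ∑ j, (A i j) ^ 2)

open Real Set
open scoped NNReal ENNReal

lemma aux_even_moment {b : ℝ} (hb : 0 < b) (m : ℕ) :
    ∫ x : ℝ, x ^ (2 * m) * Real.exp (-b * x ^ 2)
      = b ^ (-(2 * (m : ℝ) + 1) / 2) * Real.Gamma ((2 * (m : ℝ) + 1) / 2) := by
  have h1 : ∫ x : ℝ, x ^ (2 * m) * Real.exp (-b * x ^ 2)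
      = 2 * ∫ x in Ioi (0:ℝ), x ^ (2 * m) * Real.exp (-b * x ^ 2) := by
    rw [← integral_comp_abs (f := fun x => x ^ (2 * m) * Real.exp (-b * x ^ 2))]
    congr 1
    ext x
    rw [pow_mul, pow_mul, sq_abs]
  have h2 := integral_rpow_mul_exp_neg_mul_rpow (p := 2) (q := 2 * (m : ℝ)) two_pos
    (by nlinarith [Nat.cast_nonneg (α := ℝ) m]) hb
  have h3 : ∫ x in Ioi (0:ℝ), x ^ (2 * m) * Real.exp (-b * x ^ 2)
      = b ^ (-(2 * (m : ℝ) + 1) / 2) * (1 / 2) * Real.Gamma ((2 * (m : ℝ) + 1) / 2) := by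
    rw [← h2]
    refine setIntegral_congr_fun measurableSet_Ioi (fun x hx => ?_)
    rw [Real.rpow_two, show (2 * (m:ℝ)) = ((2 * m : ℕ) : ℝ) by push_cast; ring,
      Real.rpow_natCast]
  rw [h1, h3]; ring

lemma aux_pdf_integral (v : ℝ≥0) (hv : v ≠ 0) (f : ℝ → ℝ) :
    ∫ x, f x ∂(gaussianReal 0 v) = ∫ x, gaussianPDFReal 0 v x * f x := by
  rw [gaussianReal_of_var_ne_zero 0 hv]
  have hpdf : (gaussianPDF 0 v) = fun x => ((Real.toNNReal (gaussianPDFReal 0 v x) : ℝ≥0) : ℝ≥0∞) := by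
    ext x; rfl
  rw [hpdf, integral_withDensity_eq_integral_smul
    ((measurable_gaussianPDFReal 0 v).real_toNNReal) f]
  congr 1
  ext x
  rw [NNReal.smul_def, smul_eq_mul, Real.coe_toNNReal _ (gaussianPDFReal_nonneg 0 v x)]

lemma aux_pdf_eq (v : ℝ≥0) (hv : v ≠ 0) (m : ℕ) (x : ℝ) :
    gaussianPDFReal 0 v x * x ^ m
      = (Real.sqrt π * Real.sqrt (2 * v))⁻¹ * (x ^ m * Real.exp (-(2 * (v:ℝ))⁻¹ * x ^ 2)) := by
  have hvpos : (0:ℝ) < v := lt_of_le_of_ne v.coe_nonneg (by exact_mod_cast (Ne.symm hv))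
  rw [gaussianPDFReal]
  have harg : -(x - 0) ^ 2 / (2 * (v:ℝ)) = -(2 * (v:ℝ))⁻¹ * x ^ 2 := by
    field_simp
    ring
  rw [harg]
  have h2 : (2 : ℝ) * π * v = π * (2 * v) := by ring
  rw [h2, Real.sqrt_mul Real.pi_pos.le]
  ring

lemma aux_gaussian_sq (v : ℝ≥0) : ∫ x, x ^ 2 ∂(gaussianReal 0 v) = v := by
  by_cases hv : v = 0
  · simp [hv, gaussianReal_zero_var, integral_dirac]
  · have hvpos : (0:ℝ) < v := lt_of_le_of_ne v.coe_nonneg (by exact_mod_cast (Ne.symm hv))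
    have hb : (0:ℝ) < (2 * (v:ℝ))⁻¹ := by positivity
    rw [aux_pdf_integral v hv]
    simp_rw [aux_pdf_eq v hv 2]
    rw [integral_const_mul, show (2 : ℕ) = 2 * 1 by norm_num, aux_even_moment hb 1]
    have hgam : Real.Gamma ((2 * ((1:ℕ) : ℝ) + 1) / 2) = Real.sqrt π / 2 := by
      rw [show (2 * ((1:ℕ) : ℝ) + 1) / 2 = 1/2 + 1 by norm_num,
        Real.Gamma_add_one (by norm_num), Real.Gamma_one_half_eq]
      ring
    have hrpow : ((2 * (v:ℝ))⁻¹) ^ (-(2 * ((1:ℕ):ℝ) + 1) / 2)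
        = (2 * (v:ℝ)) * Real.sqrt (2 * (v:ℝ)) := by
      rw [show (-(2 * ((1:ℕ):ℝ) + 1) / 2) = -(3/2) by norm_num,
        Real.rpow_neg (by positivity), Real.inv_rpow (by positivity), inv_inv,
        show (3:ℝ)/2 = 1 + 1/2 by norm_num, Real.rpow_add (by positivity),
        Real.rpow_one, ← Real.sqrt_eq_rpow]
    rw [hrpow, hgam]
    have hs : Real.sqrt (2 * (v:ℝ)) > 0 := Real.sqrt_pos.mpr (by positivity)
    have hp : Real.sqrt π > 0 := Real.sqrt_pos.mpr Real.pi_pos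
    have hss : Real.sqrt (2 * (v:ℝ)) * Real.sqrt (2 * (v:ℝ)) = 2 * (v:ℝ) :=
      Real.mul_self_sqrt (by positivity)
    field_simp

lemma aux_gaussian_p4 (v : ℝ≥0) : ∫ x, x ^ 4 ∂(gaussianReal 0 v) = 3 * (v:ℝ) ^ 2 := by
  by_cases hv : v = 0
  · simp [hv, gaussianReal_zero_var, integral_dirac]
  · have hvpos : (0:ℝ) < v := lt_of_le_of_ne v.coe_nonneg (by exact_mod_cast (Ne.symm hv))
    have hb : (0:ℝ) < (2 * (v:ℝ))⁻¹ := by positivity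
    rw [aux_pdf_integral v hv]
    simp_rw [aux_pdf_eq v hv 4]
    rw [integral_const_mul, show (4 : ℕ) = 2 * 2 by norm_num, aux_even_moment hb 2]
    have hgam : Real.Gamma ((2 * ((2:ℕ) : ℝ) + 1) / 2) = 3 * Real.sqrt π / 4 := by
      rw [show (2 * ((2:ℕ) : ℝ) + 1) / 2 = (1/2 + 1) + 1 by norm_num,
        Real.Gamma_add_one (by norm_num), Real.Gamma_add_one (by norm_num),
        Real.Gamma_one_half_eq]
      ring
    have hrpow : ((2 * (v:ℝ))⁻¹) ^ (-(2 * ((2:ℕ):ℝ) + 1) / 2)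
        = (2 * (v:ℝ))^2 * Real.sqrt (2 * (v:ℝ)) := by
      rw [show (-(2 * ((2:ℕ):ℝ) + 1) / 2) = -(5/2) by norm_num,
        Real.rpow_neg (by positivity), Real.inv_rpow (by positivity), inv_inv,
        show (5:ℝ)/2 = 2 + 1/2 by norm_num, Real.rpow_add (by positivity),
        Real.rpow_two, ← Real.sqrt_eq_rpow]
    rw [hrpow, hgam]
    have hs : Real.sqrt (2 * (v:ℝ)) > 0 := Real.sqrt_pos.mpr (by positivity)
    have hp : Real.sqrt π > 0 := Real.sqrt_pos.mpr Real.pi_pos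
    have hss : Real.sqrt (2 * (v:ℝ)) * Real.sqrt (2 * (v:ℝ)) = 2 * (v:ℝ) :=
      Real.mul_self_sqrt (by positivity)
    field_simp
    nlinarith [hss]

lemma aux_gaussian_integrable_pow (v : ℝ≥0) (m : ℕ) :
    Integrable (fun x => x ^ m) (gaussianReal 0 v) := by
  by_cases hv : v = 0
  · refine ⟨(measurable_id.pow_const m).aestronglyMeasurable, ?_⟩
    rw [hv, gaussianReal_zero_var]
    simp [HasFiniteIntegral, lintegral_dirac]
  · have hvpos : (0:ℝ) < v := lt_of_le_of_ne v.coe_nonneg (by exact_mod_cast (Ne.symm hv))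
    have hb : (0:ℝ) < (2 * (v:ℝ))⁻¹ := by positivity
    rw [gaussianReal_of_var_ne_zero 0 hv]
    rw [integrable_withDensity_iff (measurable_gaussianPDF 0 v)
      (ae_of_all _ (fun x => ENNReal.ofReal_lt_top))]
    have : (fun x => x ^ m * (gaussianPDF 0 v x).toReal)
        = fun x => (Real.sqrt π * Real.sqrt (2 * v))⁻¹
            * (x ^ m * Real.exp (-(2 * (v:ℝ))⁻¹ * x ^ 2)) := by
      ext x
      rw [gaussianPDF, ENNReal.toReal_ofReal (gaussianPDFReal_nonneg 0 v x), mul_comm,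
        aux_pdf_eq v hv m x]
    rw [this]
    have hint : Integrable (fun x : ℝ => x ^ (m:ℝ) * Real.exp (-(2 * (v:ℝ))⁻¹ * x ^ 2)) :=
      integrable_rpow_mul_exp_neg_mul_sq hb (by nlinarith [Nat.cast_nonneg (α := ℝ) m])
    have heq : (fun x : ℝ => x ^ (m:ℝ) * Real.exp (-(2 * (v:ℝ))⁻¹ * x ^ 2))
        = fun x : ℝ => x ^ m * Real.exp (-(2 * (v:ℝ))⁻¹ * x ^ 2) :=
      funext fun x => by rw [Real.rpow_natCast]
    rw [heq] at hint
    exact hint.const_mul _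

lemma aux_rv {Ω : Type*} [MeasurableSpace Ω] {μ : Measure Ω} {Z : Ω → ℝ} {s : ℝ}
    (hs : 0 ≤ s) (hZ : Measurable Z)
    (hmap : Measure.map Z μ = gaussianReal 0 (Real.toNNReal s)) :
    (∀ m : ℕ, Integrable (fun ω => Z ω ^ m) μ) ∧
    (∫ ω, Z ω ^ 2 ∂μ = s) ∧ (∫ ω, Z ω ^ 4 ∂μ = 3 * s ^ 2) := by
  have hint : ∀ m : ℕ, Integrable (fun ω => Z ω ^ m) μ := by
    intro m
    have h1 : Integrable (fun x : ℝ => x ^ m) (Measure.map Z μ) := by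
      rw [hmap]; exact aux_gaussian_integrable_pow _ m
    exact (integrable_map_measure ((measurable_id.pow_const m).aestronglyMeasurable)
      hZ.aemeasurable).mp h1
  have hmom : ∀ m : ℕ, ∫ ω, Z ω ^ m ∂μ = ∫ x, x ^ m ∂(gaussianReal 0 (Real.toNNReal s)) := by
    intro m
    rw [← hmap]
    exact (integral_map (f := fun x => x ^ m) hZ.aemeasurable
      ((measurable_id.pow_const m).aestronglyMeasurable)).symm
  refine ⟨hint, ?_, ?_⟩
  · rw [hmom 2, aux_gaussian_sq, Real.coe_toNNReal _ hs]
  · rw [hmom 4, aux_gaussian_p4, Real.coe_toNNReal _ hs]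

lemma aux_trace_eq_rank {p : ℕ} (P : Matrix (Fin p) (Fin p) ℝ) (h : P * P = P) :
    P.trace = (P.rank : ℝ) := by
  classical
  set f := P.mulVecLin with hf
  have hff : f ∘ₗ f = f := by
    rw [hf, ← Matrix.mulVecLin_mul, h]
  have hproj : LinearMap.IsProj (LinearMap.range f) f := by
    refine ⟨fun x => LinearMap.mem_range_self f x, ?_⟩
    rintro x ⟨y, rfl⟩
    exact congrFun (congrArg DFunLike.coe hff) y
  have htr := hproj.trace
  have h1 : LinearMap.trace ℝ (Fin p → ℝ) f = Matrix.trace P := by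
    rw [LinearMap.trace_eq_matrix_trace ℝ (Pi.basisFun ℝ (Fin p)) f]
    congr 1
    rw [hf]
    ext i j
    simp [LinearMap.toMatrix_apply, Matrix.mulVecLin, Matrix.mulVec, dotProduct, Pi.single_apply]
  rw [← h1, htr]
  rfl

/-- Gaussian expectation of the normalized linear term. For `X_1, ..., X_n`
i.i.d. `N(0, Σ)` (`Σ` positive definite), `E = (1/n) ∑_j X_j X_jᵀ - Σ`, a spectral projector
`P_r` of `Σ` (for the eigenvalue `λ_r`) of rank `m_r`, and `Q = Σ^{-1/2}`:
`n E[‖P_r^⊥ Σ^{-1/2} E Σ^{-1/2} P_r‖_F²] = m_r (p - m_r)`. -/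
theorem gaussian_expectation_normalized_linear_term {p n : ℕ} (hn : 0 < n) (mr : ℕ)
    {Ω : Type*} [MeasurableSpace Ω] (μ : Measure Ω) [IsProbabilityMeasure μ]
    (Sig : Matrix (Fin p) (Fin p) ℝ) (hSig : Sig.IsSymm) (hSigpd : Sig.PosDef)
    (X : Fin n → Ω → Fin p → ℝ) (hXmeas : ∀ j, Measurable (X j))
    -- the `X_j` are independent, each centred Gaussian with covariance `Σ`
    (hindep : iIndepFun X μ)
    (hXgauss : ∀ (j : Fin n) (v : Fin p → ℝ),
      Measure.map (fun ω => v ⬝ᵥ X j ω) μ = gaussianReal 0 (Real.toNNReal (v ⬝ᵥ Sig.mulVec v)))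
    (lamr : ℝ)
    (Pr : Matrix (Fin p) (Fin p) ℝ)
    (hPsymm : Pr.IsSymm) (hPidem : Pr * Pr = Pr)
    (hspec : Sig * Pr = lamr • Pr)
    (hrank : Pr.rank = mr)
    -- `Q = Σ^{-1/2}`, the positive square root of `Σ⁻¹`
    (Q : Matrix (Fin p) (Fin p) ℝ) (hQpd : Q.PosDef) (hQ : Q * Q = Sig⁻¹)
    (E : Ω → Matrix (Fin p) (Fin p) ℝ)
    (hE : ∀ ω, E ω = (n : ℝ)⁻¹ • (∑ j, Matrix.vecMulVec (X j ω) (X j ω)) - Sig) :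
    (n : ℝ) * (∫ ω, frobNorm ((1 - Pr) * Q * E ω * Q * Pr) ^ 2 ∂μ)
      = (mr : ℝ) * ((p : ℝ) - (mr : ℝ)) := by
  classical
  have hnR : ((n:ℝ)) ≠ 0 := Nat.cast_ne_zero.mpr hn.ne'
  set M : Matrix (Fin p) (Fin p) ℝ := (1 - Pr) * Q with hMdef
  set N : Matrix (Fin p) (Fin p) ℝ := Q * Pr with hNdef
  -- symmetry facts
  have hQsymm : Qᵀ = Q := by
    have h := hQpd.isHermitian
    ext i j
    have := congrFun (congrFun h i) j
    simpa [Matrix.conjTranspose_apply] using this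
  have hPt : (1 - Pr)ᵀ = 1 - Pr := by
    rw [Matrix.transpose_sub, Matrix.transpose_one, hPsymm.eq]
  -- invertibility
  have hSdet : IsUnit Sig.det := isUnit_iff_ne_zero.mpr hSigpd.det_pos.ne'
  have hQdet : IsUnit Q.det := isUnit_iff_ne_zero.mpr hQpd.det_pos.ne'
  have hQSQ : Q * Sig * Q = 1 := by
    have e2 : Q * Q * Sig = 1 := by rw [hQ]; exact Matrix.nonsing_inv_mul Sig hSdet
    have e3 : Q⁻¹ = Q * Sig := Matrix.inv_eq_right_inv (by rw [← Matrix.mul_assoc]; exact e2)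
    calc Q * Sig * Q = Q⁻¹ * Q := by rw [e3]
      _ = 1 := Matrix.nonsing_inv_mul Q hQdet
  -- the three covariance identities
  have hMSN : M * Sig * N = 0 := by
    have key : M * Sig * N = (1 - Pr) * (Q * Sig * Q * Pr) := by
      rw [hMdef, hNdef]; simp only [Matrix.mul_assoc]
    rw [key, hQSQ, Matrix.one_mul, Matrix.sub_mul, Matrix.one_mul, hPidem, sub_self]
  have hMSM : M * Sig * Mᵀ = 1 - Pr := by
    have ht : Mᵀ = Q * (1 - Pr) := by rw [hMdef, Matrix.transpose_mul, hQsymm, hPt]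
    have key : M * Sig * Mᵀ = (1 - Pr) * (Q * Sig * Q * (1 - Pr)) := by
      rw [hMdef, ht]; simp only [Matrix.mul_assoc]
    rw [key, hQSQ, Matrix.one_mul, Matrix.sub_mul, Matrix.one_mul, Matrix.mul_sub,
      Matrix.mul_one, hPidem]
    abel
  have hNSN : Nᵀ * Sig * N = Pr := by
    have ht : Nᵀ = Pr * Q := by rw [hNdef, Matrix.transpose_mul, hQsymm, hPsymm.eq]
    have key : Nᵀ * Sig * N = Pr * (Q * Sig * Q * Pr) := by
      rw [ht, hNdef]; simp only [Matrix.mul_assoc]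
    rw [key, hQSQ, Matrix.one_mul, hPidem]
  -- entrywise dot-product identity
  have hdot : ∀ (A B : Matrix (Fin p) (Fin p) ℝ) (i k : Fin p),
      (A * Sig * B) i k = (A i) ⬝ᵥ Sig *ᵥ (Bᵀ k) := by
    intro A B i k
    simp only [Matrix.mul_apply, dotProduct, Matrix.mulVec, Matrix.transpose_apply,
      Finset.sum_mul, Finset.mul_sum]
    rw [Finset.sum_comm]
    refine Finset.sum_congr rfl fun a _ => Finset.sum_congr rfl fun l _ => by ring
  -- bilinear form
  set S : (Fin p → ℝ) → (Fin p → ℝ) → ℝ := fun u w => u ⬝ᵥ Sig *ᵥ w with hSdef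
  have hSsymm : ∀ u w, S u w = S w u := by
    intro u w
    simp only [hSdef]
    rw [Matrix.dotProduct_mulVec u Sig w]
    conv_lhs => rw [← hSig.eq, Matrix.vecMul_transpose]
    rw [dotProduct_comm]
  have hSadd : ∀ u w, S (u + w) (u + w) = S u u + 2 * S u w + S w w := by
    intro u w
    have hs := hSsymm u w
    simp only [hSdef] at hs ⊢
    simp only [Matrix.mulVec_add, dotProduct_add, add_dotProduct]
    linarith
  have hSsub : ∀ u w, S (u - w) (u - w) = S u u - 2 * S u w + S w w := by
    intro u w
    have hs := hSsymm u w
    simp only [hSdef] at hs ⊢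
    simp only [Matrix.mulVec_sub, dotProduct_sub, sub_dotProduct]
    linarith
  have hSnn : ∀ u, 0 ≤ S u u := by
    intro u
    have h := hSigpd.posSemidef.dotProduct_mulVec_nonneg u
    simpa [hSdef] using h
  -- measurability of linear functionals
  have hZmeas : ∀ (w : Fin p → ℝ) (j : Fin n), Measurable (fun ω => w ⬝ᵥ X j ω) := by
    intro w j
    have he : (fun ω => w ⬝ᵥ X j ω) = fun ω => ∑ l, w l * X j ω l := rfl
    rw [he]
    exact Finset.measurable_sum _ fun l _ =>
      measurable_const.mul ((measurable_pi_apply l).comp (hXmeas j))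
  have hfacts : ∀ (w : Fin p → ℝ) (j : Fin n),
      (∀ m : ℕ, Integrable (fun ω => (w ⬝ᵥ X j ω) ^ m) μ) ∧
      (∫ ω, (w ⬝ᵥ X j ω) ^ 2 ∂μ = S w w) ∧ (∫ ω, (w ⬝ᵥ X j ω) ^ 4 ∂μ = 3 * S w w ^ 2) :=
    fun w j => aux_rv (hSnn w) (hZmeas w j) (hXgauss j w)
  -- the two families of vectors
  set c : Fin p → Fin p → ℝ := fun i => M i with hcdef
  set d : Fin p → Fin p → ℝ := fun k => Nᵀ k with hddef
  have hS_cd : ∀ i k, S (c i) (d k) = 0 := by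
    intro i k
    have h := hdot M N i k
    rw [hMSN] at h
    simp only [Matrix.zero_apply] at h
    simp only [hSdef, hcdef, hddef]
    exact h.symm
  have hS_cc : ∀ i, S (c i) (c i) = (1 - Pr) i i := by
    intro i
    have h := hdot M Mᵀ i i
    rw [hMSM, Matrix.transpose_transpose] at h
    simp only [hSdef, hcdef]
    exact h.symm
  have hS_dd : ∀ k, S (d k) (d k) = Pr k k := by
    intro k
    have h := hdot Nᵀ N k k
    rw [hNSN] at h
    simp only [hSdef, hddef]
    exact h.symm
  -- the basic random variables
  set ξ : Fin p → Fin p → Fin n → Ω → ℝ :=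
    fun i k j ω => (c i ⬝ᵥ X j ω) * (d k ⬝ᵥ X j ω) with hxidef
  have pid1 : ∀ i k j ω, ξ i k j ω
      = (((c i + d k) ⬝ᵥ X j ω) ^ 2 - (c i ⬝ᵥ X j ω) ^ 2 - (d k ⬝ᵥ X j ω) ^ 2) / 2 := by
    intro i k j ω
    simp only [hxidef, add_dotProduct]
    ring
  have pid2 : ∀ i k j ω, ξ i k j ω * ξ i k j ω
      = (((c i + d k) ⬝ᵥ X j ω) ^ 4 + ((c i - d k) ⬝ᵥ X j ω) ^ 4
        - 2 * (c i ⬝ᵥ X j ω) ^ 4 - 2 * (d k ⬝ᵥ X j ω) ^ 4) / 12 := by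
    intro i k j ω
    simp only [hxidef, add_dotProduct, sub_dotProduct]
    ring
  have hint2 : ∀ (w : Fin p → ℝ) (j : Fin n), Integrable (fun ω => (w ⬝ᵥ X j ω) ^ 2) μ :=
    fun w j => (hfacts w j).1 2
  have hint4 : ∀ (w : Fin p → ℝ) (j : Fin n), Integrable (fun ω => (w ⬝ᵥ X j ω) ^ 4) μ :=
    fun w j => (hfacts w j).1 4
  have hint_ξ : ∀ i k j, Integrable (ξ i k j) μ := by
    intro i k j
    have heq : ξ i k j = fun ω =>
        (((c i + d k) ⬝ᵥ X j ω) ^ 2 - (c i ⬝ᵥ X j ω) ^ 2 - (d k ⬝ᵥ X j ω) ^ 2) / 2 :=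
      funext fun ω => pid1 i k j ω
    rw [heq]
    exact (((hint2 (c i + d k) j).sub (hint2 (c i) j)).sub (hint2 (d k) j)).div_const 2
  have hint_ξξ : ∀ i k j, Integrable (fun ω => ξ i k j ω * ξ i k j ω) μ := by
    intro i k j
    have heq : (fun ω => ξ i k j ω * ξ i k j ω) = fun ω =>
        (((c i + d k) ⬝ᵥ X j ω) ^ 4 + ((c i - d k) ⬝ᵥ X j ω) ^ 4
          - 2 * (c i ⬝ᵥ X j ω) ^ 4 - 2 * (d k ⬝ᵥ X j ω) ^ 4) / 12 :=
      funext fun ω => pid2 i k j ω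
    rw [heq]
    exact ((((hint4 (c i + d k) j).add (hint4 (c i - d k) j)).sub
      ((hint4 (c i) j).const_mul 2)).sub ((hint4 (d k) j).const_mul 2)).div_const 12
  have hEξ : ∀ i k j, ∫ ω, ξ i k j ω ∂μ = 0 := by
    intro i k j
    have heq : ξ i k j = fun ω =>
        (((c i + d k) ⬝ᵥ X j ω) ^ 2 - (c i ⬝ᵥ X j ω) ^ 2 - (d k ⬝ᵥ X j ω) ^ 2) / 2 :=
      funext fun ω => pid1 i k j ω
    have hAB : Integrable (fun ω => ((c i + d k) ⬝ᵥ X j ω) ^ 2 - (c i ⬝ᵥ X j ω) ^ 2) μ :=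
      (hint2 (c i + d k) j).sub (hint2 (c i) j)
    calc ∫ ω, ξ i k j ω ∂μ
        = ∫ ω, (((c i + d k) ⬝ᵥ X j ω) ^ 2 - (c i ⬝ᵥ X j ω) ^ 2
            - (d k ⬝ᵥ X j ω) ^ 2) / 2 ∂μ := by rw [← heq]
      _ = ((∫ ω, ((c i + d k) ⬝ᵥ X j ω) ^ 2 ∂μ) - (∫ ω, (c i ⬝ᵥ X j ω) ^ 2 ∂μ)
            - ∫ ω, (d k ⬝ᵥ X j ω) ^ 2 ∂μ) / 2 := by
          rw [integral_div, integral_sub hAB (hint2 (d k) j),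
            integral_sub (hint2 (c i + d k) j) (hint2 (c i) j)]
      _ = 0 := by
          rw [(hfacts (c i + d k) j).2.1, (hfacts (c i) j).2.1, (hfacts (d k) j).2.1,
            hSadd (c i) (d k), hS_cd i k]
          ring
  have hEξξ : ∀ i k j, ∫ ω, ξ i k j ω * ξ i k j ω ∂μ = (1 - Pr) i i * Pr k k := by
    intro i k j
    have heq : (fun ω => ξ i k j ω * ξ i k j ω) = fun ω =>
        (((c i + d k) ⬝ᵥ X j ω) ^ 4 + ((c i - d k) ⬝ᵥ X j ω) ^ 4
          - 2 * (c i ⬝ᵥ X j ω) ^ 4 - 2 * (d k ⬝ᵥ X j ω) ^ 4) / 12 :=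
      funext fun ω => pid2 i k j ω
    have h1 : Integrable (fun ω => ((c i + d k) ⬝ᵥ X j ω) ^ 4 + ((c i - d k) ⬝ᵥ X j ω) ^ 4) μ :=
      (hint4 (c i + d k) j).add (hint4 (c i - d k) j)
    have hc2 : Integrable (fun ω => 2 * (c i ⬝ᵥ X j ω) ^ 4) μ := (hint4 (c i) j).const_mul 2
    have hd2 : Integrable (fun ω => 2 * (d k ⬝ᵥ X j ω) ^ 4) μ := (hint4 (d k) j).const_mul 2
    have h12 : Integrable (fun ω => ((c i + d k) ⬝ᵥ X j ω) ^ 4 + ((c i - d k) ⬝ᵥ X j ω) ^ 4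
        - 2 * (c i ⬝ᵥ X j ω) ^ 4) μ := h1.sub hc2
    calc ∫ ω, ξ i k j ω * ξ i k j ω ∂μ
        = ∫ ω, (((c i + d k) ⬝ᵥ X j ω) ^ 4 + ((c i - d k) ⬝ᵥ X j ω) ^ 4
            - 2 * (c i ⬝ᵥ X j ω) ^ 4 - 2 * (d k ⬝ᵥ X j ω) ^ 4) / 12 ∂μ := by
          rw [show (fun ω => ξ i k j ω * ξ i k j ω) = _ from heq]
      _ = ((∫ ω, ((c i + d k) ⬝ᵥ X j ω) ^ 4 ∂μ) + (∫ ω, ((c i - d k) ⬝ᵥ X j ω) ^ 4 ∂μ)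
            - 2 * (∫ ω, (c i ⬝ᵥ X j ω) ^ 4 ∂μ) - 2 * ∫ ω, (d k ⬝ᵥ X j ω) ^ 4 ∂μ) / 12 := by
          rw [integral_div, integral_sub h12 hd2, integral_sub h1 hc2,
            integral_add (hint4 (c i + d k) j) (hint4 (c i - d k) j),
            integral_const_mul, integral_const_mul]
      _ = (1 - Pr) i i * Pr k k := by
          rw [(hfacts (c i + d k) j).2.2, (hfacts (c i - d k) j).2.2,
            (hfacts (c i) j).2.2, (hfacts (d k) j).2.2,
            hSadd (c i) (d k), hSsub (c i) (d k), hS_cd i k, hS_cc i, hS_dd k]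
          ring
  -- independence across samples
  have hgmeas : ∀ (w : Fin p → ℝ), Measurable (fun x : Fin p → ℝ => w ⬝ᵥ x) := by
    intro w
    have he : (fun x : Fin p → ℝ => w ⬝ᵥ x) = fun x => ∑ l, w l * x l := rfl
    rw [he]
    exact Finset.measurable_sum _ fun l _ => measurable_const.mul (measurable_pi_apply l)
  have hindepξ : ∀ i k (j j' : Fin n), j ≠ j' → IndepFun (ξ i k j) (ξ i k j') μ := by
    intro i k j j' hne
    exact (hindep.indepFun hne).comp ((hgmeas (c i)).mul (hgmeas (d k)))
      ((hgmeas (c i)).mul (hgmeas (d k)))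
  have hcross0 : ∀ i k j j', j ≠ j' → ∫ ω, ξ i k j ω * ξ i k j' ω ∂μ = 0 := by
    intro i k j j' hne
    have h := (hindepξ i k j j' hne).integral_mul_eq_mul_integral (hint_ξ i k j).1 (hint_ξ i k j').1
    simpa [Pi.mul_apply, hEξ i k j, hEξ i k j'] using h
  have hcross_int : ∀ i k j j', Integrable (fun ω => ξ i k j ω * ξ i k j' ω) μ := by
    intro i k j j'
    by_cases hjj : j = j'
    · subst hjj; exact hint_ξξ i k j
    · have h := (hindepξ i k j j' hjj).integrable_mul (hint_ξ i k j) (hint_ξ i k j')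
      exact h
  -- entry formula
  have hmat : ∀ ω, (1 - Pr) * Q * E ω * Q * Pr
      = (n:ℝ)⁻¹ • ∑ j, M * Matrix.vecMulVec (X j ω) (X j ω) * N := by
    intro ω
    have h0 : (1 - Pr) * Q * E ω * Q * Pr = M * E ω * N := by
      rw [hMdef, hNdef]; simp only [Matrix.mul_assoc]
    rw [h0, hE ω, Matrix.mul_sub, Matrix.sub_mul, Matrix.mul_smul, Matrix.smul_mul,
      Matrix.mul_sum, Matrix.sum_mul, hMSN, sub_zero]
  have hentry : ∀ (x : Fin p → ℝ) (i k : Fin p),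
      (M * Matrix.vecMulVec x x * N) i k = (c i ⬝ᵥ x) * (d k ⬝ᵥ x) := by
    intro x i k
    simp only [hcdef, hddef, Matrix.mul_apply, Matrix.vecMulVec_apply, dotProduct,
      Matrix.transpose_apply, Finset.sum_mul, Finset.mul_sum]
    exact Finset.sum_congr rfl fun a _ => Finset.sum_congr rfl fun b _ => by ring
  have hA : ∀ ω (i k : Fin p), ((1 - Pr) * Q * E ω * Q * Pr) i k
      = (n:ℝ)⁻¹ * ∑ j, ξ i k j ω := by
    intro ω i k
    rw [hmat ω]
    simp only [Matrix.smul_apply, Matrix.sum_apply, smul_eq_mul]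
    congr 1
    exact Finset.sum_congr rfl fun j _ => hentry (X j ω) i k
  have hF : ∀ ω, frobNorm ((1 - Pr) * Q * E ω * Q * Pr) ^ 2
      = ∑ i, ∑ k, ((n:ℝ)⁻¹ * ∑ j, ξ i k j ω) ^ 2 := by
    intro ω
    rw [frobNorm, Real.sq_sqrt (by positivity)]
    exact Finset.sum_congr rfl fun i _ => Finset.sum_congr rfl fun k _ => by rw [hA ω i k]
  have hsq : ∀ ω (i k : Fin p), ((n:ℝ)⁻¹ * ∑ j, ξ i k j ω) ^ 2
      = ∑ j, ∑ j', (n:ℝ)⁻¹ ^ 2 * (ξ i k j ω * ξ i k j' ω) := by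
    intro ω i k
    rw [mul_pow, sq (∑ j, ξ i k j ω), Finset.sum_mul_sum, Finset.mul_sum]
    exact Finset.sum_congr rfl fun j _ => by rw [Finset.mul_sum]
  have hint_term : ∀ i k, Integrable (fun ω => ((n:ℝ)⁻¹ * ∑ j, ξ i k j ω) ^ 2) μ := by
    intro i k
    have heq : (fun ω => ((n:ℝ)⁻¹ * ∑ j, ξ i k j ω) ^ 2)
        = fun ω => ∑ j, ∑ j', (n:ℝ)⁻¹ ^ 2 * (ξ i k j ω * ξ i k j' ω) :=
      funext fun ω => hsq ω i k
    rw [heq]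
    exact integrable_finset_sum _ fun j _ => integrable_finset_sum _ fun j' _ =>
      (hcross_int i k j j').const_mul _
  have hval : ∀ i k, ∫ ω, ((n:ℝ)⁻¹ * ∑ j, ξ i k j ω) ^ 2 ∂μ
      = (n:ℝ)⁻¹ * ((1 - Pr) i i * Pr k k) := by
    intro i k
    have heq : (fun ω => ((n:ℝ)⁻¹ * ∑ j, ξ i k j ω) ^ 2)
        = fun ω => ∑ j, ∑ j', (n:ℝ)⁻¹ ^ 2 * (ξ i k j ω * ξ i k j' ω) :=
      funext fun ω => hsq ω i k
    rw [show (∫ ω, ((n:ℝ)⁻¹ * ∑ j, ξ i k j ω) ^ 2 ∂μ)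
        = ∫ ω, ∑ j, ∑ j', (n:ℝ)⁻¹ ^ 2 * (ξ i k j ω * ξ i k j' ω) ∂μ by rw [← heq]]
    rw [integral_finset_sum _ fun j _ => integrable_finset_sum _ fun j' _ =>
      (hcross_int i k j j').const_mul _]
    have hinner : ∀ j : Fin n, ∫ ω, ∑ j', (n:ℝ)⁻¹ ^ 2 * (ξ i k j ω * ξ i k j' ω) ∂μ
        = (n:ℝ)⁻¹ ^ 2 * ((1 - Pr) i i * Pr k k) := by
      intro j
      rw [integral_finset_sum _ fun j' _ => (hcross_int i k j j').const_mul _]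
      rw [Finset.sum_eq_single j]
      · rw [integral_const_mul, hEξξ i k j]
      · intro j' _ hne
        rw [integral_const_mul, hcross0 i k j j' (Ne.symm hne), mul_zero]
      · intro h
        exact absurd (Finset.mem_univ j) h
    rw [Finset.sum_congr rfl fun j _ => hinner j, Finset.sum_const, Finset.card_univ,
      Fintype.card_fin, nsmul_eq_mul]
    field_simp
  have htotal : ∫ ω, frobNorm ((1 - Pr) * Q * E ω * Q * Pr) ^ 2 ∂μ
      = ∑ i, ∑ k, (n:ℝ)⁻¹ * ((1 - Pr) i i * Pr k k) := by
    rw [integral_congr_ae (Filter.Eventually.of_forall hF)]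
    rw [integral_finset_sum _ fun i _ => integrable_finset_sum _ fun k _ => hint_term i k]
    refine Finset.sum_congr rfl fun i _ => ?_
    rw [integral_finset_sum _ fun k _ => hint_term i k]
    exact Finset.sum_congr rfl fun k _ => hval i k
  have htr : Pr.trace = (mr : ℝ) := by rw [aux_trace_eq_rank Pr hPidem, hrank]
  have hsum1 : ∑ k, Pr k k = (mr : ℝ) := htr
  have hsum0 : ∑ i, (1 - Pr) i i = (p : ℝ) - mr := by
    have he : ∀ i : Fin p, (1 - Pr) i i = 1 - Pr i i := by
      intro i
      simp [Matrix.sub_apply, Matrix.one_apply_eq]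
    rw [Finset.sum_congr rfl fun i _ => he i, Finset.sum_sub_distrib, Finset.sum_const,
      Finset.card_univ, Fintype.card_fin, nsmul_eq_mul, mul_one, hsum1]
  rw [htotal]
  have hfactor : ∑ i, ∑ k, (n:ℝ)⁻¹ * ((1 - Pr) i i * Pr k k)
      = (n:ℝ)⁻¹ * ((∑ i, (1 - Pr) i i) * ∑ k, Pr k k) := by
    rw [Finset.sum_mul_sum, Finset.mul_sum]
    exact Finset.sum_congr rfl fun i _ => by rw [Finset.mul_sum]
  rw [hfactor, hsum0, hsum1]
  field_simp
end
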